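/- arXiv:1604.03794 — 9 statements merged into one kernel-verified Lean document; each statement's English description precedes it below -/
import Mathlib

section
/- For any real numbers l₁, l₂, l₃ with l₁ > 0, l₂ > 0, l₃ > 0, there exist noncollinear points A, B, C in EuclideanSpace ℝ (Fin 2) such that the bisector lengths satisfy t_A = l₂, t_B = l₁ and t_C = l₃. (Existence of a triangle with three prescribed angle-bisector lengths.) -/
open EuclideanGeometry Real

/-- The length of the internal angle bisector from vertex `A` in triangle `A B C`:
the distance from `A` to the point on `BC` dividing it in ratio `AB : AC`. -/
noncomputable def bisectorLength (A B C : EuclideanSpace ℝ (Fin 2)) : ℝ :=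
  dist A (((dist C A) / (dist C A + dist A B)) • B + ((dist A B) / (dist C A + dist A B)) • C)

def Nf (x y z : ℝ) : ℝ := 4*x*(x+y)*(x+z)*(x+y+z)
def Df (x y z : ℝ) : ℝ := (2*x+y+z)^2

noncomputable def psi (l y z : ℝ) : ℝ :=
  (Real.sqrt ((4*l^2+(y+z)^2+(y-z)^2
      + Real.sqrt ((4*l^2+(y+z)^2+(y-z)^2)^2 - 4*(y+z)^2*(y-z)^2))/2) - (y+z))/2

lemma psi_spec {l y z : ℝ} (hl : 0 < l) (hy : 0 < y) (hz : 0 < z) :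
    0 < psi l y z ∧ Nf (psi l y z) y z = l^2 * Df (psi l y z) y z := by
  have hσ0 : 0 < y + z := by positivity
  have hD : 0 ≤ (4*l^2+(y+z)^2+(y-z)^2)^2 - 4*(y+z)^2*(y-z)^2 := by
    have h : (4*l^2+(y+z)^2+(y-z)^2)^2 - 4*(y+z)^2*(y-z)^2
        = ((y+z)^2 - (y-z)^2 - 4*l^2)^2 + 16*l^2*(y+z)^2 := by ring
    rw [h]; positivity
  set s1 := Real.sqrt ((4*l^2+(y+z)^2+(y-z)^2)^2 - 4*(y+z)^2*(y-z)^2) with hs1def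
  have hs1nn : 0 ≤ s1 := Real.sqrt_nonneg _
  have hs1sq : s1^2 = (4*l^2+(y+z)^2+(y-z)^2)^2 - 4*(y+z)^2*(y-z)^2 := Real.sq_sqrt hD
  have hs1gt : (y+z)^2 - (y-z)^2 - 4*l^2 < s1 := by
    have h1 : ((y+z)^2 - (y-z)^2 - 4*l^2)^2
        < (4*l^2+(y+z)^2+(y-z)^2)^2 - 4*(y+z)^2*(y-z)^2 := by
      nlinarith [mul_pos (mul_pos hl hl) (mul_pos hσ0 hσ0)]
    calc (y+z)^2 - (y-z)^2 - 4*l^2 ≤ |(y+z)^2 - (y-z)^2 - 4*l^2| := le_abs_self _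
    _ = Real.sqrt (((y+z)^2 - (y-z)^2 - 4*l^2)^2) := (Real.sqrt_sq_eq_abs _).symm
    _ < s1 := Real.sqrt_lt_sqrt (sq_nonneg _) h1
  have harg : 0 ≤ (4*l^2+(y+z)^2+(y-z)^2 + s1)/2 := by positivity
  set u := Real.sqrt ((4*l^2+(y+z)^2+(y-z)^2 + s1)/2) with hudef
  have hu2 : u^2 = (4*l^2+(y+z)^2+(y-z)^2 + s1)/2 := Real.sq_sqrt harg
  have hu4 : u^4 = ((4*l^2+(y+z)^2+(y-z)^2 + s1)/2)^2 := by
    have h : u^4 = (u^2)^2 := by ring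
    rw [h, hu2]
  have huσ : y + z < u := by
    rw [hudef, Real.lt_sqrt hσ0.le]; nlinarith
  have hx : psi l y z = (u - (y+z))/2 := rfl
  refine ⟨by rw [hx]; linarith, ?_⟩
  rw [hx]
  show 4*((u-(y+z))/2)*((u-(y+z))/2+y)*((u-(y+z))/2+z)*((u-(y+z))/2+y+z)
      = l^2*(2*((u-(y+z))/2)+y+z)^2
  linear_combination (1/4)*hu4 - ((4*l^2+(y+z)^2+(y-z)^2)/4)*hu2 + (1/16)*hs1sq

lemma Df_pos {x y z : ℝ} (hx : 0 < x) (hy : 0 < y) (hz : 0 < z) : 0 < Df x y z := by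
  unfold Df; positivity

lemma Nf_pos {x y z : ℝ} (hx : 0 < x) (hy : 0 < y) (hz : 0 < z) : 0 < Nf x y z := by
  unfold Nf; positivity

/-- core inequality 1 : `H/x` is (strictly) increasing in `x` -/
lemma base1_le {x e y z : ℝ} (hx : 0 < x) (he : 0 ≤ e) (hy : 0 < y) (hz : 0 < z) :
    (x+y)*(x+z)*(x+y+z)*(2*(x+e)+y+z)^2 ≤ (x+e+y)*(x+e+z)*(x+e+y+z)*(2*x+y+z)^2 := by
  have key : (x+e+y)*(x+e+z)*(x+e+y+z)*(2*x+y+z)^2 - (x+y)*(x+z)*(x+y+z)*(2*(x+e)+y+z)^2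
      = e*z^4 + e*y*z^3 + e*y^3*z + e*y^4 + 2*e^2*z^3 + 2*e^2*y*z^2 + 2*e^2*y^2*z + 2*e^2*y^3 + e^3*z^2 + 2*e^3*y*z + e^3*y^2 + 4*x*e*z^3 + 4*x*e*y*z^2 + 4*x*e*y^2*z + 4*x*e*y^3 + 7*x*e^2*z^2 + 10*x*e^2*y*z + 7*x*e^2*y^2 + 4*x*e^3*z + 4*x*e^3*y + 7*x^2*e*z^2 + 10*x^2*e*y*z + 7*x^2*e*y^2 + 12*x^2*e^2*z + 12*x^2*e^2*y + 4*x^2*e^3 + 8*x^3*e*z + 8*x^3*e*y + 8*x^3*e^2 + 4*x^4*e := by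
    ring
  have pos : (0:ℝ) ≤ e*z^4 + e*y*z^3 + e*y^3*z + e*y^4 + 2*e^2*z^3 + 2*e^2*y*z^2 + 2*e^2*y^2*z + 2*e^2*y^3 + e^3*z^2 + 2*e^3*y*z + e^3*y^2 + 4*x*e*z^3 + 4*x*e*y*z^2 + 4*x*e*y^2*z + 4*x*e*y^3 + 7*x*e^2*z^2 + 10*x*e^2*y*z + 7*x*e^2*y^2 + 4*x*e^3*z + 4*x*e^3*y + 7*x^2*e*z^2 + 10*x^2*e*y*z + 7*x^2*e*y^2 + 12*x^2*e^2*z + 12*x^2*e^2*y + 4*x^2*e^3 + 8*x^3*e*z + 8*x^3*e*y + 8*x^3*e^2 + 4*x^4*e := by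
    positivity
  linarith

lemma base1_lt {x e y z : ℝ} (hx : 0 < x) (he : 0 < e) (hy : 0 < y) (hz : 0 < z) :
    (x+y)*(x+z)*(x+y+z)*(2*(x+e)+y+z)^2 < (x+e+y)*(x+e+z)*(x+e+y+z)*(2*x+y+z)^2 := by
  have key : (x+e+y)*(x+e+z)*(x+e+y+z)*(2*x+y+z)^2 - (x+y)*(x+z)*(x+y+z)*(2*(x+e)+y+z)^2
      = e*z^4 + e*y*z^3 + e*y^3*z + e*y^4 + 2*e^2*z^3 + 2*e^2*y*z^2 + 2*e^2*y^2*z + 2*e^2*y^3 + e^3*z^2 + 2*e^3*y*z + e^3*y^2 + 4*x*e*z^3 + 4*x*e*y*z^2 + 4*x*e*y^2*z + 4*x*e*y^3 + 7*x*e^2*z^2 + 10*x*e^2*y*z + 7*x*e^2*y^2 + 4*x*e^3*z + 4*x*e^3*y + 7*x^2*e*z^2 + 10*x^2*e*y*z + 7*x^2*e*y^2 + 12*x^2*e^2*z + 12*x^2*e^2*y + 4*x^2*e^3 + 8*x^3*e*z + 8*x^3*e*y + 8*x^3*e^2 + 4*x^4*e := by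
    ring
  have pos : (0:ℝ) < e*z^4 + e*y*z^3 + e*y^3*z + e*y^4 + 2*e^2*z^3 + 2*e^2*y*z^2 + 2*e^2*y^2*z + 2*e^2*y^3 + e^3*z^2 + 2*e^3*y*z + e^3*y^2 + 4*x*e*z^3 + 4*x*e*y*z^2 + 4*x*e*y^2*z + 4*x*e*y^3 + 7*x*e^2*z^2 + 10*x*e^2*y*z + 7*x*e^2*y^2 + 4*x*e^3*z + 4*x*e^3*y + 7*x^2*e*z^2 + 10*x^2*e*y*z + 7*x^2*e*y^2 + 12*x^2*e^2*z + 12*x^2*e^2*y + 4*x^2*e^3 + 8*x^3*e*z + 8*x^3*e*y + 8*x^3*e^2 + 4*x^4*e := by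
    positivity
  linarith

/-- core inequality 2 : `H` is increasing in `y` -/
lemma base2_le {x y e z : ℝ} (hx : 0 < x) (hy : 0 < y) (he : 0 ≤ e) (hz : 0 < z) :
    (x+y)*(x+y+z)*(2*x+(y+e)+z)^2 ≤ (x+(y+e))*(x+(y+e)+z)*(2*x+y+z)^2 := by
  have key : (x+(y+e))*(x+(y+e)+z)*(2*x+y+z)^2 - (x+y)*(x+y+z)*(2*x+(y+e)+z)^2
      = e*z^3 + e^2*z^2 + 2*y*e*z^2 + y*e^2*z + y^2*e*z + 4*x*e*z^2 + 3*x*e^2*z + 6*x*y*e*z + 2*x*y*e^2 + 2*x*y^2*e + 6*x^2*e*z + 3*x^2*e^2 + 6*x^2*y*e + 4*x^3*e := by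
    ring
  have pos : (0:ℝ) ≤ e*z^3 + e^2*z^2 + 2*y*e*z^2 + y*e^2*z + y^2*e*z + 4*x*e*z^2 + 3*x*e^2*z + 6*x*y*e*z + 2*x*y*e^2 + 2*x*y^2*e + 6*x^2*e*z + 3*x^2*e^2 + 6*x^2*y*e + 4*x^3*e := by
    positivity
  linarith

/-- core inequality 3 : `H l y z > l^2`, i.e. `psi l y z < l` -/
lemma base3_lt {l y z : ℝ} (hl : 0 < l) (hy : 0 < y) (hz : 0 < z) :
    l^2 * Df l y z < Nf l y z := by
  have key : Nf l y z - l^2 * Df l y z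
      = l*(4*y*z^2 + 4*y^2*z + 3*l*z^2 + 10*l*y*z + 3*l*y^2 + 4*l^2*z + 4*l^2*y) := by
    unfold Nf Df; ring
  nlinarith [mul_pos hl (mul_pos hy hz), mul_pos (mul_pos hl hl) hy, mul_pos (mul_pos hl hl) hz, mul_pos (mul_pos hl hy) hy, mul_pos (mul_pos hl hz) hz]

/-- `H` is strictly increasing in `x` (cross-multiplied form). -/
lemma Nmono_x_lt {x1 x2 y z : ℝ} (hx1 : 0 < x1) (h12 : x1 < x2) (hy : 0 < y) (hz : 0 < z) :
    Nf x1 y z * Df x2 y z < Nf x2 y z * Df x1 y z := by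
  have hx2 : 0 < x2 := hx1.trans h12
  have hb := base1_lt hx1 (sub_pos.2 h12) hy hz
  rw [show x1 + (x2 - x1) = x2 by ring] at hb
  have h2 : (x2+y)*(x2+z)*(x2+y+z)*(2*x1+y+z)^2 > 0 := by positivity
  unfold Nf Df
  calc 4*x1*(x1+y)*(x1+z)*(x1+y+z) * (2*x2+y+z)^2
      = (4*x1)*((x1+y)*(x1+z)*(x1+y+z)*(2*x2+y+z)^2) := by ring
    _ < (4*x1)*((x2+y)*(x2+z)*(x2+y+z)*(2*x1+y+z)^2) :=
        mul_lt_mul_of_pos_left hb (by positivity)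
    _ ≤ (4*x2)*((x2+y)*(x2+z)*(x2+y+z)*(2*x1+y+z)^2) :=
        mul_le_mul_of_nonneg_right (by linarith) (by positivity)
    _ = 4*x2*(x2+y)*(x2+z)*(x2+y+z) * (2*x1+y+z)^2 := by ring

lemma Nmono_x_le {x1 x2 y z : ℝ} (hx1 : 0 < x1) (h12 : x1 ≤ x2) (hy : 0 < y) (hz : 0 < z) :
    Nf x1 y z * Df x2 y z ≤ Nf x2 y z * Df x1 y z := by
  rcases eq_or_lt_of_le h12 with rfl | h
  · exact le_of_eq (by ring)
  · exact (Nmono_x_lt hx1 h hy hz).le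

/-- `H/x` is strictly increasing in `x` (cross-multiplied form). -/
lemma Ndivx_lt {x1 x2 y z : ℝ} (hx1 : 0 < x1) (h12 : x1 < x2) (hy : 0 < y) (hz : 0 < z) :
    (x1+y)*(x1+z)*(x1+y+z) * Df x2 y z < (x2+y)*(x2+z)*(x2+y+z) * Df x1 y z := by
  have hb := base1_lt hx1 (sub_pos.2 h12) hy hz
  rw [show x1 + (x2 - x1) = x2 by ring] at hb
  unfold Df
  exact hb

/-- `H` is nondecreasing in `y` (cross-multiplied form). -/
lemma Nmono_y_le {x y1 y2 z : ℝ} (hx : 0 < x) (hy1 : 0 < y1) (h12 : y1 ≤ y2) (hz : 0 < z) :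
    Nf x y1 z * Df x y2 z ≤ Nf x y2 z * Df x y1 z := by
  have hb := base2_le hx hy1 (sub_nonneg.2 h12) hz
  rw [show y1 + (y2 - y1) = y2 by ring] at hb
  have h4 : (0:ℝ) ≤ 4*x*(x+z) := by positivity
  unfold Nf Df
  calc 4*x*(x+y1)*(x+z)*(x+y1+z) * (2*x+y2+z)^2
      = (4*x*(x+z)) * ((x+y1)*(x+y1+z)*(2*x+y2+z)^2) := by ring
    _ ≤ (4*x*(x+z)) * ((x+y2)*(x+y2+z)*(2*x+y1+z)^2) := by
        apply mul_le_mul_of_nonneg_left _ h4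
        exact hb
    _ = 4*x*(x+y2)*(x+z)*(x+y2+z) * (2*x+y1+z)^2 := by ring

lemma Nf_sym (x y z : ℝ) : Nf x y z = Nf x z y := by unfold Nf; ring
lemma Df_sym (x y z : ℝ) : Df x y z = Df x z y := by unfold Df; ring

/-- `H` is nondecreasing in `(y,z)` jointly (cross-multiplied form). -/
lemma Nmono_yz_le {x y1 y2 z1 z2 : ℝ} (hx : 0 < x) (hy1 : 0 < y1) (hy12 : y1 ≤ y2)
    (hz1 : 0 < z1) (hz12 : z1 ≤ z2) :
    Nf x y1 z1 * Df x y2 z2 ≤ Nf x y2 z2 * Df x y1 z1 := by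
  have hy2 : 0 < y2 := lt_of_lt_of_le hy1 hy12
  have h1 : Nf x y1 z1 * Df x y2 z1 ≤ Nf x y2 z1 * Df x y1 z1 := Nmono_y_le hx hy1 hy12 hz1
  have h2 : Nf x y2 z1 * Df x y2 z2 ≤ Nf x y2 z2 * Df x y2 z1 := by
    rw [Nf_sym x y2 z1, Nf_sym x y2 z2, Df_sym x y2 z2, Df_sym x y2 z1]
    exact Nmono_y_le hx hz1 hz12 hy2
  have hD21 : 0 < Df x y2 z1 := Df_pos hx hy2 hz1
  have hD11 : 0 ≤ Df x y1 z1 := (Df_pos hx hy1 hz1).le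
  have hD22 : 0 ≤ Df x y2 z2 := (Df_pos hx hy2 (lt_of_lt_of_le hz1 hz12)).le
  have hN11 : 0 ≤ Nf x y1 z1 := by unfold Nf; positivity
  -- N11 D22 D21 ≤ N21 D11 D22 ≤ N22 D21 D11 ; cancel D21
  have c1 : Nf x y1 z1 * Df x y2 z2 * Df x y2 z1 ≤ Nf x y2 z2 * Df x y1 z1 * Df x y2 z1 := by
    calc Nf x y1 z1 * Df x y2 z2 * Df x y2 z1
        = (Nf x y1 z1 * Df x y2 z1) * Df x y2 z2 := by ring
      _ ≤ (Nf x y2 z1 * Df x y1 z1) * Df x y2 z2 := by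
          exact mul_le_mul_of_nonneg_right h1 hD22
      _ = (Nf x y2 z1 * Df x y2 z2) * Df x y1 z1 := by ring
      _ ≤ (Nf x y2 z2 * Df x y2 z1) * Df x y1 z1 := by
          exact mul_le_mul_of_nonneg_right h2 hD11
      _ = Nf x y2 z2 * Df x y1 z1 * Df x y2 z1 := by ring
  exact le_of_mul_le_mul_right c1 hD21

lemma psi_lt {l y z : ℝ} (hl : 0 < l) (hy : 0 < y) (hz : 0 < z) : psi l y z < l := by
  obtain ⟨hx, hP⟩ := psi_spec hl hy hz
  set x := psi l y z with hxdef
  by_contra hcon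
  push_neg at hcon   -- l ≤ x
  have hA : Nf l y z * Df x y z ≤ l^2 * Df x y z * Df l y z := by
    calc Nf l y z * Df x y z ≤ Nf x y z * Df l y z := Nmono_x_le hl hcon hy hz
      _ = l^2 * Df x y z * Df l y z := by rw [hP]
  have hB : l^2 * Df l y z * Df x y z < Nf l y z * Df x y z :=
    mul_lt_mul_of_pos_right (base3_lt hl hy hz) (Df_pos hx hy hz)
  have : l^2 * Df x y z * Df l y z = l^2 * Df l y z * Df x y z := by ring
  linarith

lemma psi_anti {l y1 z1 y2 z2 : ℝ} (hl : 0 < l) (hy1 : 0 < y1) (hy12 : y1 ≤ y2)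
    (hz1 : 0 < z1) (hz12 : z1 ≤ z2) : psi l y2 z2 ≤ psi l y1 z1 := by
  have hy2 := lt_of_lt_of_le hy1 hy12
  have hz2 := lt_of_lt_of_le hz1 hz12
  obtain ⟨hx1, hP1⟩ := psi_spec hl hy1 hz1
  obtain ⟨hx2, hP2⟩ := psi_spec hl hy2 hz2
  set x1 := psi l y1 z1
  set x2 := psi l y2 z2
  by_contra hcon
  push_neg at hcon   -- x1 < x2
  have hA : Nf x1 y2 z2 * Df x2 y2 z2 < l^2 * Df x2 y2 z2 * Df x1 y2 z2 := by
    calc Nf x1 y2 z2 * Df x2 y2 z2 < Nf x2 y2 z2 * Df x1 y2 z2 := Nmono_x_lt hx1 hcon hy2 hz2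
      _ = l^2 * Df x2 y2 z2 * Df x1 y2 z2 := by rw [hP2]
  have hB : l^2 * Df x1 y1 z1 * Df x1 y2 z2 ≤ Nf x1 y2 z2 * Df x1 y1 z1 := by
    calc l^2 * Df x1 y1 z1 * Df x1 y2 z2 = Nf x1 y1 z1 * Df x1 y2 z2 := by rw [hP1]
      _ ≤ Nf x1 y2 z2 * Df x1 y1 z1 := Nmono_yz_le hx1 hy1 hy12 hz1 hz12
  -- cancel to get Nf x1 y2 z2 < l^2 * Df x1 y2 z2 and the reverse
  have hD2 : 0 < Df x2 y2 z2 := Df_pos hx2 hy2 hz2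
  have hD11 : 0 < Df x1 y1 z1 := Df_pos hx1 hy1 hz1
  have h1 : Nf x1 y2 z2 < l^2 * Df x1 y2 z2 := by
    have := (mul_lt_mul_iff_left₀ hD2).mp (by linarith [hA] :
      Nf x1 y2 z2 * Df x2 y2 z2 < (l^2 * Df x1 y2 z2) * Df x2 y2 z2)
    · exact this
  have h2 : l^2 * Df x1 y2 z2 ≤ Nf x1 y2 z2 := by
    have := (mul_le_mul_iff_left₀ hD11).mp (by linarith [hB] :
      (l^2 * Df x1 y2 z2) * Df x1 y1 z1 ≤ Nf x1 y2 z2 * Df x1 y1 z1)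
    · exact this
  linarith

lemma psi_subhom {l y z t : ℝ} (hl : 0 < l) (hy : 0 < y) (hz : 0 < z) (ht : 1 < t) :
    psi l y z / t < psi l (t*y) (t*z) := by
  have ht0 : (0:ℝ) < t := lt_trans one_pos ht
  have hty : 0 < t*y := by positivity
  have htz : 0 < t*z := by positivity
  obtain ⟨hx1, hP1⟩ := psi_spec hl hy hz
  obtain ⟨hx2, hP2⟩ := psi_spec hl hty htz
  set x1 := psi l y z
  set x2 := psi l (t*y) (t*z)
  by_contra hcon
  push_neg at hcon   -- x2 ≥ ... : psi l (t*y) (t*z) ≤ x1 / t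
  set a := x1 / t^2 with hadef
  have ha : 0 < a := by positivity
  have hax1 : a < x1 := by
    rw [hadef, div_lt_iff₀ (by positivity)]
    have h1t : (1:ℝ) < t^2 := by nlinarith
    nlinarith [mul_lt_mul_of_pos_left h1t hx1]
  have hhomN : Nf (x1/t) (t*y) (t*z) = t^4 * Nf a y z := by
    rw [hadef]; unfold Nf; field_simp
  have hhomD : Df (x1/t) (t*y) (t*z) = t^2 * Df a y z := by
    rw [hadef]; unfold Df; field_simp
  -- step 1: l^2 * Df a ≤ t^2 * Nf a
  have hx1t : 0 < x1 / t := by positivity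
  have hstep1 : l^2 * Df a y z ≤ t^2 * Nf a y z := by
    have h1 : Nf x2 (t*y) (t*z) * Df (x1/t) (t*y) (t*z)
        ≤ Nf (x1/t) (t*y) (t*z) * Df x2 (t*y) (t*z) := Nmono_x_le hx2 hcon hty htz
    rw [hP2, hhomN, hhomD] at h1
    have hD2 : 0 < Df x2 (t*y) (t*z) := Df_pos hx2 hty htz
    have h2 : (l^2 * (t^2 * Df a y z)) * Df x2 (t*y) (t*z)
        ≤ (t^4 * Nf a y z) * Df x2 (t*y) (t*z) := by linarith [h1]
    have h3 := (mul_le_mul_iff_left₀ hD2).mp h2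
    have ht2 : (0:ℝ) < t^2 := by positivity
    have h3' : t^2*(l^2 * Df a y z) ≤ t^2*(t^2 * Nf a y z) := by
      calc t^2*(l^2 * Df a y z) = l^2 * (t^2 * Df a y z) := by ring
        _ ≤ t^4 * Nf a y z := h3
        _ = t^2*(t^2 * Nf a y z) := by ring
    exact le_of_mul_le_mul_left h3' ht2
  -- step 2: t^2 * Nf a < l^2 * Df a
  have hstep2 : t^2 * Nf a y z < l^2 * Df a y z := by
    have h4 := Ndivx_lt ha hax1 hy hz
    have h5 : Nf a y z * Df x1 y z < (4*a)*((x1+y)*(x1+z)*(x1+y+z)) * Df a y z := by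
      have := mul_lt_mul_of_pos_left h4 (by positivity : (0:ℝ) < 4*a)
      calc Nf a y z * Df x1 y z = 4*a*((a+y)*(a+z)*(a+y+z) * Df x1 y z) := by unfold Nf; ring
        _ < 4*a*((x1+y)*(x1+z)*(x1+y+z) * Df a y z) := this
        _ = (4*a)*((x1+y)*(x1+z)*(x1+y+z)) * Df a y z := by ring
    have hat : a*t^2 = x1 := by rw [hadef]; field_simp
    have h6 : (4*a)*((x1+y)*(x1+z)*(x1+y+z)) * Df a y z * t^2 = Nf x1 y z * Df a y z := by
      unfold Nf
      linear_combination (4*((x1+y)*(x1+z)*(x1+y+z))*Df a y z) * hat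
    have hDx1 : 0 < Df x1 y z := Df_pos hx1 hy hz
    have h7 : t^2 * Nf a y z * Df x1 y z < l^2 * Df a y z * Df x1 y z := by
      have h8 : Nf a y z * Df x1 y z * t^2 < Nf x1 y z * Df a y z := by
        calc Nf a y z * Df x1 y z * t^2
            < (4*a)*((x1+y)*(x1+z)*(x1+y+z)) * Df a y z * t^2 :=
              mul_lt_mul_of_pos_right h5 (by positivity)
          _ = Nf x1 y z * Df a y z := h6
      rw [hP1] at h8
      calc t^2 * Nf a y z * Df x1 y z = Nf a y z * Df x1 y z * t^2 := by ring
        _ < l^2 * Df x1 y z * Df a y z := h8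
        _ = l^2 * Df a y z * Df x1 y z := by ring
    exact (mul_lt_mul_iff_left₀ hDx1).mp h7
  linarith

theorem exists_sol (la lb lc : ℝ) (hla : 0 < la) (hlb : 0 < lb) (hlc : 0 < lc) :
    ∃ x y z : ℝ, 0 < x ∧ 0 < y ∧ 0 < z ∧
      Nf x y z = la^2 * Df x y z ∧ Nf y z x = lb^2 * Df y z x ∧ Nf z x y = lc^2 * Df z x y := by
  set M := max la (max lb lc) with hMdef
  have hM : 0 < M := lt_max_of_lt_left hla
  have hlaM : la ≤ M := le_max_left _ _
  have hlbM : lb ≤ M := le_trans (le_max_left _ _) (le_max_right _ _)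
  have hlcM : lc ≤ M := le_trans (le_max_right _ _) (le_max_right _ _)
  set ε := min (psi la M M) (min (psi lb M M) (psi lc M M)) with hεdef
  have hεa : ε ≤ psi la M M := min_le_left _ _
  have hεb : ε ≤ psi lb M M := le_trans (min_le_right _ _) (min_le_left _ _)
  have hεc : ε ≤ psi lc M M := le_trans (min_le_right _ _) (min_le_right _ _)
  have hε : 0 < ε := by
    apply lt_min ((psi_spec hla hM hM).1)
    exact lt_min ((psi_spec hlb hM hM).1) ((psi_spec hlc hM hM).1)
  have hεM : ε ≤ M := le_trans hεa (le_trans (psi_lt hla hM hM).le hlaM)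
  -- box and map
  set IB : ℝ×ℝ×ℝ → Prop := fun w =>
    (ε ≤ w.1 ∧ w.1 ≤ M) ∧ (ε ≤ w.2.1 ∧ w.2.1 ≤ M) ∧ (ε ≤ w.2.2 ∧ w.2.2 ≤ M) with hIBdef
  set F : ℝ×ℝ×ℝ → ℝ×ℝ×ℝ := fun w =>
    (psi la w.2.1 w.2.2, psi lb w.2.2 w.1, psi lc w.1 w.2.1) with hFdef
  have coordpos : ∀ w, IB w → 0 < w.1 ∧ 0 < w.2.1 ∧ 0 < w.2.2 := by
    intro w hw
    exact ⟨lt_of_lt_of_le hε hw.1.1, lt_of_lt_of_le hε hw.2.1.1, lt_of_lt_of_le hε hw.2.2.1⟩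
  have hpsi_box : ∀ (l : ℝ), 0 < l → l ≤ M → ε ≤ psi l M M →
      ∀ y z : ℝ, (ε ≤ y ∧ y ≤ M) → (ε ≤ z ∧ z ≤ M) → ε ≤ psi l y z ∧ psi l y z ≤ M := by
    intro l hl hlM hεl y z hy hz
    have hy0 : 0 < y := lt_of_lt_of_le hε hy.1
    have hz0 : 0 < z := lt_of_lt_of_le hε hz.1
    constructor
    · exact le_trans hεl (psi_anti hl hy0 hy.2 hz0 hz.2)
    · exact le_trans (psi_lt hl hy0 hz0).le hlM
  have inv : ∀ w, IB w → IB (F w) := by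
    intro w hw
    exact ⟨hpsi_box la hla hlaM hεa _ _ hw.2.1 hw.2.2,
      hpsi_box lb hlb hlbM hεb _ _ hw.2.2 hw.1,
      hpsi_box lc hlc hlcM hεc _ _ hw.1 hw.2.1⟩
  -- antitonicity of F on the box
  have hanti : ∀ w v, IB w → IB v → w.1 ≤ v.1 → w.2.1 ≤ v.2.1 → w.2.2 ≤ v.2.2 →
      (F v).1 ≤ (F w).1 ∧ (F v).2.1 ≤ (F w).2.1 ∧ (F v).2.2 ≤ (F w).2.2 := by
    intro w v hw hv h1 h2 h3
    obtain ⟨hw1, hw2, hw3⟩ := coordpos w hw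
    exact ⟨psi_anti hla hw2 h2 hw3 h3, psi_anti hlb hw3 h3 hw1 h1, psi_anti hlc hw1 h1 hw2 h2⟩
  have hmono2 : ∀ w v, IB w → IB v → w.1 ≤ v.1 → w.2.1 ≤ v.2.1 → w.2.2 ≤ v.2.2 →
      (F (F w)).1 ≤ (F (F v)).1 ∧ (F (F w)).2.1 ≤ (F (F v)).2.1 ∧ (F (F w)).2.2 ≤ (F (F v)).2.2 := by
    intro w v hw hv h1 h2 h3
    obtain ⟨g1, g2, g3⟩ := hanti w v hw hv h1 h2 h3
    exact hanti (F v) (F w) (inv v hv) (inv w hw) g1 g2 g3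
  -- Knaster–Tarski for F∘F on the box
  set S : Set (ℝ×ℝ×ℝ) := {w | IB w ∧ w.1 ≤ (F (F w)).1 ∧ w.2.1 ≤ (F (F w)).2.1 ∧ w.2.2 ≤ (F (F w)).2.2}
    with hSdef
  have hloS : ((ε,ε,ε) : ℝ×ℝ×ℝ) ∈ S := by
    have hIBlo : IB (ε,ε,ε) := ⟨⟨le_refl _, hεM⟩, ⟨le_refl _, hεM⟩, ⟨le_refl _, hεM⟩⟩
    have h2 := inv _ (inv _ hIBlo)
    exact ⟨hIBlo, h2.1.1, h2.2.1.1, h2.2.2.1⟩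
  set A1 := (fun w : ℝ×ℝ×ℝ => w.1) '' S with hA1
  set A2 := (fun w : ℝ×ℝ×ℝ => w.2.1) '' S with hA2
  set A3 := (fun w : ℝ×ℝ×ℝ => w.2.2) '' S with hA3
  have hA1ne : A1.Nonempty := ⟨ε, ⟨(ε,ε,ε), hloS, rfl⟩⟩
  have hA2ne : A2.Nonempty := ⟨ε, ⟨(ε,ε,ε), hloS, rfl⟩⟩
  have hA3ne : A3.Nonempty := ⟨ε, ⟨(ε,ε,ε), hloS, rfl⟩⟩
  have hA1bdd : BddAbove A1 := ⟨M, by rintro a ⟨w, hw, rfl⟩; exact hw.1.1.2⟩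
  have hA2bdd : BddAbove A2 := ⟨M, by rintro a ⟨w, hw, rfl⟩; exact hw.1.2.1.2⟩
  have hA3bdd : BddAbove A3 := ⟨M, by rintro a ⟨w, hw, rfl⟩; exact hw.1.2.2.2⟩
  set p : ℝ×ℝ×ℝ := (sSup A1, sSup A2, sSup A3) with hpdef
  have hub : ∀ w ∈ S, w.1 ≤ p.1 ∧ w.2.1 ≤ p.2.1 ∧ w.2.2 ≤ p.2.2 := by
    intro w hw
    exact ⟨le_csSup hA1bdd ⟨w, hw, rfl⟩, le_csSup hA2bdd ⟨w, hw, rfl⟩, le_csSup hA3bdd ⟨w, hw, rfl⟩⟩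
  have hIBp : IB p := by
    refine ⟨⟨?_, ?_⟩, ⟨?_, ?_⟩, ⟨?_, ?_⟩⟩
    · exact le_csSup hA1bdd ⟨(ε,ε,ε), hloS, rfl⟩
    · exact csSup_le hA1ne (by rintro a ⟨w, hw, rfl⟩; exact hw.1.1.2)
    · exact le_csSup hA2bdd ⟨(ε,ε,ε), hloS, rfl⟩
    · exact csSup_le hA2ne (by rintro a ⟨w, hw, rfl⟩; exact hw.1.2.1.2)
    · exact le_csSup hA3bdd ⟨(ε,ε,ε), hloS, rfl⟩
    · exact csSup_le hA3ne (by rintro a ⟨w, hw, rfl⟩; exact hw.1.2.2.2)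
  have hpFF : p.1 ≤ (F (F p)).1 ∧ p.2.1 ≤ (F (F p)).2.1 ∧ p.2.2 ≤ (F (F p)).2.2 := by
    refine ⟨?_, ?_, ?_⟩
    · apply csSup_le hA1ne
      rintro a ⟨w, hw, rfl⟩
      obtain ⟨u1, u2, u3⟩ := hub w hw
      exact le_trans hw.2.1 (hmono2 w p hw.1 hIBp u1 u2 u3).1
    · apply csSup_le hA2ne
      rintro a ⟨w, hw, rfl⟩
      obtain ⟨u1, u2, u3⟩ := hub w hw
      exact le_trans hw.2.2.1 (hmono2 w p hw.1 hIBp u1 u2 u3).2.1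
    · apply csSup_le hA3ne
      rintro a ⟨w, hw, rfl⟩
      obtain ⟨u1, u2, u3⟩ := hub w hw
      exact le_trans hw.2.2.2 (hmono2 w p hw.1 hIBp u1 u2 u3).2.2
  have hFFpS : F (F p) ∈ S := by
    refine ⟨inv _ (inv _ hIBp), ?_⟩
    exact hmono2 p (F (F p)) hIBp (inv _ (inv _ hIBp)) hpFF.1 hpFF.2.1 hpFF.2.2
  have hfix1 : (F (F p)).1 = p.1 :=
    le_antisymm (le_csSup hA1bdd ⟨F (F p), hFFpS, rfl⟩) hpFF.1
  have hfix2 : (F (F p)).2.1 = p.2.1 :=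
    le_antisymm (le_csSup hA2bdd ⟨F (F p), hFFpS, rfl⟩) hpFF.2.1
  have hfix3 : (F (F p)).2.2 = p.2.2 :=
    le_antisymm (le_csSup hA3bdd ⟨F (F p), hFFpS, rfl⟩) hpFF.2.2
  -- now exclude a 2-cycle
  obtain ⟨hp1, hp2, hp3⟩ := coordpos p hIBp
  set q := F p with hqdef
  have hIBq : IB q := inv p hIBp
  obtain ⟨hq1, hq2, hq3⟩ := coordpos q hIBq
  -- q = F p, F q = p  (coordinatewise)
  have hqp1 : q.1 = psi la p.2.1 p.2.2 := rfl
  have hqp2 : q.2.1 = psi lb p.2.2 p.1 := rfl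
  have hqp3 : q.2.2 = psi lc p.1 p.2.1 := rfl
  have hpq1 : p.1 = psi la q.2.1 q.2.2 := hfix1.symm
  have hpq2 : p.2.1 = psi lb q.2.2 q.1 := hfix2.symm
  have hpq3 : p.2.2 = psi lc q.1 q.2.1 := hfix3.symm
  set t := max (p.1/q.1) (max (q.1/p.1) (max (p.2.1/q.2.1) (max (q.2.1/p.2.1)
      (max (p.2.2/q.2.2) (q.2.2/p.2.2))))) with htdef
  have htp1 : p.1/q.1 ≤ t := le_max_left _ _
  have htq1 : q.1/p.1 ≤ t := le_trans (le_max_left _ _) (le_max_right _ _)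
  have htp2 : p.2.1/q.2.1 ≤ t := le_trans (le_trans (le_max_left _ _) (le_max_right _ _)) (le_max_right _ _)
  have htq2 : q.2.1/p.2.1 ≤ t := le_trans (le_trans (le_trans (le_max_left _ _) (le_max_right _ _)) (le_max_right _ _)) (le_max_right _ _)
  have htp3 : p.2.2/q.2.2 ≤ t := le_trans (le_trans (le_trans (le_trans (le_max_left _ _) (le_max_right _ _)) (le_max_right _ _)) (le_max_right _ _)) (le_max_right _ _)
  have htq3 : q.2.2/p.2.2 ≤ t := le_trans (le_trans (le_trans (le_trans (le_max_right _ _) (le_max_right _ _)) (le_max_right _ _)) (le_max_right _ _)) (le_max_right _ _)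
  have ht1 : 1 ≤ t := by
    by_contra hcon
    push_neg at hcon
    have e1 : p.1 < q.1 := (div_lt_one hq1).mp (lt_of_le_of_lt htp1 hcon)
    have e2 : q.1 < p.1 := (div_lt_one hp1).mp (lt_of_le_of_lt htq1 hcon)
    linarith
  -- bounds
  have bp1 : p.1 ≤ t * q.1 := (div_le_iff₀ hq1).mp htp1
  have bq1 : q.1 ≤ t * p.1 := (div_le_iff₀ hp1).mp htq1
  have bp2 : p.2.1 ≤ t * q.2.1 := (div_le_iff₀ hq2).mp htp2
  have bq2 : q.2.1 ≤ t * p.2.1 := (div_le_iff₀ hp2).mp htq2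
  have bp3 : p.2.2 ≤ t * q.2.2 := (div_le_iff₀ hq3).mp htp3
  have bq3 : q.2.2 ≤ t * p.2.2 := (div_le_iff₀ hp3).mp htq3
  have hpeqq : p = q := by
    rcases eq_or_lt_of_le ht1 with ht | ht
    · -- t = 1 : p ≤ q and q ≤ p
      rw [← ht] at bp1 bq1 bp2 bq2 bp3 bq3
      simp only [one_mul] at bp1 bq1 bp2 bq2 bp3 bq3
      exact Prod.ext (le_antisymm bp1 bq1) (Prod.ext (le_antisymm bp2 bq2) (le_antisymm bp3 bq3))
    · -- 1 < t : contradiction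
      exfalso
      have ht0 : 0 < t := lt_trans one_pos ht
      -- six strict ratio bounds
      have sq1 : q.1/p.1 < t := by
        have c1 : psi la (t*p.2.1) (t*p.2.2) ≤ psi la q.2.1 q.2.2 :=
          psi_anti hla hq2 bq2 hq3 bq3
        have c2 : psi la p.2.1 p.2.2 / t < psi la (t*p.2.1) (t*p.2.2) :=
          psi_subhom hla hp2 hp3 ht
        rw [← hqp1] at c2
        rw [← hpq1] at c1
        rw [div_lt_iff₀ hp1]
        have : q.1 / t < p.1 := lt_of_lt_of_le c2 c1
        rw [div_lt_iff₀ ht0] at this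
        linarith
      have sp1 : p.1/q.1 < t := by
        have c1 : psi la (t*q.2.1) (t*q.2.2) ≤ psi la p.2.1 p.2.2 :=
          psi_anti hla hp2 bp2 hp3 bp3
        have c2 : psi la q.2.1 q.2.2 / t < psi la (t*q.2.1) (t*q.2.2) :=
          psi_subhom hla hq2 hq3 ht
        rw [← hpq1] at c2
        rw [← hqp1] at c1
        rw [div_lt_iff₀ hq1]
        have : p.1 / t < q.1 := lt_of_lt_of_le c2 c1
        rw [div_lt_iff₀ ht0] at this
        linarith
      have sq2 : q.2.1/p.2.1 < t := by
        have c1 : psi lb (t*p.2.2) (t*p.1) ≤ psi lb q.2.2 q.1 :=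
          psi_anti hlb hq3 bq3 hq1 bq1
        have c2 : psi lb p.2.2 p.1 / t < psi lb (t*p.2.2) (t*p.1) :=
          psi_subhom hlb hp3 hp1 ht
        rw [← hqp2] at c2
        rw [← hpq2] at c1
        rw [div_lt_iff₀ hp2]
        have : q.2.1 / t < p.2.1 := lt_of_lt_of_le c2 c1
        rw [div_lt_iff₀ ht0] at this
        linarith
      have sp2 : p.2.1/q.2.1 < t := by
        have c1 : psi lb (t*q.2.2) (t*q.1) ≤ psi lb p.2.2 p.1 :=
          psi_anti hlb hp3 bp3 hp1 bp1
        have c2 : psi lb q.2.2 q.1 / t < psi lb (t*q.2.2) (t*q.1) :=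
          psi_subhom hlb hq3 hq1 ht
        rw [← hpq2] at c2
        rw [← hqp2] at c1
        rw [div_lt_iff₀ hq2]
        have : p.2.1 / t < q.2.1 := lt_of_lt_of_le c2 c1
        rw [div_lt_iff₀ ht0] at this
        linarith
      have sq3 : q.2.2/p.2.2 < t := by
        have c1 : psi lc (t*p.1) (t*p.2.1) ≤ psi lc q.1 q.2.1 :=
          psi_anti hlc hq1 bq1 hq2 bq2
        have c2 : psi lc p.1 p.2.1 / t < psi lc (t*p.1) (t*p.2.1) :=
          psi_subhom hlc hp1 hp2 ht
        rw [← hqp3] at c2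
        rw [← hpq3] at c1
        rw [div_lt_iff₀ hp3]
        have : q.2.2 / t < p.2.2 := lt_of_lt_of_le c2 c1
        rw [div_lt_iff₀ ht0] at this
        linarith
      have sp3 : p.2.2/q.2.2 < t := by
        have c1 : psi lc (t*q.1) (t*q.2.1) ≤ psi lc p.1 p.2.1 :=
          psi_anti hlc hp1 bp1 hp2 bp2
        have c2 : psi lc q.1 q.2.1 / t < psi lc (t*q.1) (t*q.2.1) :=
          psi_subhom hlc hq1 hq2 ht
        rw [← hpq3] at c2
        rw [← hqp3] at c1
        rw [div_lt_iff₀ hq3]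
        have : p.2.2 / t < q.2.2 := lt_of_lt_of_le c2 c1
        rw [div_lt_iff₀ ht0] at this
        linarith
      have htt : t < t := by
        conv_lhs => rw [htdef]
        exact max_lt sp1 (max_lt sq1 (max_lt sp2 (max_lt sq2 (max_lt sp3 sq3))))
      exact lt_irrefl t htt
  -- p is a fixed point of F
  have hfp1 : p.1 = psi la p.2.1 p.2.2 := by
    rw [show p.1 = q.1 from congrArg Prod.fst hpeqq]
  have hfp2 : p.2.1 = psi lb p.2.2 p.1 := by
    rw [show p.2.1 = q.2.1 from congrArg (fun w : ℝ×ℝ×ℝ => w.2.1) hpeqq]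
  have hfp3 : p.2.2 = psi lc p.1 p.2.1 := by
    rw [show p.2.2 = q.2.2 from congrArg (fun w : ℝ×ℝ×ℝ => w.2.2) hpeqq]
  refine ⟨p.1, p.2.1, p.2.2, hp1, hp2, hp3, ?_, ?_, ?_⟩
  · rw [hfp1]; exact (psi_spec hla hp2 hp3).2
  · rw [hfp2]; exact (psi_spec hlb hp3 hp1).2
  · rw [hfp3]; exact (psi_spec hlc hp1 hp2).2

/-- Stewart-type formula for the length of the angle bisector. -/
lemma bisector_sq (A B C : EuclideanSpace ℝ (Fin 2))
    (hbc : 0 < dist C A + dist A B) :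
    (bisectorLength A B C)^2 * (dist C A + dist A B)^2
      = dist C A * dist A B * ((dist C A + dist A B)^2 - (dist B C)^2) := by
  set a := dist B C with hadef
  set b := dist C A with hbdef
  set c := dist A B with hcdef
  have hbcne : b + c ≠ 0 := ne_of_gt hbc
  set β := b/(b+c) with hβdef
  set γ := c/(b+c) with hγdef
  have hβγ : β + γ = 1 := by rw [hβdef, hγdef]; field_simp
  set u := A - B with hudef
  set v := A - C with hvdef
  have hkey : A - (β•B + γ•C) = β•u + γ•v := by
    calc A - (β•B + γ•C) = (β+γ)•A - (β•B + γ•C) := by rw [hβγ, one_smul]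
      _ = β•u + γ•v := by rw [hudef, hvdef]; module
  have hbl : bisectorLength A B C = ‖β•u + γ•v‖ := by
    rw [bisectorLength, dist_eq_norm, ← hβdef, ← hγdef, hkey]
  have hnu : ‖u‖ = c := by rw [hudef, hcdef, dist_eq_norm]
  have hnv : ‖v‖ = b := by rw [hvdef, hbdef, dist_comm C A, dist_eq_norm A C]
  have huv : u - v = C - B := by rw [hudef, hvdef]; abel
  have hinner : inner ℝ u v = (c^2 + b^2 - a^2)/2 := by
    have h1 : ‖u - v‖^2 = ‖u‖^2 - 2*inner ℝ u v + ‖v‖^2 := norm_sub_sq_real u v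
    have h2 : ‖u - v‖ = a := by rw [huv, hadef, dist_comm B C, dist_eq_norm C B]
    rw [h2, hnu, hnv] at h1
    linarith
  have hsq : (bisectorLength A B C)^2 = β^2*c^2 + 2*(β*γ*((c^2 + b^2 - a^2)/2)) + γ^2*b^2 := by
    rw [hbl, norm_add_sq_real, real_inner_smul_left, real_inner_smul_right, hinner,
      norm_smul, norm_smul, hnu, hnv]
    rw [Real.norm_eq_abs, Real.norm_eq_abs]
    ring_nf
    rw [sq_abs, sq_abs]
    ring
  rw [hsq, hβdef, hγdef]
  field_simp
  ring


theorem exists_triangle_with_prescribed_bisectors (l₁ l₂ l₃ : ℝ)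
    (h₁ : 0 < l₁) (h₂ : 0 < l₂) (h₃ : 0 < l₃) :
    ∃ A B C : EuclideanSpace ℝ (Fin 2), ¬ Collinear ℝ ({A, B, C} : Set (EuclideanSpace ℝ (Fin 2))) ∧
      bisectorLength A B C = l₂ ∧ bisectorLength B C A = l₁ ∧ bisectorLength C A B = l₃ := by
  obtain ⟨x, y, z, hx, hy, hz, e1, e2, e3⟩ := exists_sol l₂ l₁ l₃ h₂ h₁ h₃
  set a := y + z with hadef
  set b := z + x with hbdef
  set c := x + y with hcdef
  have ha : 0 < a := by positivity
  have hb : 0 < b := by positivity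
  have hc : 0 < c := by positivity
  set xc := (a^2 + c^2 - b^2)/(2*a) with hxcdef
  have hyc2pos : 0 < c^2 - xc^2 := by
    have h : c^2 - xc^2 = 4*x*y*z*(x+y+z)/a^2 := by
      rw [hxcdef, hadef, hbdef, hcdef]
      field_simp
      ring
    rw [h]; positivity
  set yc := Real.sqrt (c^2 - xc^2) with hycdef
  have hyc2 : yc^2 = c^2 - xc^2 := Real.sq_sqrt hyc2pos.le
  have hyc : 0 < yc := Real.sqrt_pos.mpr hyc2pos
  -- the three points
  set P2 : ℝ → ℝ → EuclideanSpace ℝ (Fin 2) :=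
    fun u v => (WithLp.equiv 2 (Fin 2 → ℝ)).symm ![u, v] with hP2def
  set A := P2 xc yc with hAdef
  set B := P2 0 0 with hBdef
  set C := P2 a 0 with hCdef
  have hdist : ∀ u1 v1 u2 v2 : ℝ,
      dist (P2 u1 v1) (P2 u2 v2) = Real.sqrt ((u1-u2)^2 + (v1-v2)^2) := by
    intro u1 v1 u2 v2
    rw [EuclideanSpace.dist_eq, Fin.sum_univ_two]
    simp [hP2def, WithLp.equiv_symm_apply, PiLp.toLp_apply, Real.dist_eq, sq_abs]
  have distBC : dist B C = a := by
    rw [hBdef, hCdef, hdist, show (0-a)^2 + ((0:ℝ)-0)^2 = a^2 by ring, Real.sqrt_sq ha.le]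
  have distAB : dist A B = c := by
    rw [hAdef, hBdef, hdist, show (xc-0)^2 + (yc-0)^2 = xc^2 + yc^2 by ring, hyc2,
      show xc^2 + (c^2 - xc^2) = c^2 by ring, Real.sqrt_sq hc.le]
  have h2axc : 2*a*xc = a^2 + c^2 - b^2 := by
    rw [hxcdef]; field_simp
  have distCA : dist C A = b := by
    rw [hCdef, hAdef, hdist]
    have h : (a-xc)^2 + (0-yc)^2 = b^2 := by
      have expand : (a-xc)^2 + (0-yc)^2 = a^2 - 2*a*xc + xc^2 + yc^2 := by ring
      rw [expand, hyc2, h2axc]; ring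
    rw [h, Real.sqrt_sq hb.le]
  -- noncollinearity
  have hnc : ¬ Collinear ℝ ({A, B, C} : Set (EuclideanSpace ℝ (Fin 2))) := by
    intro hcol
    rw [collinear_iff_of_mem (show B ∈ ({A, B, C} : Set (EuclideanSpace ℝ (Fin 2))) by simp)] at hcol
    obtain ⟨v, hv⟩ := hcol
    obtain ⟨rA, hrA⟩ := hv A (by simp)
    obtain ⟨rC, hrC⟩ := hv C (by simp)
    have eA1 : yc = rA * v 1 := by
      have := congrArg (fun f : EuclideanSpace ℝ (Fin 2) => f 1) hrA
      simpa [hAdef, hBdef, hP2def, WithLp.equiv_symm_apply, PiLp.toLp_apply] using this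
    have eC0 : a = rC * v 0 := by
      have := congrArg (fun f : EuclideanSpace ℝ (Fin 2) => f 0) hrC
      simpa [hCdef, hBdef, hP2def, WithLp.equiv_symm_apply, PiLp.toLp_apply] using this
    have eC1 : (0:ℝ) = rC * v 1 := by
      have := congrArg (fun f : EuclideanSpace ℝ (Fin 2) => f 1) hrC
      simpa [hCdef, hBdef, hP2def, WithLp.equiv_symm_apply, PiLp.toLp_apply] using this
    rcases mul_eq_zero.mp eC1.symm with hrC0 | hv1
    · rw [hrC0, zero_mul] at eC0; linarith
    · rw [hv1, mul_zero] at eA1; linarith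
  refine ⟨A, B, C, hnc, ?_, ?_, ?_⟩
  · -- bisector from A equals l₂
    have st := bisector_sq A B C (by rw [distCA, distAB]; positivity)
    rw [distCA, distAB, distBC] at st
    have hNf : b * c * ((b+c)^2 - a^2) = Nf x y z := by
      rw [hadef, hbdef, hcdef]; unfold Nf; ring
    have hDf : (b+c)^2 = Df x y z := by
      rw [hbdef, hcdef]; unfold Df; ring
    rw [hNf, hDf, e1] at st
    have hDfpos : 0 < Df x y z := by unfold Df; positivity
    have hsq : (bisectorLength A B C)^2 = l₂^2 := by
      have := mul_right_cancel₀ (ne_of_gt hDfpos) st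
      exact this
    have hbn : 0 ≤ bisectorLength A B C := by rw [bisectorLength]; exact dist_nonneg
    calc bisectorLength A B C = |bisectorLength A B C| := (abs_of_nonneg hbn).symm
      _ = |l₂| := by rw [← Real.sqrt_sq_eq_abs, ← Real.sqrt_sq_eq_abs, hsq]
      _ = l₂ := abs_of_nonneg h₂.le
  · -- bisector from B equals l₁
    have st := bisector_sq B C A (by rw [distAB, distBC]; positivity)
    rw [distCA, distAB, distBC] at st
    have hNf : c * a * ((c+a)^2 - b^2) = Nf y z x := by
      rw [hadef, hbdef, hcdef]; unfold Nf; ring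
    have hDf : (c+a)^2 = Df y z x := by
      rw [hadef, hcdef]; unfold Df; ring
    rw [hNf, hDf, e2] at st
    have hDfpos : 0 < Df y z x := by unfold Df; positivity
    have hsq : (bisectorLength B C A)^2 = l₁^2 := mul_right_cancel₀ (ne_of_gt hDfpos) st
    have hbn : 0 ≤ bisectorLength B C A := by rw [bisectorLength]; exact dist_nonneg
    calc bisectorLength B C A = |bisectorLength B C A| := (abs_of_nonneg hbn).symm
      _ = |l₁| := by rw [← Real.sqrt_sq_eq_abs, ← Real.sqrt_sq_eq_abs, hsq]
      _ = l₁ := abs_of_nonneg h₁.le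
  · -- bisector from C equals l₃
    have st := bisector_sq C A B (by rw [distBC, distCA]; positivity)
    rw [distCA, distAB, distBC] at st
    have hNf : a * b * ((a+b)^2 - c^2) = Nf z x y := by
      rw [hadef, hbdef, hcdef]; unfold Nf; ring
    have hDf : (a+b)^2 = Df z x y := by
      rw [hadef, hbdef]; unfold Df; ring
    rw [hNf, hDf, e3] at st
    have hDfpos : 0 < Df z x y := by unfold Df; positivity
    have hsq : (bisectorLength C A B)^2 = l₃^2 := mul_right_cancel₀ (ne_of_gt hDfpos) st
    have hbn : 0 ≤ bisectorLength C A B := by rw [bisectorLength]; exact dist_nonneg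
    calc bisectorLength C A B = |bisectorLength C A B| := (abs_of_nonneg hbn).symm
      _ = |l₃| := by rw [← Real.sqrt_sq_eq_abs, ← Real.sqrt_sq_eq_abs, hsq]
      _ = l₃ := abs_of_nonneg h₃.le
end

section
/- For any real numbers l₁, l₂, l₃ with l₁ > 0, l₂ > 0, l₃ > 0, there exist real numbers a, b, c > 0 satisfying the strict triangle inequalities a < b + c, b < c + a, c < a + b, such that √(b·c·((b+c)² − a²))/(b+c) = l₁, √(c·a·((c+a)² − b²))/(c+a) = l₂, and √(a·b·((a+b)² − c²))/(a+b) = l₃. (Side-length form of the existence of a triangle with prescribed bisector lengths.) -/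
open Real Set

noncomputable section
namespace BisEx


lemma key_id (A B : ℝ) :
    sin (A+B) * cos ((A-B)/2) * (cos B * sin (A+B/2) + sin B * cos (A+B/2) / 2)
      - (cos (A+B) * cos ((A-B)/2) + sin (A+B) * sin ((A-B)/2) / 2) * (sin B * sin (A+B/2))
    = cos (A/2) * (sin (A/2) * sin (A/2+B) - (4*sin (A/2)^2 - 1) * sin (A/2+B)^2/2
        + 5*sin (A/2)^2/2 - 2*sin (A/2)^4) := by
  obtain ⟨α, rfl⟩ : ∃ x, A = 2*x := ⟨A/2, by ring⟩
  obtain ⟨β, rfl⟩ : ∃ x, B = 2*x := ⟨B/2, by ring⟩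
  rw [show 2*α+2*β = 2*(α+β) by ring, show ((2*α-2*β)/2 : ℝ) = α-β by ring,
    show 2*α+2*β/2 = 2*α+β by ring, show (2*α : ℝ)/2 = α by ring]
  simp only [sin_add, cos_add, sin_sub, cos_sub, sin_two_mul, cos_two_mul]
  linear_combination ((2:ℝ)*cos α*sin β^2*cos β^4 + (2:ℝ)*cos α*sin β^4*cos β^2 + (-4:ℝ)*cos α^3*sin β^2*cos β^2 + (4:ℝ)*cos α^3*sin β^2*cos β^4 + (4:ℝ)*cos α^3*sin β^4*cos β^2 + (-6:ℝ)*sin α*sin β*cos β^3 + (6:ℝ)*sin α*sin β*cos β^5 + (4:ℝ)*sin α*sin β^3*cos β + (4:ℝ)*sin α*sin β^3*cos β^3 + (-2:ℝ)*sin α*sin β^5*cos β + (-8:ℝ)*sin α*cos α^2*sin β*cos β^3 + (12:ℝ)*sin α*cos α^2*sin β*cos β^5 + (8:ℝ)*sin α*cos α^2*sin β^3*cos β^3 + (-4:ℝ)*sin α*cos α^2*sin β^5*cos β + (-4:ℝ)*sin α^2*cos α*cos β^4 + (8:ℝ)*sin α^2*cos α*cos β^6 + (12:ℝ)*sin α^2*cos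 α*sin β^2*cos β^2 + (-4:ℝ)*sin α^2*cos α*sin β^2*cos β^4 + (4:ℝ)*sin α^2*cos α*sin β^4 + (-12:ℝ)*sin α^2*cos α*sin β^4*cos β^2 + (-8:ℝ)*sin α^3*sin β*cos β + (24:ℝ)*sin α^3*sin β*cos β^3 + (-16:ℝ)*sin α^3*sin β*cos β^5 + (8:ℝ)*sin α^3*sin β^3*cos β + (-16:ℝ)*sin α^3*sin β^3*cos β^3) * sin_sq_add_cos_sq α +
    ((2:ℝ)*cos α*sin β^2*cos β^2 + (6:ℝ)*sin α*sin β*cos β^3 + (-2:ℝ)*sin α*sin β^3*cos β + (2:ℝ)*sin α^2*cos α + (2:ℝ)*sin α^2*cos α*cos β^2 + (8:ℝ)*sin α^2*cos α*cos β^4 + (2:ℝ)*sin α^2*cos α*sin β^2 + (-12:ℝ)*sin α^2*cos α*sin β^2*cos β^2 + (8:ℝ)*sin α^3*sin β*cos β + (-22:ℝ)*sin α^3*sin β*cos β^3 + (6:ℝ)*sin α^3*sin β^3*cos β + (-4:ℝ)*sin α^4*cos α + (4:ℝ)*sin α^4*cos α*cos β^2 + (-8:ℝ)*sin α^4*cos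 α*cos β^4 + (-4:ℝ)*sin α^4*cos α*sin β^2 + (8:ℝ)*sin α^4*cos α*sin β^2*cos β^2 + (-8:ℝ)*sin α^5*sin β*cos β + (16:ℝ)*sin α^5*sin β*cos β^3) * sin_sq_add_cos_sq β

lemma sum_sq_id (A B : ℝ) :
    (sin B + sin (A+B))^2 - sin A^2 = 4 * sin B * sin (A+B) * cos (A/2)^2 := by
  obtain ⟨α, rfl⟩ : ∃ x, A = 2*x := ⟨A/2, by ring⟩
  obtain ⟨β, rfl⟩ : ∃ x, B = 2*x := ⟨B/2, by ring⟩
  rw [show 2*α+2*β = 2*(α+β) by ring, show (2*α : ℝ)/2 = α by ring]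
  simp only [sin_add, cos_add, sin_sub, cos_sub, sin_two_mul, cos_two_mul]
  linear_combination ((-4:ℝ)*sin β^2*cos β^2 + (-12:ℝ)*cos α^2*sin β^2*cos β^2 + (-8:ℝ)*sin α*cos α*sin β*cos β^3 + (8:ℝ)*sin α*cos α*sin β^3*cos β + (-4:ℝ)*sin α^2 + (4:ℝ)*sin α^2*cos β^4 + (12:ℝ)*sin α^2*sin β^2*cos β^2 + (4:ℝ)*sin α^2*sin β^4) * sin_sq_add_cos_sq α +
    ((4:ℝ)*sin α^2 + (4:ℝ)*sin α^2*cos β^2 + (4:ℝ)*sin α^2*sin β^2 + (-4:ℝ)*sin α^4 + (-4:ℝ)*sin α^4*cos β^2 + (-4:ℝ)*sin α^4*sin β^2) * sin_sq_add_cos_sq β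

lemma sum_sq_id2 (A B : ℝ) :
    (sin A + sin (A+B))^2 - sin B^2 = 4 * sin A * sin (A+B) * cos (B/2)^2 := by
  obtain ⟨α, rfl⟩ : ∃ x, A = 2*x := ⟨A/2, by ring⟩
  obtain ⟨β, rfl⟩ : ∃ x, B = 2*x := ⟨B/2, by ring⟩
  rw [show 2*α+2*β = 2*(α+β) by ring, show (2*β : ℝ)/2 = β by ring]
  simp only [sin_add, cos_add, sin_sub, cos_sub, sin_two_mul, cos_two_mul]
  linear_combination ((4:ℝ)*sin β^2*cos β^2 + (4:ℝ)*cos α^2*sin β^2*cos β^2 + (8:ℝ)*sin α*cos α*sin β*cos β + (-8:ℝ)*sin α*cos α*sin β*cos β^3 + (-8:ℝ)*sin α*cos α*sin β^3*cos β + (4:ℝ)*sin α^2 + (8:ℝ)*sin α^2*cos β^2 + (-12:ℝ)*sin α^2*cos β^4 + (-8:ℝ)*sin α^2*sin β^2 + (-4:ℝ)*sin α^2*sin β^2*cos β^2 + (4:ℝ)*sin α^2*sin β^4) * sin_sq_add_cos_sq α +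
    ((-8:ℝ)*sin α*cos α*sin β*cos β + (-4:ℝ)*sin α^2 + (-12:ℝ)*sin α^2*cos β^2 + (4:ℝ)*sin α^2*sin β^2 + (16:ℝ)*sin α^3*cos α*sin β*cos β + (4:ℝ)*sin α^4 + (12:ℝ)*sin α^4*cos β^2 + (-4:ℝ)*sin α^4*sin β^2) * sin_sq_add_cos_sq β

lemma sum_sq_id3 (A B : ℝ) :
    (sin A + sin B)^2 - sin (A+B)^2 = 4 * sin A * sin B * sin ((A+B)/2)^2 := by
  obtain ⟨α, rfl⟩ : ∃ x, A = 2*x := ⟨A/2, by ring⟩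
  obtain ⟨β, rfl⟩ : ∃ x, B = 2*x := ⟨B/2, by ring⟩
  rw [show 2*α+2*β = 2*(α+β) by ring, show ((2*(α+β) : ℝ))/2 = α+β by ring]
  simp only [sin_add, cos_add, sin_sub, cos_sub, sin_two_mul, cos_two_mul]
  linear_combination ((-4:ℝ)*sin β^2*cos β^2 + (-4:ℝ)*cos α^2*sin β^2*cos β^2 + (-8:ℝ)*sin α*cos α*sin β*cos β^3 + (-8:ℝ)*sin α*cos α*sin β^3*cos β + (4:ℝ)*sin α^2 + (-4:ℝ)*sin α^2*cos β^4 + (-12:ℝ)*sin α^2*sin β^2*cos β^2 + (-4:ℝ)*sin α^2*sin β^4) * sin_sq_add_cos_sq α +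
    ((-8:ℝ)*sin α*cos α*sin β*cos β + (-4:ℝ)*sin α^2 + (-4:ℝ)*sin α^2*cos β^2 + (-4:ℝ)*sin α^2*sin β^2 + (4:ℝ)*sin α^4 + (4:ℝ)*sin α^4*cos β^2 + (4:ℝ)*sin α^4*sin β^2) * sin_sq_add_cos_sq β

lemma sum_id (A B : ℝ) :
    sin B + sin (A+B) = 2 * cos (A/2) * sin (A/2+B) := by
  obtain ⟨α, rfl⟩ : ∃ x, A = 2*x := ⟨A/2, by ring⟩
  obtain ⟨β, rfl⟩ : ∃ x, B = 2*x := ⟨B/2, by ring⟩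
  rw [show 2*α+2*β = 2*(α+β) by ring, show (2*α : ℝ)/2 = α by ring]
  simp only [sin_add, cos_add, sin_sub, cos_sub, sin_two_mul, cos_two_mul]
  linear_combination ((-2:ℝ)*sin β*cos β) * sin_sq_add_cos_sq α +
    ((-2:ℝ)*sin α*cos α) * sin_sq_add_cos_sq β

lemma sum_id2 (A B : ℝ) :
    sin A + sin (A+B) = 2 * cos (B/2) * sin (A+B/2) := by
  obtain ⟨α, rfl⟩ : ∃ x, A = 2*x := ⟨A/2, by ring⟩
  obtain ⟨β, rfl⟩ : ∃ x, B = 2*x := ⟨B/2, by ring⟩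
  rw [show 2*α+2*β = 2*(α+β) by ring, show 2*α+2*β/2 = 2*α+β by ring,
    show (2*β : ℝ)/2 = β by ring]
  simp only [sin_add, cos_add, sin_sub, cos_sub, sin_two_mul, cos_two_mul]
  linear_combination ((-2:ℝ)*sin β*cos β) * sin_sq_add_cos_sq α +
    ((-2:ℝ)*sin α*cos α) * sin_sq_add_cos_sq β

lemma sum_id3 (A B : ℝ) :
    sin A + sin B = 2 * sin ((A+B)/2) * cos ((A-B)/2) := by
  obtain ⟨α, rfl⟩ : ∃ x, A = 2*x := ⟨A/2, by ring⟩
  obtain ⟨β, rfl⟩ : ∃ x, B = 2*x := ⟨B/2, by ring⟩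
  rw [show ((2*α+2*β : ℝ))/2 = α+β by ring, show ((2*α-2*β : ℝ))/2 = α-β by ring]
  simp only [sin_add, cos_add, sin_sub, cos_sub, sin_two_mul, cos_two_mul]
  linear_combination ((-2:ℝ)*sin β*cos β) * sin_sq_add_cos_sq α +
    ((-2:ℝ)*sin α*cos α) * sin_sq_add_cos_sq β

lemma tri_id (A B : ℝ) :
    sin B + sin (A+B) - sin A = 4 * cos (A/2) * sin (B/2) * cos ((A+B)/2) := by
  obtain ⟨α, rfl⟩ : ∃ x, A = 2*x := ⟨A/2, by ring⟩
  obtain ⟨β, rfl⟩ : ∃ x, B = 2*x := ⟨B/2, by ring⟩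
  rw [show 2*α+2*β = 2*(α+β) by ring, show (2*α : ℝ)/2 = α by ring,
    show (2*β : ℝ)/2 = β by ring, show ((2*(α+β) : ℝ))/2 = α+β by ring]
  simp only [sin_add, cos_add, sin_sub, cos_sub, sin_two_mul, cos_two_mul]
  linear_combination ((-2:ℝ)*sin β*cos β) * sin_sq_add_cos_sq α +
    ((2:ℝ)*sin α*cos α) * sin_sq_add_cos_sq β

lemma tri_id2 (A B : ℝ) :
    sin A + sin (A+B) - sin B = 4 * sin (A/2) * cos (B/2) * cos ((A+B)/2) := by
  obtain ⟨α, rfl⟩ : ∃ x, A = 2*x := ⟨A/2, by ring⟩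
  obtain ⟨β, rfl⟩ : ∃ x, B = 2*x := ⟨B/2, by ring⟩
  rw [show 2*α+2*β = 2*(α+β) by ring, show (2*α : ℝ)/2 = α by ring,
    show (2*β : ℝ)/2 = β by ring, show ((2*(α+β) : ℝ))/2 = α+β by ring]
  simp only [sin_add, cos_add, sin_sub, cos_sub, sin_two_mul, cos_two_mul]
  linear_combination ((2:ℝ)*sin β*cos β) * sin_sq_add_cos_sq α +
    ((-2:ℝ)*sin α*cos α) * sin_sq_add_cos_sq β

lemma tri_id3 (A B : ℝ) :
    sin A + sin B - sin (A+B) = 4 * sin (A/2) * sin (B/2) * sin ((A+B)/2) := by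
  obtain ⟨α, rfl⟩ : ∃ x, A = 2*x := ⟨A/2, by ring⟩
  obtain ⟨β, rfl⟩ : ∃ x, B = 2*x := ⟨B/2, by ring⟩
  rw [show 2*α+2*β = 2*(α+β) by ring, show (2*α : ℝ)/2 = α by ring,
    show (2*β : ℝ)/2 = β by ring, show ((2*(α+β) : ℝ))/2 = α+β by ring]
  simp only [sin_add, cos_add, sin_sub, cos_sub, sin_two_mul, cos_two_mul]
  linear_combination ((-2:ℝ)*sin β*cos β) * sin_sq_add_cos_sq α +
    ((-2:ℝ)*sin α*cos α) * sin_sq_add_cos_sq β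




lemma Qpos {x z : ℝ} (hx : 0 < x) (hxz : x < z) (hz1 : z ≤ 1) :
    0 < x*z - (4*x^2 - 1)*z^2/2 + 5*x^2/2 - 2*x^4 := by
  have hx1 : x < 1 := lt_of_lt_of_le hxz hz1
  have hz0 : 0 < z := hx.trans hxz
  rcases le_or_gt (4*x^2) 1 with h | h
  · nlinarith [mul_pos hx hz0, mul_nonneg (by linarith : (0:ℝ) ≤ 1 - 4*x^2) (sq_nonneg z),
      mul_nonneg (mul_pos hx hx).le (by linarith : (0:ℝ) ≤ 1 - 4*x^2)]
  · have hx2 : x^2 ≤ 1 := by nlinarith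
    have h1 : 0 < 1/2 + x + x^2/2 - 2*x^4 := by
      nlinarith [mul_pos (sub_pos.2 hx1) (by linarith : (0:ℝ) < x + 1/3),
        mul_nonneg (mul_pos hx hx).le (by nlinarith : (0:ℝ) ≤ 1 - x^2)]
    have key : (1-x) * (x*z - (4*x^2-1)*z^2/2 + 5*x^2/2 - 2*x^4)
        = (1-z) * (4*x^2*(1-x^2)) + (z-x) * (1/2 + x + x^2/2 - 2*x^4)
          + (4*x^2-1)/2 * ((1-x) * ((z-x) * (1-z))) := by ring
    nlinarith [mul_nonneg (sub_nonneg.2 hz1) (mul_nonneg (by positivity : (0:ℝ) ≤ 4*x^2) (by nlinarith : (0:ℝ) ≤ 1 - x^2)),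
      mul_pos (sub_pos.2 hxz) h1,
      mul_nonneg (by linarith : (0:ℝ) ≤ (4*x^2-1)/2)
        (mul_nonneg (sub_pos.2 hx1).le (mul_nonneg (sub_pos.2 hxz).le (sub_nonneg.2 hz1))),
      sub_pos.2 hx1]

lemma sin_half_lt {A B : ℝ} (hA : A ∈ Ioo 0 π) (hB : B ∈ Ioo 0 (π - A)) :
    sin (A/2) < sin (A/2 + B) := by
  obtain ⟨hA0, hAπ⟩ := hA; obtain ⟨hB0, hBπ⟩ := hB
  rcases le_or_gt (A/2 + B) (π/2) with h | h
  · exact strictMonoOn_sin (Set.mem_Icc.mpr ⟨by linarith, by linarith⟩)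
      (Set.mem_Icc.mpr ⟨by linarith, h⟩) (by linarith)
  · rw [show sin (A/2 + B) = sin (π - (A/2 + B)) from (sin_pi_sub _).symm]
    exact strictMonoOn_sin (Set.mem_Icc.mpr ⟨by linarith, by linarith⟩)
      (Set.mem_Icc.mpr ⟨by linarith, by linarith⟩) (by linarith)

lemma sin_ge_min {p q x : ℝ} (hp : 0 < p) (hq : q < π) (hpx : p ≤ x) (hxq : x ≤ q) :
    min (sin p) (sin q) ≤ sin x := by
  rcases le_or_gt x (π/2) with h | h
  · refine le_trans (min_le_left _ _) (strictMonoOn_sin.monotoneOn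
      (Set.mem_Icc.mpr ⟨by linarith, by linarith⟩) (Set.mem_Icc.mpr ⟨by linarith, h⟩) hpx)
  · rw [show sin x = sin (π - x) from (sin_pi_sub _).symm]
    refine le_trans (min_le_right _ _) ?_
    rw [show sin q = sin (π - q) from (sin_pi_sub _).symm]
    exact strictMonoOn_sin.monotoneOn (Set.mem_Icc.mpr ⟨by linarith, by linarith⟩)
      (Set.mem_Icc.mpr ⟨by linarith, by linarith⟩) (by linarith)

lemma pos_facts {A B : ℝ} (hA : A ∈ Ioo 0 π) (hB : B ∈ Ioo 0 (π - A)) :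
    0 < sin A ∧ 0 < sin B ∧ 0 < sin (A+B) ∧ 0 < sin (A+B/2) ∧ 0 < sin (A/2+B)
      ∧ 0 < cos ((A-B)/2) ∧ 0 < cos (A/2) := by
  obtain ⟨hA0, hAπ⟩ := hA; obtain ⟨hB0, hBπ⟩ := hB
  refine ⟨sin_pos_of_pos_of_lt_pi hA0 hAπ, sin_pos_of_pos_of_lt_pi hB0 (by linarith),
    sin_pos_of_pos_of_lt_pi (by linarith) (by linarith),
    sin_pos_of_pos_of_lt_pi (by linarith) (by linarith),
    sin_pos_of_pos_of_lt_pi (by linarith) (by linarith),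
    cos_pos_of_mem_Ioo (Set.mem_Ioo.mpr ⟨by linarith, by linarith⟩),
    cos_pos_of_mem_Ioo (Set.mem_Ioo.mpr ⟨by linarith, by linarith⟩)⟩

def rr (A B : ℝ) : ℝ := sin (A+B) * cos ((A-B)/2) / (sin B * sin (A+B/2))

lemma rr_hasDerivAt (A : ℝ) (hA : A ∈ Ioo 0 π) {B : ℝ} (hB : B ∈ Ioo 0 (π - A)) :
    HasDerivAt (rr A)
      (((cos (A+B) * cos ((A-B)/2) + sin (A+B) * sin ((A-B)/2) / 2) * (sin B * sin (A+B/2))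
        - sin (A+B) * cos ((A-B)/2) * (cos B * sin (A+B/2) + sin B * cos (A+B/2) / 2))
        / (sin B * sin (A+B/2))^2) B := by
  obtain ⟨_, hsB, _, hs3, _, _, _⟩ := pos_facts hA hB
  have hne : sin B * sin (A+B/2) ≠ 0 := (mul_pos hsB hs3).ne'
  have hadd : HasDerivAt (fun x : ℝ => A + x) 1 B := (hasDerivAt_id B).const_add A
  have h1 : HasDerivAt (fun x : ℝ => sin (A+x)) (cos (A+B) * 1) B := hadd.sin
  have h2' : HasDerivAt (fun x : ℝ => (A - x)/2) (-1/2) B := by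
    simpa using ((hasDerivAt_id B).const_sub A).div_const 2
  have h2 : HasDerivAt (fun x : ℝ => cos ((A-x)/2)) (-sin ((A-B)/2) * (-1/2)) B := h2'.cos
  have hu := h1.mul h2
  have h3 : HasDerivAt (fun x : ℝ => A + x/2) (1/2) B := by
    simpa using ((hasDerivAt_id B).div_const 2).const_add A
  have h4 : HasDerivAt (fun x : ℝ => sin (A + x/2)) (cos (A+B/2) * (1/2)) B := h3.sin
  have hv := (Real.hasDerivAt_sin B).mul h4
  have hdiv := hu.div hv hne
  have hrr : rr A = fun B => sin (A+B) * cos ((A-B)/2) / (sin B * sin (A+B/2)) := rfl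
  rw [hrr]
  refine hdiv.congr_deriv ?_
  simp only [Pi.mul_apply]
  ring

lemma rr_deriv_neg (A : ℝ) (hA : A ∈ Ioo 0 π) {B : ℝ} (hB : B ∈ Ioo 0 (π - A)) :
    deriv (rr A) B < 0 := by
  rw [(rr_hasDerivAt A hA hB).deriv]
  obtain ⟨_, hsB, _, hs3, hs4, _, hcα⟩ := pos_facts hA hB
  apply div_neg_of_neg_of_pos
  · have hk := key_id A B
    have hq : 0 < sin (A/2) * sin (A/2+B) - (4*sin (A/2)^2 - 1) * sin (A/2+B)^2/2
        + 5*sin (A/2)^2/2 - 2*sin (A/2)^4 := by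
      refine Qpos ?_ (sin_half_lt hA hB) (sin_le_one _)
      exact sin_pos_of_pos_of_lt_pi (by linarith [hA.1]) (by linarith [hA.2, pi_pos])
    nlinarith [mul_pos hcα hq]
  · positivity

lemma rr_anti (A : ℝ) (hA : A ∈ Ioo 0 π) : StrictAntiOn (rr A) (Ioo 0 (π - A)) := by
  apply strictAntiOn_of_deriv_neg (convex_Ioo _ _)
  · intro B hB
    exact (rr_hasDerivAt A hA hB).continuousAt.continuousWithinAt
  · intro B hB
    rw [interior_Ioo] at hB
    exact rr_deriv_neg A hA hB

lemma rr_exists (A : ℝ) (hA : A ∈ Ioo 0 π) {k : ℝ} (hk : 0 < k) :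
    ∃ B ∈ Ioo 0 (π - A), rr A B = k := by
  obtain ⟨hA0, hAπ⟩ := hA
  set g : ℝ → ℝ := fun B => sin (A+B) * cos ((A-B)/2) - k * (sin B * sin (A+B/2)) with hg
  have hgc : ContinuousOn g (Icc 0 (π - A)) := by
    apply Continuous.continuousOn
    fun_prop
  have hg0 : 0 < g 0 := by
    have : g 0 = sin A * cos (A/2) := by simp [hg]
    rw [this]
    exact mul_pos (sin_pos_of_pos_of_lt_pi hA0 hAπ)
      (cos_pos_of_mem_Ioo (Set.mem_Ioo.mpr ⟨by linarith, by linarith⟩))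
  have hgπ : g (π - A) < 0 := by
    have e1 : g (π - A) = -(k * (sin A * cos (A/2))) := by
      rw [hg]
      dsimp only
      rw [show A + (π - A) = π by ring, Real.sin_pi, zero_mul, zero_sub,
        show A + (π - A)/2 = π/2 + A/2 by ring, sin_add, Real.sin_pi_div_two,
        Real.cos_pi_div_two, sin_pi_sub]
      ring
    rw [e1, neg_lt_zero]
    exact mul_pos hk (mul_pos (sin_pos_of_pos_of_lt_pi hA0 hAπ)
      (cos_pos_of_mem_Ioo (Set.mem_Ioo.mpr ⟨by linarith, by linarith⟩)))
  obtain ⟨B, hBmem, hgB⟩ := intermediate_value_Icc' (by linarith : (0:ℝ) ≤ π - A) hgc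
    (Set.mem_Icc.mpr ⟨hgπ.le, hg0.le⟩)
  have hB0 : B ≠ 0 := by intro h; rw [h] at hgB; linarith
  have hBπ' : B ≠ π - A := by intro h; rw [h] at hgB; linarith
  have hBIoo : B ∈ Ioo 0 (π - A) :=
    ⟨lt_of_le_of_ne hBmem.1 (Ne.symm hB0), lt_of_le_of_ne hBmem.2 hBπ'⟩
  refine ⟨B, hBIoo, ?_⟩
  obtain ⟨_, hsB, _, hs3, _, _, _⟩ := pos_facts ⟨hA0, hAπ⟩ hBIoo
  show sin (A+B) * cos ((A-B)/2) / (sin B * sin (A+B/2)) = k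
  rw [div_eq_iff (mul_pos hsB hs3).ne']
  simp only [hg] at hgB
  linarith

open Classical in
def Bsol (A k : ℝ) : ℝ := if h : ∃ B ∈ Ioo 0 (π - A), rr A B = k then h.choose else 0

lemma Bsol_spec {A k : ℝ} (hA : A ∈ Ioo 0 π) (hk : 0 < k) :
    Bsol A k ∈ Ioo 0 (π - A) ∧ rr A (Bsol A k) = k := by
  have h := rr_exists A hA hk
  rw [Bsol, dif_pos h]
  exact h.choose_spec

lemma lt_Bsol {A k p : ℝ} (hA : A ∈ Ioo 0 π) (hk : 0 < k) (hp : p ∈ Ioo 0 (π - A))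
    (hrp : k < rr A p) : p < Bsol A k := by
  obtain ⟨hmem, hval⟩ := Bsol_spec hA hk
  by_contra hle
  push_neg at hle
  rcases eq_or_lt_of_le hle with h | h
  · rw [← h, hval] at hrp; exact lt_irrefl _ hrp
  · have := rr_anti A hA hmem hp h
    rw [hval] at this; linarith

lemma Bsol_lt {A k q : ℝ} (hA : A ∈ Ioo 0 π) (hk : 0 < k) (hq : q ∈ Ioo 0 (π - A))
    (hrq : rr A q < k) : Bsol A k < q := by
  obtain ⟨hmem, hval⟩ := Bsol_spec hA hk
  by_contra hle
  push_neg at hle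
  rcases eq_or_lt_of_le hle with h | h
  · rw [h, hval] at hrq; exact lt_irrefl _ hrq
  · have := rr_anti A hA hq hmem h
    rw [hval] at this; linarith




















lemma rr_contA {b A₀ : ℝ} (hne : sin b * sin (A₀ + b/2) ≠ 0) :
    ContinuousAt (fun A => rr A b) A₀ := by
  apply ContinuousAt.div
  · fun_prop
  · fun_prop
  · exact hne

set_option maxHeartbeats 1600000 in
lemma Bsol_continuousAt {k : ℝ} (hk : 0 < k) {A₀ : ℝ} (hA₀ : A₀ ∈ Ioo 0 π) :
    ContinuousAt (fun A => Bsol A k) A₀ := by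
  obtain ⟨hmem, hval⟩ := Bsol_spec hA₀ hk
  rw [Metric.continuousAt_iff]
  intro ε hε
  set B₀ := Bsol A₀ k with hB₀def
  have hA₀0 : 0 < A₀ := hA₀.1
  have hA₀π : A₀ < π := hA₀.2
  have hB₀0 : 0 < B₀ := hmem.1
  have hB₀π : B₀ < π - A₀ := hmem.2
  set ε' := min (ε/2) (min (B₀/2) ((π - A₀ - B₀)/4)) with hε'def
  have hε'0 : 0 < ε' :=
    lt_min (by linarith) (lt_min (by linarith) (by linarith))
  have hε'1 : ε' ≤ ε/2 := min_le_left _ _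
  have hε'2 : ε' ≤ B₀/2 := le_trans (min_le_right _ _) (min_le_left _ _)
  have hε'3 : ε' ≤ (π - A₀ - B₀)/4 := le_trans (min_le_right _ _) (min_le_right _ _)
  have hp : B₀ - ε' ∈ Ioo 0 (π - A₀) := ⟨by linarith, by linarith⟩
  have hq : B₀ + ε' ∈ Ioo 0 (π - A₀) := ⟨by linarith, by linarith⟩
  have hrp : k < rr A₀ (B₀ - ε') := by
    have := rr_anti A₀ hA₀ hp hmem (by linarith)
    rw [hval] at this; exact this
  have hrq : rr A₀ (B₀ + ε') < k := by
    have := rr_anti A₀ hA₀ hmem hq (by linarith)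
    rw [hval] at this; exact this
  have hcp : ContinuousAt (fun A => rr A (B₀ - ε')) A₀ := by
    obtain ⟨_, hsb, _, hs3, _, _, _⟩ := pos_facts hA₀ hp
    exact rr_contA (mul_pos hsb hs3).ne'
  have hcq : ContinuousAt (fun A => rr A (B₀ + ε')) A₀ := by
    obtain ⟨_, hsb, _, hs3, _, _, _⟩ := pos_facts hA₀ hq
    exact rr_contA (mul_pos hsb hs3).ne'
  have ev1 : ∀ᶠ A in nhds A₀, k < rr A (B₀ - ε') := hcp.eventually (eventually_gt_nhds hrp)
  have ev2 : ∀ᶠ A in nhds A₀, rr A (B₀ + ε') < k := hcq.eventually (eventually_lt_nhds hrq)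
  have ev3 : ∀ᶠ A in nhds A₀, A ∈ Ioo 0 π :=
    Filter.eventually_mem_set.mpr (isOpen_Ioo.mem_nhds hA₀)
  have ev4 : ∀ᶠ A in nhds A₀, A ∈ Iio (π - (B₀ + ε')) :=
    Filter.eventually_mem_set.mpr (isOpen_Iio.mem_nhds
      (show A₀ ∈ Iio (π - (B₀ + ε')) from by rw [mem_Iio]; linarith [hq.2]))
  obtain ⟨δ, hδ0, hδ⟩ := Metric.eventually_nhds_iff.mp ((ev1.and ev2).and (ev3.and ev4))
  refine ⟨δ, hδ0, ?_⟩
  intro A hdist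
  obtain ⟨⟨h1, h2⟩, h3, h4⟩ := hδ hdist
  have hq' : (B₀ + ε') ∈ Ioo 0 (π - A) := ⟨by linarith, by
    have := mem_Iio.mp h4; linarith⟩
  have hp' : (B₀ - ε') ∈ Ioo 0 (π - A) := ⟨hp.1, by linarith [hq'.2]⟩
  have hgt := lt_Bsol h3 hk hp' h1
  have hlt := Bsol_lt h3 hk hq' h2
  show dist (Bsol A k) B₀ < ε
  rw [Real.dist_eq, abs_lt]
  constructor <;> linarith

def hf (k A : ℝ) : ℝ :=
  sin (Bsol A k) * sin (A + (Bsol A k)/2) / (sin A * sin (A/2 + Bsol A k))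

set_option maxHeartbeats 1600000 in
lemma hf_continuousAt {k : ℝ} (hk : 0 < k) {A₀ : ℝ} (hA₀ : A₀ ∈ Ioo 0 π) :
    ContinuousAt (hf k) A₀ := by
  obtain ⟨hmem, _⟩ := Bsol_spec hA₀ hk
  obtain ⟨hsA, hsB, _, _, hs4, _, _⟩ := pos_facts hA₀ hmem
  have hBc : ContinuousAt (fun A => Bsol A k) A₀ := Bsol_continuousAt hk hA₀
  have h1 : ContinuousAt (fun A => sin (Bsol A k)) A₀ :=
    Real.continuous_sin.continuousAt.comp hBc
  have h2 : ContinuousAt (fun A => sin (A + (Bsol A k)/2)) A₀ :=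
    Real.continuous_sin.continuousAt.comp (continuousAt_id.add (hBc.div_const 2))
  have h3 : ContinuousAt (fun A => sin (A/2 + Bsol A k)) A₀ :=
    Real.continuous_sin.continuousAt.comp ((continuousAt_id.div_const 2).add hBc)
  exact (h1.mul h2).div (Real.continuous_sin.continuousAt.mul h3)
    (ne_of_gt (mul_pos hsA hs4))

set_option maxHeartbeats 1600000 in
lemma exists_A1 {k H : ℝ} (hk : 0 < k) (hH : 0 < H) :
    ∃ A₁ : ℝ, A₁ ∈ Ioo 0 π ∧ A₁ ≤ 1 ∧ H < hf k A₁ := by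
  have hπ3 := pi_gt_three
  set t := 1/k with htdef
  have ht : 0 < t := by positivity
  set Bm := arctan t with hBmdef
  set Bp := arctan t + π/2 with hBpdef
  have h1 : 0 < Bm := by
    rw [hBmdef, ← Real.arctan_zero]
    exact Real.arctan_strictMono ht
  have h2 : Bm < π/2 := Real.arctan_lt_pi_div_two t
  have hBppi : Bp < π := by rw [hBpdef]; linarith
  have hBmBp : Bm < Bp := by rw [hBpdef]; linarith
  have h1Bp : 1 + Bp/2 < π := by rw [hBpdef]; linarith [h2]
  have hrr0 : ∀ b : ℝ, 0 < b → b < π → rr 0 b = cos (b/2) / sin (b/2) := by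
    intro b hb0 hbπ
    have hsb : sin b ≠ 0 := (sin_pos_of_pos_of_lt_pi hb0 hbπ).ne'
    show sin (0+b) * cos ((0-b)/2) / (sin b * sin (0+b/2)) = _
    rw [zero_add, zero_add, show (0-b)/2 = -(b/2) by ring, Real.cos_neg]
    exact mul_div_mul_left _ _ hsb
  have hsm2 : 0 < sin (Bm/2) := sin_pos_of_pos_of_lt_pi (by linarith) (by linarith)
  have hcm2 : 0 < cos (Bm/2) :=
    cos_pos_of_mem_Ioo (Set.mem_Ioo.mpr ⟨by linarith, by linarith⟩)
  have hsp2 : 0 < sin (Bp/2) := sin_pos_of_pos_of_lt_pi (by linarith) (by linarith)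
  have hcp2 : 0 < cos (Bp/2) :=
    cos_pos_of_mem_Ioo (Set.mem_Ioo.mpr ⟨by linarith, by linarith⟩)
  have htanm : tan (Bm/2) < t := by
    have h := Real.strictMonoOn_tan (Set.mem_Ioo.mpr ⟨by linarith, by linarith⟩)
      (Set.mem_Ioo.mpr ⟨by linarith, by linarith⟩) (show Bm/2 < Bm by linarith)
    rwa [hBmdef, Real.tan_arctan] at h
  have htanp : t < tan (Bp/2) := by
    have h := Real.strictMonoOn_tan (Set.mem_Ioo.mpr ⟨by linarith, by linarith⟩)
      (Set.mem_Ioo.mpr ⟨by linarith, by linarith⟩)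
      (show Bm < Bp/2 by rw [hBpdef]; linarith)
    rwa [hBmdef, Real.tan_arctan] at h
  clear_value t Bm Bp
  have hr1 : k < rr 0 Bm := by
    rw [hrr0 Bm h1 (by linarith), lt_div_iff₀ hsm2]
    rw [Real.tan_eq_sin_div_cos, div_lt_iff₀ hcm2] at htanm
    have h5 : k * (t * cos (Bm/2)) = cos (Bm/2) := by
      rw [htdef]; field_simp
    nlinarith
  have hr2 : rr 0 Bp < k := by
    rw [hrr0 Bp (by linarith) hBppi, div_lt_iff₀ hsp2]
    rw [Real.tan_eq_sin_div_cos, lt_div_iff₀ hcp2] at htanp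
    have h5 : k * (t * cos (Bp/2)) = cos (Bp/2) := by
      rw [htdef]; field_simp
    nlinarith
  have hcm : ContinuousAt (fun A => rr A Bm) 0 := by
    apply rr_contA
    rw [zero_add]
    exact (mul_pos (sin_pos_of_pos_of_lt_pi h1 (by linarith)) hsm2).ne'
  have hcp : ContinuousAt (fun A => rr A Bp) 0 := by
    apply rr_contA
    rw [zero_add]
    exact (mul_pos (sin_pos_of_pos_of_lt_pi (by linarith) hBppi) hsp2).ne'
  have ev1 : ∀ᶠ A in nhds (0:ℝ), k < rr A Bm := hcm.eventually (eventually_gt_nhds hr1)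
  have ev2 : ∀ᶠ A in nhds (0:ℝ), rr A Bp < k := hcp.eventually (eventually_lt_nhds hr2)
  obtain ⟨δ, hδ0, hδ⟩ := Metric.eventually_nhds_iff.mp (ev1.and ev2)
  set m₁ := min (sin Bm) (sin Bp) with hm₁def
  have hm₁0 : 0 < m₁ := lt_min (sin_pos_of_pos_of_lt_pi h1 (by linarith))
    (sin_pos_of_pos_of_lt_pi (by linarith) hBppi)
  set m₂ := min (sin (Bm/2)) (sin (1 + Bp/2)) with hm₂def
  have hm₂0 : 0 < m₂ := lt_min hsm2 (sin_pos_of_pos_of_lt_pi (by linarith) h1Bp)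
  clear_value m₁ m₂
  set A₁ := min (min (δ/2) ((π - Bp)/2)) (min 1 (m₁*m₂/(2*(H+1)))) with hA₁def
  have hA₁0 : 0 < A₁ := by
    apply lt_min (lt_min (by linarith) (by linarith))
    exact lt_min one_pos (by positivity)
  have hA₁1 : A₁ ≤ 1 := le_trans (min_le_right _ _) (min_le_left _ _)
  have hA₁δ : A₁ ≤ δ/2 := le_trans (min_le_left _ _) (min_le_left _ _)
  have hA₁Bp : A₁ ≤ (π - Bp)/2 := le_trans (min_le_left _ _) (min_le_right _ _)
  have hA₁m : A₁ ≤ m₁*m₂/(2*(H+1)) := le_trans (min_le_right _ _) (min_le_right _ _)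
  clear_value A₁
  have hA₁mem : A₁ ∈ Ioo 0 π := ⟨hA₁0, by linarith⟩
  refine ⟨A₁, hA₁mem, hA₁1, ?_⟩
  have hdist : dist A₁ (0:ℝ) < δ := by
    rw [Real.dist_eq, sub_zero, abs_of_pos hA₁0]; linarith
  obtain ⟨h1', h2'⟩ := hδ hdist
  have hBpmem : Bp ∈ Ioo 0 (π - A₁) := ⟨by linarith, by linarith⟩
  have hBmmem : Bm ∈ Ioo 0 (π - A₁) := ⟨h1, by linarith⟩
  have hgt := lt_Bsol hA₁mem hk hBmmem h1'
  have hlt := Bsol_lt hA₁mem hk hBpmem h2'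
  obtain ⟨hmemB, _⟩ := Bsol_spec hA₁mem hk
  obtain ⟨hsA, hsB, _, hs3, hs4, _, _⟩ := pos_facts hA₁mem hmemB
  have hnum1 : m₁ ≤ sin (Bsol A₁ k) := by
    rw [hm₁def]; exact sin_ge_min h1 hBppi hgt.le hlt.le
  have hnum2 : m₂ ≤ sin (A₁ + (Bsol A₁ k)/2) := by
    rw [hm₂def]
    exact sin_ge_min (by linarith) h1Bp (by linarith [hmemB.1]) (by linarith)
  simp only [hf]
  rw [lt_div_iff₀ (mul_pos hsA hs4)]
  have c1 : m₁ * m₂ ≤ sin (Bsol A₁ k) * sin (A₁ + (Bsol A₁ k)/2) :=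
    mul_le_mul hnum1 hnum2 hm₂0.le hsB.le
  have hsinA₁ : sin A₁ ≤ A₁ := (Real.sin_lt hA₁0).le
  have hs4le : sin (A₁/2 + Bsol A₁ k) ≤ 1 := sin_le_one _
  clear hδ hrr0 hcm hcp ev1 ev2 htanm htanp
  have c2 : sin A₁ * sin (A₁/2 + Bsol A₁ k) ≤ A₁ := by
    have := mul_le_mul_of_nonneg_left hs4le hsA.le
    rw [mul_one] at this
    linarith
  have c3 : H * A₁ < m₁ * m₂ := by
    have e1 : H * A₁ ≤ H * (m₁*m₂/(2*(H+1))) := mul_le_mul_of_nonneg_left hA₁m hH.le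
    have e2 : H * (m₁*m₂/(2*(H+1))) < m₁*m₂ := by
      rw [mul_div_assoc', div_lt_iff₀ (by linarith : (0:ℝ) < 2*(H+1))]
      nlinarith [mul_pos hm₁0 hm₂0]
    linarith
  calc H * (sin A₁ * sin (A₁/2 + Bsol A₁ k)) ≤ H * A₁ := mul_le_mul_of_nonneg_left c2 hH.le
  _ < m₁ * m₂ := c3
  _ ≤ sin (Bsol A₁ k) * sin (A₁ + (Bsol A₁ k)/2) := c1

set_option maxHeartbeats 1600000 in
lemma exists_A2 {k H : ℝ} (hk : 0 < k) (hH : 0 < H) :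
    ∃ A₂ : ℝ, A₂ ∈ Ioo 0 π ∧ π - 1 ≤ A₂ ∧ hf k A₂ < H := by
  have hπ3 := pi_gt_three
  set x₂ := min 1 (H/3) with hx₂def
  have hx₂0 : 0 < x₂ := lt_min one_pos (by positivity)
  have hx₂1 : x₂ ≤ 1 := min_le_left _ _
  have hx₂H : (8/3) * x₂ < H := by
    rcases le_total (1:ℝ) (H/3) with h | h
    · rw [hx₂def, min_eq_left h]; linarith
    · rw [hx₂def, min_eq_right h]; linarith
  clear_value x₂
  set A₂ := π - x₂ with hA₂def
  clear_value A₂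
  have hA₂mem : A₂ ∈ Ioo 0 π := ⟨by linarith, by linarith⟩
  obtain ⟨hmemB, _⟩ := Bsol_spec hA₂mem hk
  obtain ⟨hsA, hsB, _, hs3, hs4, _, _⟩ := pos_facts hA₂mem hmemB
  have hB0 : 0 < Bsol A₂ k := hmemB.1
  have hBx : Bsol A₂ k < x₂ := by linarith [hmemB.2]
  refine ⟨A₂, hA₂mem, by rw [hA₂def]; linarith, ?_⟩
  have hn1 : sin (Bsol A₂ k) ≤ Bsol A₂ k := (Real.sin_lt hB0).le
  have hn2 : sin (A₂ + (Bsol A₂ k)/2) ≤ x₂ := by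
    rw [show sin (A₂ + (Bsol A₂ k)/2) = sin (π - (A₂ + (Bsol A₂ k)/2)) from (sin_pi_sub _).symm]
    have hpos : 0 < π - (A₂ + (Bsol A₂ k)/2) := by linarith
    calc sin (π - (A₂ + (Bsol A₂ k)/2)) ≤ π - (A₂ + (Bsol A₂ k)/2) := (Real.sin_lt hpos).le
    _ ≤ x₂ := by linarith
  have hd1 : (3/4) * x₂ < sin A₂ := by
    rw [hA₂def, sin_pi_sub]
    have := Real.sin_gt_sub_cube hx₂0
    nlinarith [mul_nonneg hx₂0.le (sub_nonneg.2 hx₂1),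
      mul_nonneg (mul_nonneg hx₂0.le hx₂0.le) (sub_nonneg.2 hx₂1)]
  have hd2 : (1/2 : ℝ) ≤ sin (A₂/2 + Bsol A₂ k) := by
    have hhalf : sin (π/6) ≤ sin (A₂/2) := by
      apply strictMonoOn_sin.monotoneOn (Set.mem_Icc.mpr ⟨by linarith, by linarith⟩)
        (Set.mem_Icc.mpr ⟨by linarith [hA₂mem.1], by linarith [hA₂mem.2]⟩)
      linarith
    rw [Real.sin_pi_div_six] at hhalf
    have := sin_half_lt hA₂mem hmemB
    linarith
  simp only [hf]
  rw [div_lt_iff₀ (mul_pos hsA hs4)]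
  have hnum : sin (Bsol A₂ k) * sin (A₂ + (Bsol A₂ k)/2) < x₂ * x₂ := by nlinarith
  have hden : x₂ * x₂ < H * (sin A₂ * sin (A₂/2 + Bsol A₂ k)) := by
    have e1 : (3/8) * x₂ < sin A₂ * sin (A₂/2 + Bsol A₂ k) := by nlinarith
    nlinarith
  linarith


end BisEx

set_option maxHeartbeats 1600000 in
theorem exists_sides_with_prescribed_bisectors (l₁ l₂ l₃ : ℝ)
    (h₁ : 0 < l₁) (h₂ : 0 < l₂) (h₃ : 0 < l₃) :
    ∃ a b c : ℝ, 0 < a ∧ 0 < b ∧ 0 < c ∧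
      a < b + c ∧ b < c + a ∧ c < a + b ∧
      Real.sqrt (b * c * ((b + c) ^ 2 - a ^ 2)) / (b + c) = l₁ ∧
      Real.sqrt (c * a * ((c + a) ^ 2 - b ^ 2)) / (c + a) = l₂ ∧
      Real.sqrt (a * b * ((a + b) ^ 2 - c ^ 2)) / (a + b) = l₃ := by
  have hk : 0 < l₂/l₃ := by positivity
  have hH : 0 < l₁/l₂ := by positivity
  obtain ⟨A₁, hA₁mem, hA₁1, hA₁gt⟩ := BisEx.exists_A1 hk hH
  obtain ⟨A₂, hA₂mem, hA₂ge, hA₂lt⟩ := BisEx.exists_A2 hk hH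
  have hπ3 := Real.pi_gt_three
  have hA₁A₂ : A₁ ≤ A₂ := by linarith
  have hsub : Icc A₁ A₂ ⊆ Ioo 0 π := fun x hx =>
    ⟨lt_of_lt_of_le hA₁mem.1 hx.1, lt_of_le_of_lt hx.2 hA₂mem.2⟩
  have hcont : ContinuousOn (BisEx.hf (l₂/l₃)) (Icc A₁ A₂) := fun x hx =>
    (BisEx.hf_continuousAt hk (hsub hx)).continuousWithinAt
  obtain ⟨A, hAmem, hfA⟩ := intermediate_value_Icc' hA₁A₂ hcont
    (Set.mem_Icc.mpr ⟨hA₂lt.le, hA₁gt.le⟩)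
  have hA : A ∈ Ioo 0 π := hsub hAmem
  obtain ⟨hBmem, hBrr⟩ := BisEx.Bsol_spec hA hk
  simp only [BisEx.hf] at hfA
  simp only [BisEx.rr] at hBrr
  set B := BisEx.Bsol A (l₂/l₃) with hBdef
  clear_value B
  obtain ⟨hsA, hsB, hsC, hs3, hs4, hc1, hcα⟩ := BisEx.pos_facts hA hBmem
  have hA0 := hA.1; have hAπ := hA.2; have hB0 := hBmem.1; have hBπ := hBmem.2
  have hcβ : 0 < cos (B/2) :=
    Real.cos_pos_of_mem_Ioo (Set.mem_Ioo.mpr ⟨by linarith, by linarith⟩)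
  have hsγ : 0 < sin ((A+B)/2) := Real.sin_pos_of_pos_of_lt_pi (by linarith) (by linarith)
  have hcγ : 0 < cos ((A+B)/2) :=
    Real.cos_pos_of_mem_Ioo (Set.mem_Ioo.mpr ⟨by linarith, by linarith⟩)
  have hsβ : 0 < sin (B/2) := Real.sin_pos_of_pos_of_lt_pi (by linarith) (by linarith)
  have hsα : 0 < sin (A/2) := Real.sin_pos_of_pos_of_lt_pi (by linarith) (by linarith)
  have key1 : sin B * sin (A + B/2) * l₂ = l₁ * (sin A * sin (A/2 + B)) := by
    rw [div_eq_div_iff (mul_pos hsA hs4).ne' h₂.ne'] at hfA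
    exact hfA
  have key2 : sin (A+B) * cos ((A-B)/2) * l₃ = l₂ * (sin B * sin (A + B/2)) := by
    rw [div_eq_div_iff (mul_pos hsB hs3).ne' h₃.ne'] at hBrr
    exact hBrr
  set μ := l₁ * sin (A/2 + B) / (sin B * sin (A+B)) with hμdef
  have hμ : 0 < μ := by
    rw [hμdef]
    exact div_pos (mul_pos h₁ hs4) (mul_pos hsB hsC)
  have hl1 : μ * (sin B * sin (A+B)) = l₁ * sin (A/2+B) := by
    rw [hμdef]
    exact div_mul_cancel₀ _ (mul_pos hsB hsC).ne'
  clear_value μ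
  have h5 : μ * (sin A * sin (A+B)) * sin B = l₂ * sin (A+B/2) * sin B := by
    linear_combination sin A * hl1 - key1
  have hl2 : μ * (sin A * sin (A+B)) = l₂ * sin (A+B/2) := mul_right_cancel₀ hsB.ne' h5
  have h6 : μ * (sin A * sin B) * sin (A+B) = l₃ * cos ((A-B)/2) * sin (A+B) := by
    linear_combination sin A * hl1 - key1 - key2
  have hl3 : μ * (sin A * sin B) = l₃ * cos ((A-B)/2) := mul_right_cancel₀ hsC.ne' h6
  refine ⟨μ * sin A, μ * sin B, μ * sin (A+B), mul_pos hμ hsA, mul_pos hμ hsB,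
    mul_pos hμ hsC, ?_, ?_, ?_, ?_, ?_, ?_⟩
  · have e := congrArg (fun x => μ * x) (BisEx.tri_id A B)
    have epos : 0 < μ * (4 * cos (A/2) * sin (B/2) * cos ((A+B)/2)) :=
      mul_pos hμ (mul_pos (mul_pos (mul_pos four_pos hcα) hsβ) hcγ)
    have e2 : μ * sin B + μ * sin (A+B) - μ * sin A
        = μ * (4 * cos (A/2) * sin (B/2) * cos ((A+B)/2)) := by
      linear_combination μ * BisEx.tri_id A B
    linarith
  · have epos : 0 < μ * (4 * sin (A/2) * cos (B/2) * cos ((A+B)/2)) :=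
      mul_pos hμ (mul_pos (mul_pos (mul_pos four_pos hsα) hcβ) hcγ)
    have e2 : μ * sin A + μ * sin (A+B) - μ * sin B
        = μ * (4 * sin (A/2) * cos (B/2) * cos ((A+B)/2)) := by
      linear_combination μ * BisEx.tri_id2 A B
    linarith
  · have epos : 0 < μ * (4 * sin (A/2) * sin (B/2) * sin ((A+B)/2)) :=
      mul_pos hμ (mul_pos (mul_pos (mul_pos four_pos hsα) hsβ) hsγ)
    have e2 : μ * sin A + μ * sin B - μ * sin (A+B)
        = μ * (4 * sin (A/2) * sin (B/2) * sin ((A+B)/2)) := by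
      linear_combination μ * BisEx.tri_id3 A B
    linarith
  · have e1 : μ * sin B * (μ * sin (A+B)) * ((μ * sin B + μ * sin (A+B))^2 - (μ * sin A)^2)
        = (2*μ^2*sin B*sin (A+B)*cos (A/2))^2 := by
      linear_combination (μ^4 * sin B * sin (A+B)) * BisEx.sum_sq_id A B
    rw [e1, Real.sqrt_sq (mul_pos (mul_pos (mul_pos
      (mul_pos two_pos (pow_pos hμ 2)) hsB) hsC) hcα).le]
    have e2 : μ * sin B + μ * sin (A+B) = μ * (2 * cos (A/2) * sin (A/2+B)) := by
      linear_combination μ * BisEx.sum_id A B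
    rw [e2, div_eq_iff (mul_pos hμ (mul_pos (mul_pos two_pos hcα) hs4)).ne']
    linear_combination (2*μ*cos (A/2)) * hl1
  · have e1 : μ * sin (A+B) * (μ * sin A) * ((μ * sin (A+B) + μ * sin A)^2 - (μ * sin B)^2)
        = (2*μ^2*sin A*sin (A+B)*cos (B/2))^2 := by
      linear_combination (μ^4 * sin A * sin (A+B)) * BisEx.sum_sq_id2 A B
    rw [e1, Real.sqrt_sq (mul_pos (mul_pos (mul_pos
      (mul_pos two_pos (pow_pos hμ 2)) hsA) hsC) hcβ).le]
    have e2 : μ * sin (A+B) + μ * sin A = μ * (2 * cos (B/2) * sin (A+B/2)) := by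
      linear_combination μ * BisEx.sum_id2 A B
    rw [e2, div_eq_iff (mul_pos hμ (mul_pos (mul_pos two_pos hcβ) hs3)).ne']
    linear_combination (2*μ*cos (B/2)) * hl2
  · have e1 : μ * sin A * (μ * sin B) * ((μ * sin A + μ * sin B)^2 - (μ * sin (A+B))^2)
        = (2*μ^2*sin A*sin B*sin ((A+B)/2))^2 := by
      linear_combination (μ^4 * sin A * sin B) * BisEx.sum_sq_id3 A B
    rw [e1, Real.sqrt_sq (mul_pos (mul_pos (mul_pos
      (mul_pos two_pos (pow_pos hμ 2)) hsA) hsB) hsγ).le]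
    have e2 : μ * sin A + μ * sin B = μ * (2 * sin ((A+B)/2) * cos ((A-B)/2)) := by
      linear_combination μ * BisEx.sum_id3 A B
    rw [e2, div_eq_iff (mul_pos hμ (mul_pos (mul_pos two_pos hsγ) hc1)).ne']
    linear_combination (2*μ*sin ((A+B)/2)) * hl3

end
end

section
/- For any real numbers l₁, l₂ with 0 < l₂ < l₁, there exist noncollinear points A, B, C in EuclideanSpace ℝ (Fin 2) with dist A B = dist C B (an isosceles triangle with apex B) such that t_B = l₁ and t_A = t_C = l₂. -/
open EuclideanGeometry Real

/-- A point of the Euclidean plane with given coordinates. -/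
noncomputable def pt (a b : ℝ) : EuclideanSpace ℝ (Fin 2) := !₂[a,b]

lemma dist_pt (a b c d : ℝ) : dist (pt a b) (pt c d) = Real.sqrt ((a-c)^2 + (b-d)^2) := by
  rw [EuclideanSpace.dist_eq]
  simp [pt, Fin.sum_univ_two, Real.dist_eq, sq_abs]

lemma combo_pt (s t a b c d : ℝ) : s • pt a b + t • pt c d = pt (s*a+t*c) (s*b+t*d) := by
  ext i; fin_cases i <;> simp [pt]

/-- The length of the bisector from a base vertex of the isosceles triangle
`(-x,0), (0,l), (x,0)`, as an explicit function. -/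
noncomputable def Faux (l x : ℝ) : ℝ :=
  Real.sqrt ((x + Real.sqrt (x^2 + l^2) * x / (2*x + Real.sqrt (x^2 + l^2)))^2
    + (2*x*l / (2*x + Real.sqrt (x^2 + l^2)))^2)

lemma sqrt_pos' (l x : ℝ) (hl : 0 < l) : l ≤ Real.sqrt (x^2 + l^2) := by
  have h := Real.sqrt_le_sqrt (show l^2 ≤ x^2 + l^2 by nlinarith)
  rwa [Real.sqrt_sq hl.le] at h

lemma blA (l x : ℝ) (hl : 0 < l) (hx : 0 ≤ x) :
    bisectorLength (pt (-x) 0) (pt 0 l) (pt x 0) = Faux l x := by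
  have hca : dist (pt x 0) (pt (-x) 0) = 2*x := by
    rw [dist_pt]; rw [show (x - -x)^2 + (0-(0:ℝ))^2 = (2*x)^2 by ring, Real.sqrt_sq (by linarith)]
  have hab : dist (pt (-x) 0) (pt 0 l) = Real.sqrt (x^2 + l^2) := by
    rw [dist_pt]; ring_nf
  set c := Real.sqrt (x^2 + l^2) with hc
  have hs : 0 < 2*x + c := by have := sqrt_pos' l x hl; linarith
  rw [bisectorLength, hca, hab, combo_pt, dist_pt, Faux, ← hc]
  have hs' : 2*x + c ≠ 0 := hs.ne'
  congr 1
  field_simp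
  ring_nf
  rw [inv_pow]
  ring

lemma blC (l x : ℝ) (hl : 0 < l) (hx : 0 ≤ x) :
    bisectorLength (pt x 0) (pt (-x) 0) (pt 0 l) = Faux l x := by
  have hbc : dist (pt 0 l) (pt x 0) = Real.sqrt (x^2 + l^2) := by
    rw [dist_pt]; ring_nf
  have hca : dist (pt x 0) (pt (-x) 0) = 2*x := by
    rw [dist_pt]; rw [show (x - -x)^2 + (0-(0:ℝ))^2 = (2*x)^2 by ring, Real.sqrt_sq (by linarith)]
  set c := Real.sqrt (x^2 + l^2) with hc
  have hs : 0 < 2*x + c := by have := sqrt_pos' l x hl; linarith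
  rw [bisectorLength, hbc, hca, combo_pt, dist_pt, Faux, ← hc]
  have hs' : 2*x + c ≠ 0 := hs.ne'
  congr 1
  field_simp
  ring_nf
  rw [inv_pow]
  ring

lemma blB (l x : ℝ) (hl : 0 ≤ l) :
    bisectorLength (pt 0 l) (pt x 0) (pt (-x) 0) = l := by
  have hab : dist (pt (-x) 0) (pt 0 l) = Real.sqrt (x^2 + l^2) := by
    rw [dist_pt]; ring_nf
  have hbc : dist (pt 0 l) (pt x 0) = Real.sqrt (x^2 + l^2) := by
    rw [dist_pt]; ring_nf
  rw [bisectorLength, hab, hbc, combo_pt, dist_pt]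
  rw [show (0 - (Real.sqrt (x ^ 2 + l ^ 2) / (Real.sqrt (x ^ 2 + l ^ 2) + Real.sqrt (x ^ 2 + l ^ 2)) * x +
      Real.sqrt (x ^ 2 + l ^ 2) / (Real.sqrt (x ^ 2 + l ^ 2) + Real.sqrt (x ^ 2 + l ^ 2)) * -x))^2 = 0 by ring]
  rw [show l - (Real.sqrt (x ^ 2 + l ^ 2) / (Real.sqrt (x ^ 2 + l ^ 2) + Real.sqrt (x ^ 2 + l ^ 2)) * 0 +
      Real.sqrt (x ^ 2 + l ^ 2) / (Real.sqrt (x ^ 2 + l ^ 2) + Real.sqrt (x ^ 2 + l ^ 2)) * 0) = l by ring]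
  rw [zero_add, Real.sqrt_sq hl]

lemma Faux_cont (l : ℝ) (hl : 0 < l) : ContinuousOn (Faux l) (Set.Ici 0) := by
  have hc : Continuous fun x : ℝ => Real.sqrt (x^2 + l^2) :=
    Real.continuous_sqrt.comp (by continuity)
  have hden : ∀ x ∈ Set.Ici (0:ℝ), 2*x + Real.sqrt (x^2 + l^2) ≠ 0 := by
    intro x hx
    have := sqrt_pos' l x hl
    simp only [Set.mem_Ici] at hx
    positivity
  unfold Faux
  apply ContinuousOn.sqrt
  apply ContinuousOn.add
  · exact (continuousOn_id.add (((hc.continuousOn.mul continuousOn_id).div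
      ((continuous_const.mul continuous_id).continuousOn.add hc.continuousOn) hden))).pow 2
  · exact (((continuous_const.mul continuous_id).mul continuous_const).continuousOn.div
      ((continuous_const.mul continuous_id).continuousOn.add hc.continuousOn) hden).pow 2

lemma Faux_zero (l : ℝ) : Faux l 0 = 0 := by
  unfold Faux; norm_num

lemma Faux_ge (l x : ℝ) (hl : 0 < l) (hx : 0 ≤ x) : x ≤ Faux l x := by
  set c := Real.sqrt (x^2 + l^2) with hc
  have hcl : l ≤ c := sqrt_pos' l x hl
  have hs : 0 < 2*x + c := by linarith
  have ht : 0 ≤ c * x / (2*x + c) := by positivity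
  have h1 : x^2 ≤ (x + c * x / (2*x+c))^2 + (2*x*l/(2*x+c))^2 := by nlinarith
  have := Real.sqrt_le_sqrt h1
  rwa [Real.sqrt_sq hx] at this

lemma noncol (l x : ℝ) (hl : 0 < l) (hx : 0 < x) :
    ¬ Collinear ℝ ({pt (-x) 0, pt 0 l, pt x 0} : Set (EuclideanSpace ℝ (Fin 2))) := by
  intro h
  rw [collinear_iff_of_mem (Set.mem_insert _ _)] at h
  obtain ⟨v, hv⟩ := h
  obtain ⟨tB, hB⟩ := hv (pt 0 l) (by simp)
  obtain ⟨tC, hC⟩ := hv (pt x 0) (by simp)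
  have hB1 : l = tB * v 1 := by
    have := congrArg (· 1) hB; simpa [pt] using this
  have hC0 : x = tC * v 0 + (-x) := by
    have := congrArg (· 0) hC; simpa [pt] using this
  have hC1 : (0:ℝ) = tC * v 1 := by
    have := congrArg (· 1) hC; simpa [pt] using this
  have htC : tC ≠ 0 := by
    intro h0; rw [h0] at hC0; simp at hC0; linarith
  have hv1 : v 1 = 0 := by
    rcases mul_eq_zero.mp hC1.symm with h | h
    · exact absurd h htC
    · exact h
  rw [hv1, mul_zero] at hB1
  linarith

theorem exists_isosceles_with_prescribed_bisectors (l₁ l₂ : ℝ)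
    (h₂ : 0 < l₂) (h₁₂ : l₂ < l₁) :
    ∃ A B C : EuclideanSpace ℝ (Fin 2), ¬ Collinear ℝ ({A, B, C} : Set (EuclideanSpace ℝ (Fin 2))) ∧
      dist A B = dist C B ∧
      bisectorLength B C A = l₁ ∧ bisectorLength A B C = l₂ ∧ bisectorLength C A B = l₂ := by
  have h₁ : 0 < l₁ := h₂.trans h₁₂
  -- Find x ∈ (0, l₂] with Faux l₁ x = l₂ by the intermediate value theorem.
  have hcont : ContinuousOn (Faux l₁) (Set.Icc 0 l₂) :=
    (Faux_cont l₁ h₁).mono (fun y hy => hy.1)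
  have hmem : l₂ ∈ Set.Icc (Faux l₁ 0) (Faux l₁ l₂) := by
    constructor
    · rw [Faux_zero]; exact h₂.le
    · exact Faux_ge l₁ l₂ h₁ h₂.le
  obtain ⟨x, hxI, hxF⟩ := intermediate_value_Icc h₂.le hcont hmem
  have hx0 : 0 < x := by
    rcases lt_or_eq_of_le hxI.1 with h | h
    · exact h
    · exfalso; rw [← h] at hxF; rw [Faux_zero] at hxF; linarith
  refine ⟨pt (-x) 0, pt 0 l₁, pt x 0, noncol l₁ x h₁ hx0, ?_, ?_, ?_, ?_⟩
  · rw [dist_pt, dist_pt]; ring_nf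
  · exact blB l₁ x h₁.le
  · rw [blA l₁ x h₁ hx0.le]; exact hxF
  · rw [blC l₁ x h₁ hx0.le]; exact hxF
end

section
/- Let A, B, C and A', B', C' be two triangles in EuclideanSpace ℝ (Fin 2) that are isosceles with apex B, i.e. dist A B = dist C B and dist A' B' = dist C' B', and suppose their bisector lengths from the apex are equal: t_B = t_{B'} > 0. If the apex angles satisfy ∠ A B C < ∠ A' B' C' ≤ π/3, then t_A < t_{A'}. (In isosceles triangles with a fixed bisector length from the apex B, the bisector length from a base vertex is a strictly increasing function of the apex angle on (0, π/3].) -/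
open EuclideanGeometry Real

private lemma dist_sq_combo (A B C : EuclideanSpace ℝ (Fin 2)) (lam mu : ℝ) (hlm : lam + mu = 1) :
    dist A (lam • B + mu • C) ^ 2 =
      lam ^ 2 * (dist A B) ^ 2 + mu ^ 2 * (dist A C) ^ 2 +
        lam * mu * ((dist A B) ^ 2 + (dist A C) ^ 2 - (dist B C) ^ 2) := by
  have h1 : A - (lam • B + mu • C) = lam • (A - B) + mu • (A - C) := by
    have hA : A = lam • A + mu • A := by rw [← add_smul, hlm, one_smul]
    rw [smul_sub, smul_sub]
    conv_lhs => rw [hA]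
    abel
  have hBC : (A - B) - (A - C) = C - B := by abel
  have key : 2 * (inner ℝ (A - B) (A - C) : ℝ) =
      ‖A - B‖ ^ 2 + ‖A - C‖ ^ 2 - ‖C - B‖ ^ 2 := by
    have := norm_sub_sq_real (A - B) (A - C)
    rw [hBC] at this
    linarith
  rw [dist_eq_norm, h1, norm_add_sq_real, dist_eq_norm, dist_eq_norm, dist_eq_norm,
    real_inner_smul_left, real_inner_smul_right, norm_smul, norm_smul]
  have hn : ‖B - C‖ = ‖C - B‖ := norm_sub_rev _ _
  rw [hn]
  simp only [Real.norm_eq_abs, mul_pow, sq_abs]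
  linear_combination lam * mu * key

private lemma iso_formulas (A B C : EuclideanSpace ℝ (Fin 2))
    (h : ¬ Collinear ℝ ({A, B, C} : Set (EuclideanSpace ℝ (Fin 2))))
    (hiso : dist A B = dist C B) :
    0 < dist A B ∧ 0 < Real.sin (∠ A B C / 2) ∧ Real.sin (∠ A B C / 2) < 1 ∧
      (bisectorLength B C A) ^ 2 =
        (dist A B) ^ 2 * (1 - Real.sin (∠ A B C / 2) ^ 2) ∧
      (bisectorLength A B C) ^ 2 =
        8 * (dist A B) ^ 2 * Real.sin (∠ A B C / 2) ^ 2 * (1 + Real.sin (∠ A B C / 2)) /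
          (1 + 2 * Real.sin (∠ A B C / 2)) ^ 2 := by
  set s := dist A B with hs
  set θ := ∠ A B C with hθ
  set u := Real.sin (θ / 2) with hu
  have hAB : A ≠ B := ne₁₂_of_not_collinear h
  have hspos : 0 < s := dist_pos.2 hAB
  have hθpos : 0 < θ := angle_pos_of_not_collinear h
  have hθlt : θ < π := angle_lt_pi_of_not_collinear h
  have hupos : 0 < u := Real.sin_pos_of_pos_of_lt_pi (by linarith) (by linarith [Real.pi_pos])
  have hu2 : u ^ 2 = 1 / 2 - Real.cos θ / 2 := by
    rw [hu, Real.sin_sq_eq_half_sub]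
    ring_nf
  have hcos : Real.cos π < Real.cos θ :=
    Real.cos_lt_cos_of_nonneg_of_le_pi (le_of_lt hθpos) le_rfl hθlt
  rw [Real.cos_pi] at hcos
  have hult : u < 1 := by
    nlinarith [hupos]
  -- distances
  have hBC : dist B C = s := by rw [dist_comm]; exact hiso.symm
  have hCA' : dist C A = dist A C := dist_comm C A
  have hBA : dist B A = s := by rw [dist_comm]
  have hCB : dist C B = s := hiso.symm
  -- law of cosines: dist A C
  have hlaw := EuclideanGeometry.law_cos A B C
  rw [hCB, ← hθ, ← hs] at hlaw
  have hAC2 : dist A C ^ 2 = (2 * s * u) ^ 2 := by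
    linear_combination hlaw - 4 * s ^ 2 * hu2
  have hACnn : (0:ℝ) ≤ dist A C := dist_nonneg
  have hAC : dist A C = 2 * s * u := by
    nlinarith [hAC2, hACnn, mul_pos (mul_pos (by norm_num : (0:ℝ) < 2) hspos) hupos]
  refine ⟨hspos, hupos, hult, ?_, ?_⟩
  · -- t_B formula
    have hlm : (1/2 : ℝ) + 1/2 = 1 := by norm_num
    have e1 : bisectorLength B C A = dist B ((1/2 : ℝ) • C + (1/2 : ℝ) • A) := by
      unfold bisectorLength
      rw [hBC, ← hs]
      rw [show s / (s + s) = 1/2 by field_simp; ring]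
    rw [e1, dist_sq_combo B C A (1/2) (1/2) hlm, hBC, hBA]
    rw [show dist C A = 2 * s * u by rw [hCA', hAC]]
    ring
  · -- t_A formula
    have hden : (0:ℝ) < dist C A + dist A B := by
      rw [hCA', hAC, ← hs]; positivity
    have hlm : dist C A / (dist C A + dist A B) + dist A B / (dist C A + dist A B) = 1 := by
      field_simp
    rw [bisectorLength, dist_sq_combo A B C _ _ hlm, hBC, ← hs]
    rw [hCA', hAC]
    have h12u : (0:ℝ) < 1 + 2 * u := by linarith
    field_simp
    ring

private lemma key_ineq (P Q u v : ℝ) (hP : 0 < P) (hu : 0 < u) (huv : u < v)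
    (hv : v ≤ 1/2) (hPQ : P * (1 - u ^ 2) = Q * (1 - v ^ 2)) :
    8 * P * u ^ 2 * (1 + u) * (1 + 2 * v) ^ 2 < 8 * Q * v ^ 2 * (1 + v) * (1 + 2 * u) ^ 2 := by
  have hv0 : 0 < v := lt_trans hu huv
  have hv2 : 0 < 1 - v ^ 2 := by nlinarith
  have h1 : u ^ 2 * (1 + 3 * v - 4 * v ^ 3) < v ^ 2 * (1 + 3 * u - 4 * u ^ 3) := by
    nlinarith [mul_pos (sub_pos.2 huv)
      (by nlinarith [mul_pos hu hv0, mul_pos (mul_pos hu hv0) (mul_pos hu hv0)] :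
        (0:ℝ) < u + v + 3 * (u * v) + 4 * (u * v) ^ 2)]
  have hc : (0:ℝ) < 8 * P * (1 + u) * (1 + v) := by positivity
  have h2 := mul_lt_mul_of_pos_left h1 hc
  have h3 : 8 * P * u ^ 2 * (1 + u) * (1 + 2 * v) ^ 2 * (1 - v ^ 2) <
      8 * Q * v ^ 2 * (1 + v) * (1 + 2 * u) ^ 2 * (1 - v ^ 2) := by
    calc 8 * P * u ^ 2 * (1 + u) * (1 + 2 * v) ^ 2 * (1 - v ^ 2)
        = 8 * P * (1 + u) * (1 + v) * (u ^ 2 * (1 + 3 * v - 4 * v ^ 3)) := by ring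
      _ < 8 * P * (1 + u) * (1 + v) * (v ^ 2 * (1 + 3 * u - 4 * u ^ 3)) := h2
      _ = 8 * Q * v ^ 2 * (1 + v) * (1 + 2 * u) ^ 2 * (1 - v ^ 2) := by
          linear_combination (8 * v ^ 2 * (1 + v) * (1 + 2 * u) ^ 2) * hPQ
  exact lt_of_mul_lt_mul_right h3 hv2.le

theorem isosceles_base_bisector_strictMono (A B C A' B' C' : EuclideanSpace ℝ (Fin 2))
    (h : ¬ Collinear ℝ ({A, B, C} : Set (EuclideanSpace ℝ (Fin 2))))
    (h' : ¬ Collinear ℝ ({A', B', C'} : Set (EuclideanSpace ℝ (Fin 2))))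
    (hiso : dist A B = dist C B) (hiso' : dist A' B' = dist C' B')
    (htB : bisectorLength B C A = bisectorLength B' C' A')
    (htBpos : 0 < bisectorLength B C A)
    (hang : ∠ A B C < ∠ A' B' C') (hang' : ∠ A' B' C' ≤ π / 3) :
    bisectorLength A B C < bisectorLength A' B' C' := by
  obtain ⟨hs, hu, hu1, htB1, htA1⟩ := iso_formulas A B C h hiso
  obtain ⟨hs', hv, hv1, htB1', htA1'⟩ := iso_formulas A' B' C' h' hiso'
  set u := Real.sin (∠ A B C / 2) with hud
  set v := Real.sin (∠ A' B' C' / 2) with hvd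
  have hπ : 0 < π := Real.pi_pos
  have hangle0 : 0 ≤ ∠ A B C := angle_nonneg _ _ _
  have huv : u < v := by
    apply Real.sin_lt_sin_of_lt_of_le_pi_div_two (by linarith) (by linarith) (by linarith)
  have hv12 : v ≤ 1/2 := by
    have hmem1 : ∠ A' B' C' / 2 ∈ Set.Icc (-(π/2)) (π/2) := by
      constructor <;> [linarith [angle_nonneg A' B' C']; linarith]
    have hmem2 : π/6 ∈ Set.Icc (-(π/2)) (π/2) := by constructor <;> linarith
    have := Real.strictMonoOn_sin.monotoneOn hmem1 hmem2 (by linarith)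
    rwa [Real.sin_pi_div_six] at this
  have hsq : (bisectorLength B C A) ^ 2 = (bisectorLength B' C' A') ^ 2 := by rw [htB]
  rw [htB1, htB1'] at hsq
  have hgoal2 : (bisectorLength A B C) ^ 2 < (bisectorLength A' B' C') ^ 2 := by
    rw [htA1, htA1', div_lt_div_iff₀ (by positivity) (by positivity)]
    exact key_ineq _ _ u v (by positivity) hu huv hv12 hsq
  have hnn : 0 ≤ bisectorLength A' B' C' := by unfold bisectorLength; exact dist_nonneg
  exact lt_of_pow_lt_pow_left₀ 2 hnn hgoal2
end

section
/- Let A, B, C be noncollinear points in EuclideanSpace ℝ (Fin 2) whose angles satisfy ∠ A B C < ∠ B A C < ∠ B C A, and suppose the bisector lengths satisfy t_A = l₂ and t_B = l₁. Then, writing a := dist B C, b := dist C A, c := dist A B, the following chain of inequalities holds: l₂/2 < b < a < c < l₁ + l₂. -/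
open EuclideanGeometry Real

/-- Algebraic core: larger angle (smaller cosine) faces longer side. -/
lemma aux_side (a b c x y : ℝ) (ha : 0 < a) (hb : 0 < b) (hc : 0 < c)
    (htri : c < a + b)
    (e1 : a * a = c * c + b * b - 2 * c * b * x)
    (e2 : b * b = c * c + a * a - 2 * c * a * y)
    (hxy : x < y) : b < a := by
  by_contra hab
  push_neg at hab
  have h2 : (0:ℝ) < 2 * a * b * c := by positivity
  have h1 : a * (c * c + b * b - a * a) < b * (c * c + a * a - b * b) := by
    calc a * (c * c + b * b - a * a) = 2 * a * b * c * x := by nlinarith [e1]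
      _ < 2 * a * b * c * y := by nlinarith [mul_lt_mul_of_pos_left hxy h2]
      _ = b * (c * c + a * a - b * b) := by nlinarith [e2]
  nlinarith [mul_nonneg (sub_nonneg.2 hab) (show (0:ℝ) ≤ (a + b) * (a + b) - c * c by nlinarith)]

lemma dist_combo_left (X Y : EuclideanSpace ℝ (Fin 2)) (s t : ℝ) (hst : s + t = 1) :
    dist (s • X + t • Y) Y = |s| * dist X Y := by
  have ht : t = 1 - s := by linarith
  subst ht
  have hv : s • X + (1 - s) • Y - Y = s • (X - Y) := by
    rw [sub_smul, one_smul, smul_sub]; abel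
  rw [dist_eq_norm, hv, norm_smul, Real.norm_eq_abs, ← dist_eq_norm]

lemma dist_combo_right (X Y : EuclideanSpace ℝ (Fin 2)) (s t : ℝ) (hst : s + t = 1) :
    dist (s • X + t • Y) X = |t| * dist X Y := by
  have hs : s = 1 - t := by linarith
  subst hs
  have hv : (1 - t) • X + t • Y - X = t • (Y - X) := by
    rw [sub_smul, one_smul, smul_sub]; abel
  rw [dist_eq_norm, hv, norm_smul, Real.norm_eq_abs, ← dist_eq_norm, dist_comm Y X]

lemma strict_tri {A B C : EuclideanSpace ℝ (Fin 2)}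
    (h : ¬ Collinear ℝ ({A, B, C} : Set (EuclideanSpace ℝ (Fin 2)))) :
    dist A C < dist A B + dist B C := by
  rcases lt_or_eq_of_le (dist_triangle A B C) with hlt | heq
  · exact hlt
  · exact absurd (dist_add_dist_eq_iff.1 heq.symm).collinear h

set_option maxHeartbeats 1000000 in
theorem side_inequalities_of_angle_ordering (l₁ l₂ : ℝ) (A B C : EuclideanSpace ℝ (Fin 2))
    (h : ¬ Collinear ℝ ({A, B, C} : Set (EuclideanSpace ℝ (Fin 2))))
    (hBA : ∠ A B C < ∠ B A C) (hAC : ∠ B A C < ∠ B C A)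
    (htA : bisectorLength A B C = l₂) (htB : bisectorLength B C A = l₁) :
    l₂ / 2 < dist C A ∧ dist C A < dist B C ∧ dist B C < dist A B ∧
      dist A B < l₁ + l₂ := by
  -- distinct points
  have hAB : A ≠ B := by
    rintro rfl
    exact h (by rw [Set.insert_idem]; exact collinear_pair ℝ A C)
  have hBC : B ≠ C := by
    rintro rfl
    exact h ((collinear_pair ℝ A B).subset
      (by intro x hx; simp at hx; rcases hx with rfl|rfl|rfl <;> simp))
  have hAC' : A ≠ C := by
    rintro rfl
    exact h ((collinear_pair ℝ A B).subset
      (by intro x hx; simp at hx; rcases hx with rfl|rfl|rfl <;> simp))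
  have ha : 0 < dist B C := dist_pos.2 hBC
  have hb : 0 < dist C A := dist_pos.2 (Ne.symm hAC')
  have hc : 0 < dist A B := dist_pos.2 hAB
  -- strict triangle inequalities
  have htri1 : dist B C < dist A B + dist C A := by
    have := strict_tri (show ¬ Collinear ℝ ({B, A, C} : Set _) by
      rwa [Set.insert_comm] at h)
    rw [dist_comm B A, dist_comm A C] at this
    linarith
  have htri2 : dist A B < dist B C + dist C A := by
    have := strict_tri (show ¬ Collinear ℝ ({A, C, B} : Set _) by
      rwa [Set.pair_comm] at h)
    rw [dist_comm A C, dist_comm C B] at this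
    linarith
  -- cosines comparisons
  have hxy : Real.cos (∠ B A C) < Real.cos (∠ A B C) :=
    Real.strictAntiOn_cos ⟨angle_nonneg _ _ _, angle_le_pi _ _ _⟩
      ⟨angle_nonneg _ _ _, angle_le_pi _ _ _⟩ hBA
  have hxz : Real.cos (∠ B C A) < Real.cos (∠ B A C) :=
    Real.strictAntiOn_cos ⟨angle_nonneg _ _ _, angle_le_pi _ _ _⟩
      ⟨angle_nonneg _ _ _, angle_le_pi _ _ _⟩ hAC
  -- law of cosines instances
  have e1 : dist B C * dist B C = dist A B * dist A B + dist C A * dist C A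
      - 2 * dist A B * dist C A * Real.cos (∠ B A C) := by
    have := EuclideanGeometry.law_cos B A C
    rwa [dist_comm B A] at this
  have e2 : dist C A * dist C A = dist A B * dist A B + dist B C * dist B C
      - 2 * dist A B * dist B C * Real.cos (∠ A B C) := by
    have := EuclideanGeometry.law_cos A B C
    rwa [dist_comm A C, dist_comm C B] at this
  have e3 : dist A B * dist A B = dist B C * dist B C + dist C A * dist C A
      - 2 * dist B C * dist C A * Real.cos (∠ B C A) := by
    have := EuclideanGeometry.law_cos B C A
    rwa [dist_comm B A, dist_comm A C] at this
  -- side ordering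
  have hba : dist C A < dist B C := by
    refine aux_side (dist B C) (dist C A) (dist A B) _ _ ha hb hc htri2 e1 ?_ hxy
    linarith [e2]
  have hac : dist B C < dist A B := by
    refine aux_side (dist A B) (dist B C) (dist C A)
      (Real.cos (∠ B C A)) (Real.cos (∠ B A C)) hc ha hb (by linarith) ?_ ?_ hxz
    · linarith [e3]
    · linarith [e1]
  -- angle sum and cos C < 1/2
  have hsum : ∠ A B C + ∠ B C A + ∠ C A B = π :=
    EuclideanGeometry.angle_add_angle_add_angle_eq_pi C (Ne.symm hAB)
  have hCA : ∠ C A B = ∠ B A C := EuclideanGeometry.angle_comm _ _ _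
  have hCgt : π / 3 < ∠ B C A := by rw [hCA] at hsum; linarith
  have hzlt : Real.cos (∠ B C A) < 1 / 2 := by
    have h2 := Real.strictAntiOn_cos
      (Set.mem_Icc.2 ⟨by positivity, by linarith [Real.pi_pos]⟩)
      (Set.mem_Icc.2 ⟨angle_nonneg _ _ _, angle_le_pi _ _ _⟩) hCgt
    rwa [Real.cos_pi_div_three] at h2
  have hC2 : dist B C * dist B C + dist C A * dist C A - dist B C * dist C A
      < dist A B * dist A B := by nlinarith [mul_pos ha hb]
  -- the bisector feet
  have hstA : dist C A / (dist C A + dist A B) + dist A B / (dist C A + dist A B) = 1 := by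
    field_simp
  have hstB : dist A B / (dist A B + dist B C) + dist B C / (dist A B + dist B C) = 1 := by
    field_simp
  have hDC : dist ((dist C A / (dist C A + dist A B)) • B
      + (dist A B / (dist C A + dist A B)) • C) C
      = dist C A / (dist C A + dist A B) * dist B C := by
    rw [dist_combo_left B C _ _ hstA, abs_of_pos (by positivity)]
  have hDB : dist ((dist C A / (dist C A + dist A B)) • B
      + (dist A B / (dist C A + dist A B)) • C) B
      = dist A B / (dist C A + dist A B) * dist B C := by
    rw [dist_combo_right B C _ _ hstA, abs_of_pos (by positivity)]
  have hEA : dist ((dist A B / (dist A B + dist B C)) • C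
      + (dist B C / (dist A B + dist B C)) • A) A
      = dist A B / (dist A B + dist B C) * dist C A := by
    rw [dist_combo_left C A _ _ hstB, abs_of_pos (by positivity)]
  -- abbreviations for the feet, with targeted distance equalities
  have hCD : dist C ((dist C A / (dist C A + dist A B)) • B
      + (dist A B / (dist C A + dist A B)) • C)
      = dist C A / (dist C A + dist A B) * dist B C := by rw [dist_comm]; exact hDC
  have hAE : dist A ((dist A B / (dist A B + dist B C)) • C
      + (dist B C / (dist A B + dist B C)) • A)
      = dist A B / (dist A B + dist B C) * dist C A := by rw [dist_comm]; exact hEA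
  have hEB : dist ((dist A B / (dist A B + dist B C)) • C
      + (dist B C / (dist A B + dist B C)) • A) B = bisectorLength B C A := by
    rw [dist_comm]; rfl
  -- bound 1 : l₂ < 2 * dist C A
  have hbound1 : l₂ < 2 * dist C A := by
    have t1 := dist_triangle A C ((dist C A / (dist C A + dist A B)) • B
      + (dist A B / (dist C A + dist A B)) • C)
    rw [hCD, dist_comm A C] at t1
    rw [← htA]
    have hfr : dist C A / (dist C A + dist A B) * dist B C < dist C A := by
      rw [div_mul_eq_mul_div, div_lt_iff₀ (by positivity)]
      nlinarith
    have t1' : bisectorLength A B C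
        ≤ dist C A + dist C A / (dist C A + dist A B) * dist B C := t1
    linarith
  -- bound 4 : dist A B < l₁ + l₂
  have hbound4 : dist A B < l₁ + l₂ := by
    have t2 := dist_triangle A ((dist C A / (dist C A + dist A B)) • B
      + (dist A B / (dist C A + dist A B)) • C) B
    rw [hDB] at t2
    have t2' : dist A B ≤ bisectorLength A B C
        + dist A B / (dist C A + dist A B) * dist B C := t2
    have t3 := dist_triangle A ((dist A B / (dist A B + dist B C)) • C
      + (dist B C / (dist A B + dist B C)) • A) B
    rw [hAE, hEB] at t3
    have key : dist A B / (dist C A + dist A B) * dist B C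
        + dist A B / (dist A B + dist B C) * dist C A < dist A B := by
      rw [div_mul_eq_mul_div, div_mul_eq_mul_div,
        div_add_div _ _ (by positivity : dist C A + dist A B ≠ 0)
          (by positivity : dist A B + dist B C ≠ 0),
        div_lt_iff₀ (by positivity)]
      nlinarith
    rw [← htA, ← htB]
    linarith
  exact ⟨by linarith, hba, hac, hbound4⟩
end

section
/- For any noncollinear points A, B, C in EuclideanSpace ℝ (Fin 2), the side AB is shorter than the sum of the bisector lengths from its two endpoints: dist A B < t_A + t_B. -/
open EuclideanGeometry Real

theorem side_lt_sum_of_bisectors (A B C : EuclideanSpace ℝ (Fin 2))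
    (h : ¬ Collinear ℝ ({A, B, C} : Set (EuclideanSpace ℝ (Fin 2)))) :
    dist A B < bisectorLength A B C + bisectorLength B C A := by
  have hAB : A ≠ B := by
    rintro rfl
    exact h (by rw [Set.insert_idem]; exact collinear_pair ℝ A C)
  have hBC : B ≠ C := by
    rintro rfl
    exact h (by rw [Set.pair_eq_singleton]; exact collinear_pair ℝ A B)
  have hCA : C ≠ A := by
    rintro rfl
    exact h (by rw [show ({C, B, C} : Set (EuclideanSpace ℝ (Fin 2))) = {C, B} by
      rw [Set.pair_comm C B, Set.insert_comm]; simp]; exact collinear_pair ℝ C B)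
  set a := dist B C with ha
  set b := dist C A with hb
  set c := dist A B with hc
  have apos : 0 < a := dist_pos.2 hBC
  have bpos : 0 < b := dist_pos.2 hCA
  have cpos : 0 < c := dist_pos.2 hAB
  have hbc : (0:ℝ) < b + c := by linarith
  have hca : (0:ℝ) < c + a := by linarith
  have hs : (0:ℝ) < a + b + c := by linarith
  set D₁ := (b/(b+c)) • B + (c/(b+c)) • C with hD₁
  set D₂ := (c/(c+a)) • C + (a/(c+a)) • A with hD₂
  have ht₁ : bisectorLength A B C = dist A D₁ := rfl
  have ht₂ : bisectorLength B C A = dist B D₂ := rfl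
  set I := ((a/(a+b+c)) • A + (b/(a+b+c)) • B + (c/(a+b+c)) • C : EuclideanSpace ℝ (Fin 2))
    with hI
  have h1 : A - I = ((b+c)/(a+b+c)) • (A - D₁) := by
    rw [hI, hD₁]
    match_scalars <;> field_simp <;> ring
  have h2 : B - I = ((c+a)/(a+b+c)) • (B - D₂) := by
    rw [hI, hD₂]
    match_scalars <;> field_simp <;> ring
  have e1 : dist A I = ((b+c)/(a+b+c)) * dist A D₁ := by
    rw [dist_eq_norm, dist_eq_norm, h1, norm_smul, Real.norm_eq_abs,
      abs_of_pos (by positivity)]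
  have e2 : dist B I = ((c+a)/(a+b+c)) * dist B D₂ := by
    rw [dist_eq_norm, dist_eq_norm, h2, norm_smul, Real.norm_eq_abs,
      abs_of_pos (by positivity)]
  have tpos1 : 0 < dist A D₁ := by
    rw [dist_pos]
    intro e
    apply h
    apply collinear_insert_of_mem_affineSpan_pair
    have : A = AffineMap.lineMap B C (c/(b+c)) := by
      rw [AffineMap.lineMap_apply_module, e, hD₁]
      match_scalars <;> field_simp <;> ring
    rw [this]
    exact AffineMap.lineMap_mem_affineSpan_pair _ _ _
  have tpos2 : 0 < dist B D₂ := by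
    rw [dist_pos]
    intro e
    apply h
    have : B = AffineMap.lineMap C A (a/(c+a)) := by
      rw [AffineMap.lineMap_apply_module, e, hD₂]
      match_scalars <;> field_simp <;> ring
    have hmem : B ∈ affineSpan ℝ ({C, A} : Set (EuclideanSpace ℝ (Fin 2))) := by
      rw [this]
      exact AffineMap.lineMap_mem_affineSpan_pair _ _ _
    have := collinear_insert_of_mem_affineSpan_pair hmem
    have hset : ({B, C, A} : Set (EuclideanSpace ℝ (Fin 2))) = {A, B, C} := by
      ext x; simp [or_comm, or_assoc, or_left_comm]
    rwa [hset] at this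
  have k1 : (b+c)/(a+b+c) < 1 := by rw [div_lt_one hs]; linarith
  have k2 : (c+a)/(a+b+c) < 1 := by rw [div_lt_one hs]; linarith
  calc c ≤ dist A I + dist I B := dist_triangle A I B
    _ = ((b+c)/(a+b+c)) * dist A D₁ + ((c+a)/(a+b+c)) * dist B D₂ := by
        rw [e1, dist_comm I B, e2]
    _ < dist A D₁ + dist B D₂ := by nlinarith
    _ = bisectorLength A B C + bisectorLength B C A := by rw [ht₁, ht₂]
end

section
/- Let l₁, l₂ > 0 and let (Aₙ, Bₙ, Cₙ) be a sequence of noncollinear triples in EuclideanSpace ℝ (Fin 2) such that for every n the angles satisfy ∠ Aₙ Bₙ Cₙ < ∠ Bₙ Aₙ Cₙ < ∠ Bₙ Cₙ Aₙ, the bisector length from Aₙ equals l₂, and the bisector length from Bₙ equals l₁. If ∠ Aₙ Bₙ Cₙ → 0 as n → ∞, then ∠ Bₙ Aₙ Cₙ → 0 and ∠ Bₙ Cₙ Aₙ → π. -/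
open EuclideanGeometry Real

open RealInnerProductSpace

lemma my_ne_of_ncol {P Q R : EuclideanSpace ℝ (Fin 2)}
    (h : ¬ Collinear ℝ ({P, Q, R} : Set (EuclideanSpace ℝ (Fin 2)))) :
    P ≠ Q ∧ Q ≠ R ∧ P ≠ R := by
  refine ⟨?_, ?_, ?_⟩
  · rintro rfl
    exact h (by
      have : ({P, P, R} : Set (EuclideanSpace ℝ (Fin 2))) = {P, R} := by ext x; simp
      rw [this]; exact collinear_pair ℝ P R)
  · rintro rfl
    exact h (by
      have : ({P, Q, Q} : Set (EuclideanSpace ℝ (Fin 2))) = {P, Q} := by ext x; simp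
      rw [this]; exact collinear_pair ℝ P Q)
  · rintro rfl
    exact h (by
      have : ({P, Q, P} : Set (EuclideanSpace ℝ (Fin 2))) = {P, Q} := by ext x; simp; try tauto
      rw [this]; exact collinear_pair ℝ P Q)

lemma my_ncol_perm {P Q R : EuclideanSpace ℝ (Fin 2)}
    (h : ¬ Collinear ℝ ({P, Q, R} : Set (EuclideanSpace ℝ (Fin 2)))) :
    ¬ Collinear ℝ ({Q, P, R} : Set (EuclideanSpace ℝ (Fin 2))) ∧
    ¬ Collinear ℝ ({Q, R, P} : Set (EuclideanSpace ℝ (Fin 2))) := by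
  constructor <;> intro hc <;> apply h
  · have : ({P, Q, R} : Set (EuclideanSpace ℝ (Fin 2))) = {Q, P, R} := by ext x; simp; try tauto
    rw [this]; exact hc
  · have : ({P, Q, R} : Set (EuclideanSpace ℝ (Fin 2))) = {Q, R, P} := by ext x; simp; try tauto
    rw [this]; exact hc

/-- Law of sines (cross-multiplied form). -/
lemma my_law_sin (P Q R : EuclideanSpace ℝ (Fin 2)) (h : P ≠ Q) :
    dist Q R * Real.sin (∠ P Q R) = dist P R * Real.sin (∠ Q P R) := by
  have hx : ‖P - Q‖ ≠ 0 := by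
    simpa [sub_eq_zero] using h
  apply mul_right_cancel₀ hx
  have e1 := InnerProductGeometry.sin_angle_mul_norm_mul_norm (P - Q) (R - Q)
  have e2 := InnerProductGeometry.sin_angle_mul_norm_mul_norm (Q - P) (R - P)
  have hang1 : ∠ P Q R = InnerProductGeometry.angle (P - Q) (R - Q) := rfl
  have hang2 : ∠ Q P R = InnerProductGeometry.angle (Q - P) (R - P) := rfl
  rw [hang1, hang2, dist_eq_norm, dist_eq_norm, norm_sub_rev Q R, norm_sub_rev P R]
  have hrad : ⟪P - Q, P - Q⟫ * ⟪R - Q, R - Q⟫ - ⟪P - Q, R - Q⟫ * ⟪P - Q, R - Q⟫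
      = ⟪Q - P, Q - P⟫ * ⟪R - P, R - P⟫ - ⟪Q - P, R - P⟫ * ⟪Q - P, R - P⟫ := by
    simp only [inner_sub_left, inner_sub_right, real_inner_comm P Q, real_inner_comm P R,
      real_inner_comm Q R]
    ring
  calc ‖R - Q‖ * Real.sin (InnerProductGeometry.angle (P - Q) (R - Q)) * ‖P - Q‖
      = Real.sin (InnerProductGeometry.angle (P - Q) (R - Q)) * (‖P - Q‖ * ‖R - Q‖) := by ring
    _ = √(⟪P - Q, P - Q⟫ * ⟪R - Q, R - Q⟫ - ⟪P - Q, R - Q⟫ * ⟪P - Q, R - Q⟫) := e1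
    _ = √(⟪Q - P, Q - P⟫ * ⟪R - P, R - P⟫ - ⟪Q - P, R - P⟫ * ⟪Q - P, R - P⟫) := by rw [hrad]
    _ = Real.sin (InnerProductGeometry.angle (Q - P) (R - P)) * (‖Q - P‖ * ‖R - P‖) := e2.symm
    _ = ‖R - P‖ * Real.sin (InnerProductGeometry.angle (Q - P) (R - P)) * ‖P - Q‖ := by
        rw [norm_sub_rev Q P]; ring

/-- Closed form for the bisector length. -/
lemma my_bisectorLength_eq (A B C : EuclideanSpace ℝ (Fin 2)) (hAB : A ≠ B) (hCA : C ≠ A) :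
    bisectorLength A B C =
      2 * dist C A * dist A B * Real.cos (∠ B A C / 2) / (dist C A + dist A B) := by
  have hb : 0 < dist C A := dist_pos.2 hCA
  have hc : 0 < dist A B := dist_pos.2 hAB
  set b := dist C A with hbdef
  set c := dist A B with hcdef
  have hbc : (0:ℝ) < b + c := by linarith
  set α := ∠ B A C with hadef
  have hcosnn : 0 ≤ Real.cos (α / 2) := by
    apply Real.cos_nonneg_of_mem_Icc
    constructor
    · have := EuclideanGeometry.angle_nonneg B A C
      rw [← hadef] at this
      linarith [Real.pi_pos]
    · have := EuclideanGeometry.angle_le_pi B A C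
      rw [← hadef] at this
      linarith
  have hinner : ⟪A - B, A - C⟫ = c * b * Real.cos α := by
    have h1 : Real.cos (InnerProductGeometry.angle (B - A) (C - A)) * (‖B - A‖ * ‖C - A‖)
        = ⟪B - A, C - A⟫ := InnerProductGeometry.cos_angle_mul_norm_mul_norm _ _
    have h2 : ∠ B A C = InnerProductGeometry.angle (B - A) (C - A) := rfl
    have h3 : ⟪A - B, A - C⟫ = ⟪B - A, C - A⟫ := by
      rw [show A - B = -(B - A) by abel, show A - C = -(C - A) by abel, inner_neg_neg]
    rw [h3, ← h1, ← h2, ← hadef]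
    have : ‖B - A‖ = c := by rw [hcdef, dist_eq_norm, norm_sub_rev]
    have h5 : ‖C - A‖ = b := by rw [hbdef, dist_eq_norm]
    rw [this, h5]; ring
  set D := (b / (b + c)) • B + (c / (b + c)) • C with hDdef
  have hsum1 : b / (b + c) + c / (b + c) = 1 := by
    rw [← add_div, div_self hbc.ne']
  have hAD : A - D = (b / (b + c)) • (A - B) + (c / (b + c)) • (A - C) := by
    have h1 : (b / (b + c)) • A + (c / (b + c)) • A = A := by
      rw [← add_smul, hsum1, one_smul]
    rw [hDdef, smul_sub, smul_sub]
    conv_lhs => rw [← h1]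
    abel
  have hnorm : dist A D ^ 2
      = (b / (b+c))^2 * c^2 + 2 * ((b/(b+c)) * ((c/(b+c)) * (c * b * Real.cos α)))
        + (c / (b+c))^2 * b^2 := by
    rw [dist_eq_norm, hAD, norm_add_sq_real, real_inner_smul_left, real_inner_smul_right, hinner]
    have h1 : ‖(b / (b + c)) • (A - B)‖ = (b/(b+c)) * c := by
      rw [norm_smul, Real.norm_eq_abs, abs_of_nonneg (by positivity), hcdef, dist_eq_norm]
    have h2 : ‖(c / (b + c)) • (A - C)‖ = (c/(b+c)) * b := by
      rw [norm_smul, Real.norm_eq_abs, abs_of_nonneg (by positivity), hbdef, dist_eq_norm,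
        norm_sub_rev C A]
    rw [h1, h2]; ring
  have hsq : dist A D ^ 2 = (2 * b * c * Real.cos (α / 2) / (b + c)) ^ 2 := by
    have hch : Real.cos (α/2)^2 = 1/2 + Real.cos α / 2 := by
      have h := Real.cos_sq (α/2)
      rwa [show 2*(α/2) = α by ring] at h
    have expand : (2*b*c*Real.cos (α/2)/(b+c))^2
        = (2*b*c)^2 * (1/2 + Real.cos α/2) / (b+c)^2 := by
      rw [div_pow, mul_pow, hch]
    rw [hnorm, expand]
    field_simp
    ring
  have : dist A D = 2 * b * c * Real.cos (α / 2) / (b + c) := by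
    have hR : 0 ≤ 2 * b * c * Real.cos (α / 2) / (b + c) := by
      apply div_nonneg _ hbc.le
      have : 0 ≤ 2 * b * c := by positivity
      exact mul_nonneg this hcosnn
    calc dist A D = √(dist A D ^ 2) := (Real.sqrt_sq dist_nonneg).symm
      _ = √((2 * b * c * Real.cos (α / 2) / (b + c)) ^ 2) := by rw [hsq]
      _ = _ := Real.sqrt_sq hR
  exact this

set_option maxHeartbeats 2000000 in
lemma my_key (l₁ l₂ : ℝ) (h₁ : 0 < l₁) (h₂ : 0 < l₂) (P Q R : EuclideanSpace ℝ (Fin 2))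
    (hnc : ¬ Collinear ℝ ({P, Q, R} : Set (EuclideanSpace ℝ (Fin 2))))
    (hBA : ∠ P Q R < ∠ Q P R) (hAC : ∠ Q P R < ∠ Q R P)
    (htA : bisectorLength P Q R = l₂) (htB : bisectorLength Q R P = l₁) :
    Real.sin (∠ Q P R) ≤ 4 * l₁ / l₂ * Real.sin (∠ P Q R) ∧ ∠ Q P R ≤ π / 2 ∧
      ∠ Q R P = π - ∠ Q P R - ∠ P Q R := by
  obtain ⟨hPQ, hQR, hPR⟩ := my_ne_of_ncol hnc
  obtain ⟨hn1, hn2⟩ := my_ncol_perm hnc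
  have ha : 0 < dist Q R := dist_pos.2 hQR
  have hb : 0 < dist R P := dist_pos.2 hPR.symm
  have hc : 0 < dist P Q := dist_pos.2 hPQ
  set a := dist Q R with hadef
  set b := dist R P with hbdef
  set c := dist P Q with hcdef
  set α := ∠ Q P R with hαdef
  set β := ∠ P Q R with hβdef
  set γ := ∠ Q R P with hγdef
  have hα_pos : 0 < α := EuclideanGeometry.angle_pos_of_not_collinear hn1
  have hβ_pos : 0 < β := EuclideanGeometry.angle_pos_of_not_collinear hnc
  have hγ_pos : 0 < γ := EuclideanGeometry.angle_pos_of_not_collinear hn2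
  have hγ_lt : γ < π := EuclideanGeometry.angle_lt_pi_of_not_collinear hn2
  have hα_le : α ≤ π := EuclideanGeometry.angle_le_pi _ _ _
  have hβ_le : β ≤ π := EuclideanGeometry.angle_le_pi _ _ _
  have hsum : α + β + γ = π := by
    have h := EuclideanGeometry.angle_add_angle_add_angle_eq_pi (p₁ := R) (p₂ := P) Q
      hPR
    rw [EuclideanGeometry.angle_comm R P Q] at h
    linarith [h]
  have hα2 : α ≤ π / 2 := by linarith
  have hβ3 : β / 2 ≤ π / 3 := by linarith
  have hcosβ : (1:ℝ) / 2 ≤ Real.cos (β / 2) := by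
    have h := Real.cos_le_cos_of_nonneg_of_le_pi (by linarith : (0:ℝ) ≤ β / 2)
      (by linarith [Real.pi_pos] : π / 3 ≤ π) hβ3
    rwa [Real.cos_pi_div_three] at h
  have hcosα_nn : 0 ≤ Real.cos (α / 2) :=
    Real.cos_nonneg_of_mem_Icc ⟨by linarith [Real.pi_pos], by linarith⟩
  have hcosα_le : Real.cos (α / 2) ≤ 1 := Real.cos_le_one _
  have hA' : 2 * b * c * Real.cos (α / 2) / (b + c) = l₂ := by
    rw [← htA, my_bisectorLength_eq P Q R hPQ hPR.symm]
  have hB' : 2 * c * a * Real.cos (β / 2) / (c + a) = l₁ := by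
    rw [← htB, my_bisectorLength_eq Q R P hQR hPQ, EuclideanGeometry.angle_comm R Q P]
  have hb2 : l₂ / 2 ≤ b := by
    have h : 2 * b * c * Real.cos (α / 2) / (b + c) ≤ 2 * b := by
      rw [div_le_iff₀ (by linarith)]
      nlinarith [mul_nonneg (mul_nonneg hb.le hc.le) (sub_nonneg.2 hcosα_le), sq_nonneg b]
    rw [hA'] at h; linarith
  have los1 : a * Real.sin β = b * Real.sin α := by
    have h := my_law_sin P Q R hPQ
    rwa [dist_comm P R] at h
  have los2 : a * Real.sin γ = c * Real.sin α := by
    have h := my_law_sin P R Q hPR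
    rwa [dist_comm R Q, EuclideanGeometry.angle_comm P R Q,
      EuclideanGeometry.angle_comm R P Q] at h
  have hsinγ_pos : 0 < Real.sin γ := Real.sin_pos_of_pos_of_lt_pi hγ_pos hγ_lt
  have hsinaγ : Real.sin α ≤ Real.sin γ := by
    rcases le_or_gt γ (π / 2) with h | h
    · exact Real.strictMonoOn_sin.monotoneOn ⟨by linarith [Real.pi_pos], hα2⟩
        ⟨by linarith [Real.pi_pos], h⟩ hAC.le
    · rw [show Real.sin γ = Real.sin (π - γ) from (Real.sin_pi_sub γ).symm]
      exact Real.strictMonoOn_sin.monotoneOn ⟨by linarith [Real.pi_pos], hα2⟩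
        ⟨by linarith [Real.pi_pos], by linarith⟩ (by linarith)
  have hac : a ≤ c := by
    have h : a * Real.sin γ ≤ c * Real.sin γ := by
      rw [los2]
      exact mul_le_mul_of_nonneg_left hsinaγ hc.le
    exact le_of_mul_le_mul_right h hsinγ_pos
  have ha2 : a ≤ 2 * l₁ := by
    have h : a / 2 ≤ 2 * c * a * Real.cos (β / 2) / (c + a) := by
      rw [div_le_div_iff₀ (by norm_num) (by linarith)]
      nlinarith [mul_nonneg (sub_nonneg.2 hac) ha.le,
        mul_nonneg (mul_nonneg hc.le ha.le) (sub_nonneg.2 hcosβ)]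
    rw [hB'] at h; linarith
  have hsinβ_nn : 0 ≤ Real.sin β := Real.sin_nonneg_of_nonneg_of_le_pi hβ_pos.le hβ_le
  have hsinα_nn : 0 ≤ Real.sin α := Real.sin_nonneg_of_nonneg_of_le_pi hα_pos.le hα_le
  refine ⟨?_, hα2, by linarith⟩
  have e2 : a * Real.sin β ≤ 2 * l₁ * Real.sin β := mul_le_mul_of_nonneg_right ha2 hsinβ_nn
  have e3 : l₂ / 2 * Real.sin α ≤ b * Real.sin α := mul_le_mul_of_nonneg_right hb2 hsinα_nn
  rw [div_mul_eq_mul_div, le_div_iff₀ h₂]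
  nlinarith [los1]

theorem angles_tendsto_of_angleB_tendsto_zero (l₁ l₂ : ℝ) (h₁ : 0 < l₁) (h₂ : 0 < l₂)
    (A B C : ℕ → EuclideanSpace ℝ (Fin 2))
    (hnc : ∀ n, ¬ Collinear ℝ ({A n, B n, C n} : Set (EuclideanSpace ℝ (Fin 2))))
    (hBA : ∀ n, ∠ (A n) (B n) (C n) < ∠ (B n) (A n) (C n))
    (hAC : ∀ n, ∠ (B n) (A n) (C n) < ∠ (B n) (C n) (A n))
    (htA : ∀ n, bisectorLength (A n) (B n) (C n) = l₂)
    (htB : ∀ n, bisectorLength (B n) (C n) (A n) = l₁)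
    (hlim : Filter.Tendsto (fun n => ∠ (A n) (B n) (C n)) Filter.atTop (nhds 0)) :
    Filter.Tendsto (fun n => ∠ (B n) (A n) (C n)) Filter.atTop (nhds 0) ∧
      Filter.Tendsto (fun n => ∠ (B n) (C n) (A n)) Filter.atTop (nhds π) := by
  have hkey := fun n =>
    my_key l₁ l₂ h₁ h₂ (A n) (B n) (C n) (hnc n) (hBA n) (hAC n) (htA n) (htB n)
  have hsinβ : Filter.Tendsto (fun n => Real.sin (∠ (A n) (B n) (C n)))
      Filter.atTop (nhds 0) := by
    have h := (Real.continuous_sin.tendsto 0).comp hlim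
    simpa [Function.comp_def] using h
  have hg : Filter.Tendsto (fun n => 4 * l₁ / l₂ * Real.sin (∠ (A n) (B n) (C n)))
      Filter.atTop (nhds 0) := by
    simpa using hsinβ.const_mul (4 * l₁ / l₂)
  have hsinα : Filter.Tendsto (fun n => Real.sin (∠ (B n) (A n) (C n)))
      Filter.atTop (nhds 0) :=
    squeeze_zero (fun n => Real.sin_nonneg_of_nonneg_of_le_pi
        (EuclideanGeometry.angle_nonneg _ _ _) (EuclideanGeometry.angle_le_pi _ _ _))
      (fun n => (hkey n).1) hg
  have hαlim : Filter.Tendsto (fun n => ∠ (B n) (A n) (C n)) Filter.atTop (nhds 0) := by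
    have harc : Filter.Tendsto (fun n => Real.arcsin (Real.sin (∠ (B n) (A n) (C n))))
        Filter.atTop (nhds 0) := by
      have h := (Real.continuous_arcsin.tendsto 0).comp hsinα
      simpa [Function.comp_def] using h
    refine harc.congr fun n => ?_
    exact Real.arcsin_sin
      (by linarith [EuclideanGeometry.angle_nonneg (B n) (A n) (C n), Real.pi_pos])
      (hkey n).2.1
  refine ⟨hαlim, ?_⟩
  have hγ : Filter.Tendsto (fun n => π - ∠ (B n) (A n) (C n) - ∠ (A n) (B n) (C n))
      Filter.atTop (nhds π) := by
    have h := (tendsto_const_nhds (α := ℕ) (f := Filter.atTop) (x := π)).sub hαlim |>.sub hlim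
    simpa using h
  exact hγ.congr fun n => ((hkey n).2.2).symm
end

section
/- Let A, B, C be noncollinear points in EuclideanSpace ℝ (Fin 2). If the angle at A exceeds the angle at B, i.e. ∠ B A C > ∠ A B C, then the bisector from A is shorter than the bisector from B: t_A < t_B. (A larger angle of a triangle has a shorter internal bisector.) -/
open EuclideanGeometry Real

lemma bisectorLength_sq (A B C : EuclideanSpace ℝ (Fin 2))
    (hb : 0 < dist C A) (hc : 0 < dist A B) :
    (bisectorLength A B C) ^ 2 * (dist C A + dist A B) ^ 2 =
      dist C A * dist A B * ((dist C A + dist A B) ^ 2 - dist B C ^ 2) := by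
  set b := dist C A with hbdef
  set c := dist A B with hcdef
  set s := b + c with hsdef
  have hs : s ≠ 0 := by positivity
  have hone : b / s + c / s = 1 := by field_simp; exact hsdef.symm
  have hA : (b / s) • A + (c / s) • A = A := by
    rw [← add_smul, hone, one_smul]
  have hD : A - ((b / s) • B + (c / s) • C) = (b / s) • (A - B) + (c / s) • (A - C) := by
    rw [smul_sub, smul_sub]
    conv_lhs => rw [← hA]
    abel
  have hinner : (inner ℝ (A - B) (A - C) : ℝ) =
      (‖A - B‖ ^ 2 + ‖A - C‖ ^ 2 - ‖C - B‖ ^ 2) / 2 := by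
    have h1 := norm_sub_sq_real (A - B) (A - C)
    have h2 : (A - B) - (A - C) = C - B := by abel
    rw [h2] at h1
    linarith
  have hnAB : ‖A - B‖ = c := (dist_eq_norm A B).symm
  have hnAC : ‖A - C‖ = b := by rw [← dist_eq_norm, dist_comm]
  have hnCB : ‖C - B‖ = dist B C := by rw [← dist_eq_norm, dist_comm]
  have hbs : 0 ≤ b / s := by positivity
  have hcs : 0 ≤ c / s := by positivity
  have expand : ‖(b / s) • (A - B) + (c / s) • (A - C)‖ ^ 2 =
      (b / s) ^ 2 * ‖A - B‖ ^ 2 + 2 * ((b / s) * ((c / s) * (inner ℝ (A - B) (A - C) : ℝ)))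
        + (c / s) ^ 2 * ‖A - C‖ ^ 2 := by
    rw [norm_add_sq_real, real_inner_smul_left, real_inner_smul_right,
      norm_smul, norm_smul, Real.norm_eq_abs, Real.norm_eq_abs,
      abs_of_nonneg hbs, abs_of_nonneg hcs]
    ring
  have : (bisectorLength A B C) ^ 2 =
      (b / s) ^ 2 * c ^ 2 + 2 * ((b / s) * ((c / s) * ((c ^ 2 + b ^ 2 - dist B C ^ 2) / 2)))
        + (c / s) ^ 2 * b ^ 2 := by
    rw [bisectorLength, dist_eq_norm, hD, expand, hinner, hnAB, hnAC, hnCB]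
  rw [this]
  field_simp
  ring

lemma dist_lt_add (A B C : EuclideanSpace ℝ (Fin 2))
    (h : ¬ Collinear ℝ ({A, B, C} : Set (EuclideanSpace ℝ (Fin 2)))) :
    dist B C < dist B A + dist A C := by
  rcases lt_or_eq_of_le (dist_triangle B A C) with h' | h'
  · exact h'
  · exfalso
    apply h
    have hw : Wbtw ℝ B A C := dist_add_dist_eq_iff.mp h'.symm
    have := hw.collinear
    have hsub : ({A, B, C} : Set (EuclideanSpace ℝ (Fin 2))) ⊆ {B, A, C} := by
      intro x hx; simp at hx ⊢; tauto
    exact this.subset hsub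

theorem bisector_lt_of_angle_gt (A B C : EuclideanSpace ℝ (Fin 2))
    (h : ¬ Collinear ℝ ({A, B, C} : Set (EuclideanSpace ℝ (Fin 2))))
    (hang : ∠ A B C < ∠ B A C) :
    bisectorLength A B C < bisectorLength B C A := by
  have hAB : A ≠ B := by
    rintro rfl; exact h (by simp [Set.insert_comm, collinear_pair])
  have hAC : A ≠ C := by
    rintro rfl; exact h (by simp [Set.insert_comm, collinear_pair])
  have hBC : B ≠ C := by
    rintro rfl; exact h (by simp [Set.insert_comm, collinear_pair])
  set a := dist B C with hadef
  set b := dist C A with hbdef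
  set c := dist A B with hcdef
  have ha : 0 < a := dist_pos.mpr hBC
  have hb : 0 < b := dist_pos.mpr (Ne.symm hAC)
  have hc : 0 < c := dist_pos.mpr hAB
  -- strict triangle inequalities
  have htri1 : a < b + c := by
    have := dist_lt_add A B C h
    rw [dist_comm B A, dist_comm A C] at this
    linarith
  have htri3 : c < a + b := by
    have h' : ¬ Collinear ℝ ({C, A, B} : Set (EuclideanSpace ℝ (Fin 2))) := by
      intro hcol; apply h; apply hcol.subset; intro x hx; simp at hx ⊢; tauto
    have := dist_lt_add C A B h'
    rw [dist_comm A C, dist_comm C B] at this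
    simp only [← hadef, ← hbdef, ← hcdef] at this
    linarith
  -- law of cosines at A and B
  have hcosA := EuclideanGeometry.law_cos B A C
  have hcosB := EuclideanGeometry.law_cos A B C
  rw [dist_comm B A] at hcosA
  rw [dist_comm A C, dist_comm C B] at hcosB
  simp only [← hadef, ← hbdef, ← hcdef] at hcosA hcosB
  -- hcosA : a * a = c * c + b * b - 2 * c * b * cos (∠ B A C)
  -- hcosB : b * b = c * c + a * a - 2 * c * a * cos (∠ A B C)
  have hcoslt : Real.cos (∠ B A C) < Real.cos (∠ A B C) :=
    Real.cos_lt_cos_of_nonneg_of_le_pi (EuclideanGeometry.angle_nonneg A B C)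
      (EuclideanGeometry.angle_le_pi B A C) hang
  -- deduce a > b
  have hab : b < a := by
    by_contra hba
    push_neg at hba
    have e1 : 2 * a * b * c * Real.cos (∠ B A C) = a * (c ^ 2 + b ^ 2 - a ^ 2) := by
      linear_combination a * hcosA
    have e2 : 2 * a * b * c * Real.cos (∠ A B C) = b * (c ^ 2 + a ^ 2 - b ^ 2) := by
      linear_combination b * hcosB
    have h2 : 2 * a * b * c * Real.cos (∠ B A C) < 2 * a * b * c * Real.cos (∠ A B C) :=
      mul_lt_mul_of_pos_left hcoslt (by positivity)
    have h3 : 0 ≤ (b - a) * ((a + b) ^ 2 - c ^ 2) := by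
      apply mul_nonneg (by linarith)
      nlinarith
    nlinarith [e1, e2, h2, h3]
  -- bisector length formulas
  have hA := bisectorLength_sq A B C hb hc
  have hB := bisectorLength_sq B C A hc ha
  simp only [← hadef, ← hbdef, ← hcdef] at hA hB
  -- hA : tA^2 * (b+c)^2 = b*c*((b+c)^2 - a^2)
  -- hB : tB^2 * (c+a)^2 = c*a*((c+a)^2 - b^2)
  set tA := bisectorLength A B C
  set tB := bisectorLength B C A
  have htA : 0 ≤ tA := dist_nonneg
  have htB : 0 ≤ tB := dist_nonneg
  have hkey : b * c * ((b + c) ^ 2 - a ^ 2) * (c + a) ^ 2 <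
      c * a * ((c + a) ^ 2 - b ^ 2) * (b + c) ^ 2 := by
    nlinarith [mul_pos (mul_pos (mul_pos (sub_pos.mpr hab) hc)
        (show (0:ℝ) < a + b + c by linarith))
        (show (0:ℝ) < c ^ 3 + (a + b) * c ^ 2 + 3 * a * b * c + a * b * (a + b) by positivity)]
  have hsq : tA ^ 2 < tB ^ 2 := by
    have h1 : tA ^ 2 * ((b + c) ^ 2 * (c + a) ^ 2) < tB ^ 2 * ((b + c) ^ 2 * (c + a) ^ 2) := by
      calc tA ^ 2 * ((b + c) ^ 2 * (c + a) ^ 2)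
          = tA ^ 2 * (b + c) ^ 2 * (c + a) ^ 2 := by ring
        _ = b * c * ((b + c) ^ 2 - a ^ 2) * (c + a) ^ 2 := by rw [hA]
        _ < c * a * ((c + a) ^ 2 - b ^ 2) * (b + c) ^ 2 := hkey
        _ = tB ^ 2 * (c + a) ^ 2 * (b + c) ^ 2 := by rw [hB]
        _ = tB ^ 2 * ((b + c) ^ 2 * (c + a) ^ 2) := by ring
    have hpos : 0 < (b + c) ^ 2 * (c + a) ^ 2 := by positivity
    exact lt_of_mul_lt_mul_right h1 hpos.le
  exact lt_of_pow_lt_pow_left₀ 2 htB hsq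
end

section
/- For any real numbers l₁, l₂, l₃ with 0 < l₃ < l₂ < l₁, there exist noncollinear points A, B, C in EuclideanSpace ℝ (Fin 2) such that the bisector lengths satisfy t_A = l₂, t_B = l₁, t_C = l₃, and moreover the angles satisfy ∠ A B C < ∠ B A C < ∠ B C A. -/
open EuclideanGeometry Real

open RealInnerProductSpace

set_option linter.unusedVariables false
set_option linter.unusedSectionVars false


noncomputable def P (x y : ℝ) : EuclideanSpace ℝ (Fin 2) := !₂[x, y]

@[simp] lemma P_zero : P 0 0 = 0 := by ext i; fin_cases i <;> rfl
@[simp] lemma P_apply0 (x y : ℝ) : P x y 0 = x := rfl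
@[simp] lemma P_apply1 (x y : ℝ) : P x y 1 = y := rfl

lemma dist_P (x y x' y' : ℝ) : dist (P x y) (P x' y') = √((x - x')^2 + (y - y')^2) := by
  rw [EuclideanSpace.dist_eq]
  simp [Fin.sum_univ_two, Real.dist_eq, sq_abs]

lemma inner_P (x y x' y' : ℝ) : ⟪P x y, P x' y'⟫ = x * x' + y * y' := by
  rw [PiLp.inner_apply]
  simp [Fin.sum_univ_two]
  ring

lemma sub_P (x y x' y' : ℝ) : P x y - P x' y' = P (x - x') (y - y') := by
  ext i; fin_cases i <;> rfl

lemma bisector_formula (X Y Z : EuclideanSpace ℝ (Fin 2)) (m n : ℝ)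
    (hm : dist Z X = m) (hn : dist X Y = n) (hmn : 0 < m + n) :
    bisectorLength X Y Z = √(2*m*n*(m*n + ⟪Y - X, Z - X⟫)) / (m + n) := by
  have hm0 : 0 ≤ m := hm ▸ dist_nonneg
  have hn0 : 0 ≤ n := hn ▸ dist_nonneg
  unfold bisectorLength
  rw [hm, hn]
  set w₁ : ℝ := m / (m + n) with hw₁
  set w₂ : ℝ := n / (m + n) with hw₂
  have hw : w₁ + w₂ = 1 := by rw [hw₁, hw₂]; field_simp
  have hX : w₁ • X + w₂ • X = X := by rw [← add_smul, hw, one_smul]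
  have hrw : X - (w₁ • Y + w₂ • Z) = w₁ • (X - Y) + w₂ • (X - Z) := by
    rw [smul_sub, smul_sub]; conv_lhs => rw [← hX]
    abel
  rw [dist_eq_norm, hrw]
  have hnorm1 : ‖X - Y‖ = n := by rw [← dist_eq_norm]; exact hn
  have hnorm2 : ‖X - Z‖ = m := by rw [← dist_eq_norm, dist_comm]; exact hm
  have hinner : ⟪X - Y, X - Z⟫ = ⟪Y - X, Z - X⟫ := by
    rw [show X - Y = -(Y - X) by abel, show X - Z = -(Z - X) by abel, inner_neg_neg]
  have hsq : ‖w₁ • (X - Y) + w₂ • (X - Z)‖^2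
      = (2*m*n*(m*n + ⟪Y - X, Z - X⟫)) / (m+n)^2 := by
    rw [norm_add_sq_real, real_inner_smul_left, real_inner_smul_right, norm_smul, norm_smul,
      hnorm1, hnorm2, hinner, Real.norm_eq_abs, Real.norm_eq_abs,
      abs_of_nonneg (by positivity : (0:ℝ) ≤ w₁), abs_of_nonneg (by positivity : (0:ℝ) ≤ w₂),
      hw₁, hw₂]
    field_simp
    ring
  have h0 : (0:ℝ) ≤ ‖w₁ • (X - Y) + w₂ • (X - Z)‖ := norm_nonneg _
  rw [show ‖w₁ • (X - Y) + w₂ • (X - Z)‖ = √(‖w₁ • (X - Y) + w₂ • (X - Z)‖^2) by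
    rw [Real.sqrt_sq h0], hsq, show (2*m*n*(m*n + ⟪Y - X, Z - X⟫)) / (m+n)^2
      = (2*m*n*(m*n + ⟪Y - X, Z - X⟫)) * ((m+n)⁻¹)^2 by field_simp,
    Real.sqrt_mul' _ (by positivity), Real.sqrt_sq (by positivity)]
  rw [div_eq_mul_inv]


lemma rsin_add_sin (x y : ℝ) : sin x + sin y = 2 * sin ((x+y)/2) * cos ((x-y)/2) := by
  exact_mod_cast Complex.sin_add_sin x y

lemma sqrt_two_sub_two_cos {x : ℝ} (h0 : 0 ≤ x) (h2 : x ≤ 2*π) :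
    √(2 - 2*cos x) = 2 * sin (x/2) := by
  rw [show 2-2*cos x = 4*((1-cos x)/2) by ring, Real.sqrt_mul (by norm_num),
    show √(4:ℝ) = 2 by rw [show (4:ℝ) = 2^2 by norm_num, Real.sqrt_sq (by norm_num)],
    ← Real.sin_half_eq_sqrt h0 h2]

lemma sqrt_two_add_two_cos {x : ℝ} (h0 : -π ≤ x) (h2 : x ≤ π) :
    √(2 + 2*cos x) = 2 * cos (x/2) := by
  rw [show 2+2*cos x = 4*((1+cos x)/2) by ring, Real.sqrt_mul (by norm_num),
    show √(4:ℝ) = 2 by rw [show (4:ℝ) = 2^2 by norm_num, Real.sqrt_sq (by norm_num)],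
    ← Real.cos_half h0 h2]

lemma angle_eq_of {u v : EuclideanSpace ℝ (Fin 2)} {θ m n : ℝ} (hm : ‖u‖ = m) (hn : ‖v‖ = n)
    (hm0 : 0 < m) (hn0 : 0 < n) (h0 : 0 ≤ θ) (hπ : θ ≤ π) (h : ⟪u,v⟫ = m*n*cos θ) :
    InnerProductGeometry.angle u v = θ := by
  unfold InnerProductGeometry.angle
  rw [h, hm, hn, show m*n*cos θ/(m*n) = cos θ by field_simp, Real.arccos_cos h0 hπ]

section Triangle

variable (b c s : ℝ)

noncomputable def AA : EuclideanSpace ℝ (Fin 2) := P 0 0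
noncomputable def BB (b c s : ℝ) : EuclideanSpace ℝ (Fin 2) := P (s * sin c) 0
noncomputable def CC (b c s : ℝ) : EuclideanSpace ℝ (Fin 2) :=
  P (-(s * sin b * cos (b+c))) (s * sin b * sin (b+c))

variable (hb : 0 < b) (hc : 0 < c) (hbc : b + c < π) (hs : 0 < s)

include hb hc hbc hs

lemma sin_b_pos : 0 < sin b := sin_pos_of_pos_of_lt_pi hb (by linarith)
lemma sin_c_pos : 0 < sin c := sin_pos_of_pos_of_lt_pi hc (by linarith)
lemma sin_bc_pos : 0 < sin (b+c) := sin_pos_of_pos_of_lt_pi (by linarith) hbc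

lemma dist_AB : dist (AA) (BB b c s) = s * sin c := by
  have := sin_c_pos b c s hb hc hbc hs
  rw [AA, BB, dist_P]
  rw [show (0 - s * sin c)^2 + (0-0)^2 = (s * sin c)^2 by ring, Real.sqrt_sq (by positivity)]

lemma dist_CA : dist (CC b c s) (AA) = s * sin b := by
  have := sin_b_pos b c s hb hc hbc hs
  rw [AA, CC, dist_P]
  rw [show (-(s * sin b * cos (b+c)) - 0)^2 + (s * sin b * sin (b+c) - 0)^2
      = (s * sin b)^2 * ((sin (b+c))^2 + (cos (b+c))^2) by ring, sin_sq_add_cos_sq, mul_one,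
    Real.sqrt_sq (by positivity)]

lemma dist_BC : dist (BB b c s) (CC b c s) = s * sin (b+c) := by
  have h1 := sin_b_pos b c s hb hc hbc hs
  have h2 := sin_c_pos b c s hb hc hbc hs
  have h3 := sin_bc_pos b c s hb hc hbc hs
  rw [BB, CC, dist_P]
  have key : (sin c)^2 + (sin b)^2 + 2 * sin b * sin c * cos (b+c) = (sin (b+c))^2 := by
    rw [sin_add, cos_add]
    nlinarith [sin_sq_add_cos_sq b, sin_sq_add_cos_sq c, sq_nonneg (sin b), sq_nonneg (sin c)]
  rw [show (s * sin c - -(s * sin b * cos (b+c)))^2 + (0 - s * sin b * sin (b+c))^2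
      = s^2 * ((sin c)^2 + (sin b)^2 + 2 * sin b * sin c * cos (b+c))
        + s^2 * (sin b)^2 * ((sin (b+c))^2 + (cos (b+c))^2) - s^2 * (sin b)^2 by ring,
    sin_sq_add_cos_sq, key]
  rw [show s^2 * (sin (b+c))^2 + s^2 * (sin b)^2 * 1 - s^2 * (sin b)^2 = (s * sin (b+c))^2 by ring,
    Real.sqrt_sq (by positivity)]



lemma bis_a : bisectorLength (AA) (BB b c s) (CC b c s) = s * (sin b * sin c / cos ((b-c)/2)) := by
  have h1 := sin_b_pos b c s hb hc hbc hs
  have h2 := sin_c_pos b c s hb hc hbc hs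
  have hpi := pi_pos
  have hsh : 0 < sin ((b+c)/2) := sin_pos_of_pos_of_lt_pi (by linarith) (by linarith)
  have hch : 0 < cos ((b-c)/2) := Real.cos_pos_of_mem_Ioo ⟨by linarith, by linarith⟩
  rw [bisector_formula _ _ _ (s * sin b) (s * sin c) (dist_CA b c s hb hc hbc hs)
    (dist_AB b c s hb hc hbc hs) (by positivity)]
  rw [AA, BB, CC]; simp only [sub_P]; rw [inner_P]
  rw [show 2*(s*sin b)*(s*sin c)*((s*sin b)*(s*sin c) +
      ((s * sin c - 0) * (-(s * sin b * cos (b+c)) - 0) + (0-0) * (s * sin b * sin (b+c) - 0)))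
      = (s^2*(sin b*sin c))^2 * (2 - 2*cos (b+c)) by ring,
    Real.sqrt_mul (sq_nonneg _), Real.sqrt_sq (by positivity),
    sqrt_two_sub_two_cos (x := b + c) (by linarith) (by nlinarith),
    show s*sin b + s*sin c = s*(sin b + sin c) by ring, rsin_add_sin]
  field_simp

lemma bis_b : bisectorLength (BB b c s) (CC b c s) (AA) =
    s * (sin (b+c) * sin c / sin (b/2 + c)) := by
  have h1 := sin_b_pos b c s hb hc hbc hs
  have h2 := sin_c_pos b c s hb hc hbc hs
  have h3 := sin_bc_pos b c s hb hc hbc hs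
  have hpi := pi_pos
  have hsh : 0 < sin (b/2 + c) := sin_pos_of_pos_of_lt_pi (by linarith) (by linarith)
  have hch : 0 < cos (b/2) := Real.cos_pos_of_mem_Ioo ⟨by linarith, by linarith⟩
  rw [bisector_formula _ _ _ (s * sin c) (s * sin (b+c))
    (dist_AB b c s hb hc hbc hs)
    (dist_BC b c s hb hc hbc hs) (by positivity)]
  rw [AA, BB, CC]; simp only [sub_P]; rw [inner_P]
  have key : sin c + sin b * cos (b+c) = sin (b+c) * cos b := by
    have := sin_sub (b+c) b
    rw [show b + c - b = c by ring] at this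
    linarith
  rw [show 2*(s*sin c)*(s*sin (b+c))*((s*sin c)*(s*sin (b+c)) +
      ((-(s * sin b * cos (b+c)) - s * sin c) * (0 - s * sin c) +
        (s * sin b * sin (b+c) - 0) * (0 - 0)))
      = (s^2*(sin c*sin (b+c)))^2 * (2 + 2*cos b)
        + (s^2*sin c)^2 * 2 * sin (b+c) * ((sin c + sin b * cos (b+c)) - sin (b+c) * cos b)
      by ring, key, sub_self, mul_zero, add_zero,
    Real.sqrt_mul (sq_nonneg _), Real.sqrt_sq (by positivity),
    sqrt_two_add_two_cos (x := b) (by linarith) (by linarith),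
    show s*sin c + s*sin (b+c) = s*(sin c + sin (b+c)) by ring, rsin_add_sin,
    show (c + (b+c))/2 = b/2 + c by ring,
    show (c - (b+c))/2 = -(b/2) by ring, cos_neg]
  rw [div_eq_iff (by positivity), ← mul_div_assoc, div_mul_eq_mul_div, eq_div_iff hsh.ne']
  ring

lemma bis_c : bisectorLength (CC b c s) (AA) (BB b c s) =
    s * (sin (b+c) * sin b / sin (b + c/2)) := by
  have h1 := sin_b_pos b c s hb hc hbc hs
  have h2 := sin_c_pos b c s hb hc hbc hs
  have h3 := sin_bc_pos b c s hb hc hbc hs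
  have hpi := pi_pos
  have hsh : 0 < sin (b + c/2) := sin_pos_of_pos_of_lt_pi (by linarith) (by linarith)
  have hch : 0 < cos (c/2) := Real.cos_pos_of_mem_Ioo ⟨by linarith, by linarith⟩
  rw [bisector_formula _ _ _ (s * sin (b+c)) (s * sin b)
    (dist_BC b c s hb hc hbc hs)
    (dist_CA b c s hb hc hbc hs) (by positivity)]
  rw [AA, BB, CC]; simp only [sub_P]; rw [inner_P]
  have key : sin b + sin c * cos (b+c) = sin (b+c) * cos c := by
    have := sin_sub (b+c) c
    rw [show b + c - c = b by ring] at this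
    linarith
  rw [show 2*(s*sin (b+c))*(s*sin b)*((s*sin (b+c))*(s*sin b) +
      ((0 - -(s * sin b * cos (b+c))) * (s * sin c - -(s * sin b * cos (b+c))) +
        (0 - s * sin b * sin (b+c)) * (0 - s * sin b * sin (b+c))))
      = (s^2*(sin (b+c)*sin b))^2 * (2 + 2*cos c)
        + (s^2*sin b)^2 * 2 * sin (b+c) * ((sin b + sin c * cos (b+c)) - sin (b+c) * cos c)
        + (s^2*sin b)^2 * 2 * sin (b+c) * (sin b * ((sin (b+c))^2 + (cos (b+c))^2) - sin b)
      by ring, key, sin_sq_add_cos_sq]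
  rw [show (s^2*(sin (b+c)*sin b))^2 * (2 + 2*cos c)
        + (s^2*sin b)^2 * 2 * sin (b+c) * (sin (b+c) * cos c - sin (b+c) * cos c)
        + (s^2*sin b)^2 * 2 * sin (b+c) * (sin b * 1 - sin b)
      = (s^2*(sin (b+c)*sin b))^2 * (2 + 2*cos c) by ring,
    Real.sqrt_mul (sq_nonneg _), Real.sqrt_sq (by positivity),
    sqrt_two_add_two_cos (x := c) (by linarith) (by linarith),
    show s*sin (b+c) + s*sin b = s*(sin (b+c) + sin b) by ring, rsin_add_sin,
    show ((b+c) + b)/2 = b + c/2 by ring,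
    show ((b+c) - b)/2 = c/2 by ring]
  rw [div_eq_iff (by positivity), ← mul_div_assoc, div_mul_eq_mul_div, eq_div_iff hsh.ne']
  ring



lemma angle_A : ∠ (BB b c s) AA (CC b c s) = π - (b+c) := by
  have h1 := sin_b_pos b c s hb hc hbc hs
  have h2 := sin_c_pos b c s hb hc hbc hs
  show InnerProductGeometry.angle (BB b c s -ᵥ AA) (CC b c s -ᵥ AA) = π - (b+c)
  simp only [vsub_eq_sub]
  have hmEq : ‖BB b c s - AA‖ = s * sin c := by
    rw [← dist_eq_norm, dist_comm]; exact dist_AB b c s hb hc hbc hs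
  have hnEq : ‖CC b c s - AA‖ = s * sin b := by
    rw [← dist_eq_norm]; exact dist_CA b c s hb hc hbc hs
  refine angle_eq_of hmEq hnEq (by positivity) (by positivity) (by linarith) (by linarith) ?_
  rw [AA, BB, CC]; simp only [sub_P]; rw [inner_P, Real.cos_pi_sub]
  ring

lemma angle_B : ∠ AA (BB b c s) (CC b c s) = b := by
  have h1 := sin_b_pos b c s hb hc hbc hs
  have h2 := sin_c_pos b c s hb hc hbc hs
  have h3 := sin_bc_pos b c s hb hc hbc hs
  show InnerProductGeometry.angle (AA -ᵥ BB b c s) (CC b c s -ᵥ BB b c s) = b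
  simp only [vsub_eq_sub]
  have key : sin c + sin b * cos (b+c) = sin (b+c) * cos b := by
    have := sin_sub (b+c) b
    rw [show b + c - b = c by ring] at this
    linarith
  have hmEq : ‖AA - BB b c s‖ = s * sin c := by
    rw [← dist_eq_norm]; exact dist_AB b c s hb hc hbc hs
  have hnEq : ‖CC b c s - BB b c s‖ = s * sin (b+c) := by
    rw [← dist_eq_norm, dist_comm]; exact dist_BC b c s hb hc hbc hs
  refine angle_eq_of hmEq hnEq (by positivity) (by positivity) (by linarith) (by linarith) ?_
  rw [AA, BB, CC]; simp only [sub_P]; rw [inner_P]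
  linear_combination (s^2 * sin c) * key

lemma angle_C : ∠ (BB b c s) (CC b c s) AA = c := by
  have h1 := sin_b_pos b c s hb hc hbc hs
  have h2 := sin_c_pos b c s hb hc hbc hs
  have h3 := sin_bc_pos b c s hb hc hbc hs
  show InnerProductGeometry.angle (BB b c s -ᵥ CC b c s) (AA -ᵥ CC b c s) = c
  simp only [vsub_eq_sub]
  have key : sin b + sin c * cos (b+c) = sin (b+c) * cos c := by
    have := sin_sub (b+c) c
    rw [show b + c - c = b by ring] at this
    linarith
  have hmEq : ‖BB b c s - CC b c s‖ = s * sin (b+c) := by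
    rw [← dist_eq_norm]; exact dist_BC b c s hb hc hbc hs
  have hnEq : ‖AA - CC b c s‖ = s * sin b := by
    rw [← dist_eq_norm, dist_comm]; exact dist_CA b c s hb hc hbc hs
  refine angle_eq_of hmEq hnEq (by positivity) (by positivity) (by linarith) (by linarith) ?_
  rw [AA, BB, CC]; simp only [sub_P]; rw [inner_P]
  linear_combination (s^2 * sin b) * key + (s^2 * (sin b)^2) * sin_sq_add_cos_sq (b+c)

lemma noncol_s9 : ¬ Collinear ℝ ({AA, BB b c s, CC b c s} : Set (EuclideanSpace ℝ (Fin 2))) := by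
  have h1 := sin_b_pos b c s hb hc hbc hs
  have h2 := sin_c_pos b c s hb hc hbc hs
  have h3 := sin_bc_pos b c s hb hc hbc hs
  intro hcol
  rw [collinear_iff_of_mem (show AA ∈ ({AA, BB b c s, CC b c s} : Set _) by simp)] at hcol
  obtain ⟨v, hv⟩ := hcol
  obtain ⟨rB, hrB⟩ := hv (BB b c s) (by simp)
  obtain ⟨rC, hrC⟩ := hv (CC b c s) (by simp)
  have eB1 : s * sin c = rB * v 0 := by
    have := congrArg (fun w => w 0) hrB
    simpa [BB, AA, vadd_eq_add] using this
  have eB2 : (0:ℝ) = rB * v 1 := by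
    have := congrArg (fun w => w 1) hrB
    simpa [BB, AA, vadd_eq_add] using this
  have eC2 : s * sin b * sin (b+c) = rC * v 1 := by
    have := congrArg (fun w => w 1) hrC
    simpa [CC, AA, vadd_eq_add] using this
  have hrB0 : rB ≠ 0 := by
    intro h; rw [h, zero_mul] at eB1; nlinarith [mul_pos hs h2]
  have hv1 : v 1 = 0 := by
    rcases mul_eq_zero.mp eB2.symm with h | h
    · exact absurd h hrB0
    · exact h
  rw [hv1, mul_zero] at eC2
  nlinarith [mul_pos (mul_pos hs h1) h3]

end Triangle


noncomputable def gg (b c : ℝ) : ℝ := sin b * sin (b/2 + c) / (sin (b+c) * cos ((b-c)/2))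
noncomputable def hh (b c : ℝ) : ℝ := sin b * sin (b/2 + c) / (sin c * sin (b + c/2))

lemma num_pos {b c : ℝ} (hb : 0 < b) (hbc : b + c < π) (hc : 0 ≤ c) :
    0 < sin b * sin (b/2 + c) := by
  have h1 : 0 < sin b := sin_pos_of_pos_of_lt_pi hb (by linarith)
  have h2 : 0 < sin (b/2 + c) := sin_pos_of_pos_of_lt_pi (by linarith) (by linarith)
  positivity

lemma den_g_pos {b c : ℝ} (hb : 0 < b) (hc : b ≤ c) (hbc : b + c < π) :
    0 < sin (b+c) * cos ((b-c)/2) := by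
  have pi_pos := Real.pi_pos
  have h1 : 0 < sin (b+c) := sin_pos_of_pos_of_lt_pi (by linarith) hbc
  have h2 : 0 < cos ((b-c)/2) := Real.cos_pos_of_mem_Ioo ⟨by linarith, by linarith⟩
  positivity

lemma den_h_pos {b c : ℝ} (hb : 0 < b) (hc : 0 < c) (hcp : c < π) (hbc2 : b + c/2 < π) :
    0 < sin c * sin (b + c/2) := by
  have h1 : 0 < sin c := sin_pos_of_pos_of_lt_pi hc hcp
  have h2 : 0 < sin (b + c/2) := sin_pos_of_pos_of_lt_pi (by linarith) hbc2
  positivity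

lemma gg_pos {b c : ℝ} (hb : 0 < b) (hc : b ≤ c) (hbc : b + c < π) : 0 < gg b c :=
  div_pos (num_pos hb hbc (by linarith)) (den_g_pos hb hc hbc)

/-- key product comparison -/
lemma sin_prod_lt {u v w : ℝ} (hu : 0 < u) (huπ : u < π) (hvw : v < w) (hwv : w - v < π)
    (h1 : 0 < sin (u + v)) :
    sin (u + w) * sin (u + (u + v)) - sin (u + v) * sin (u + (u + w))
      = sin (w - v) * sin u := by
  simp only [sin_add, cos_add, sin_sub, cos_sub]
  linear_combination (sin u * (sin w * cos v - cos w * sin v)) * sin_sq_add_cos_sq u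

lemma gg_mono {b c₁ c₂ : ℝ} (hb : 0 < b) (hc1 : b ≤ c₁) (hlt : c₁ < c₂) (hc2 : c₂ < π - b) :
    gg b c₁ < gg b c₂ := by
  have pi_pos := Real.pi_pos
  have hbπ : b < π := by linarith
  have hbc1 : b + c₁ < π := by linarith
  have hbc2 : b + c₂ < π := by linarith
  have hN1 := num_pos hb hbc1 (by linarith)
  have hN2 := num_pos hb hbc2 (by linarith)
  have hD1 := den_g_pos hb hc1 hbc1
  have hD2 := den_g_pos hb (by linarith) hbc2
  rw [gg, gg, div_lt_div_iff₀ hD1 hD2]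
  -- factor facts
  have hsinb : 0 < sin b := sin_pos_of_pos_of_lt_pi hb hbπ
  have hs1 : 0 < sin (b/2 + c₁) := sin_pos_of_pos_of_lt_pi (by linarith) (by linarith)
  have hs2 : 0 < sin (b/2 + c₂) := sin_pos_of_pos_of_lt_pi (by linarith) (by linarith)
  have ha1 : 0 < sin (b + c₁) := sin_pos_of_pos_of_lt_pi (by linarith) hbc1
  have ha2 : 0 < sin (b + c₂) := sin_pos_of_pos_of_lt_pi (by linarith) hbc2
  have hk1 : 0 < cos ((b - c₁)/2) := Real.cos_pos_of_mem_Ioo ⟨by linarith, by linarith⟩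
  have hk2 : 0 < cos ((b - c₂)/2) := Real.cos_pos_of_mem_Ioo ⟨by linarith, by linarith⟩
  -- (i) sin(b/2+c₁) * sin(b+c₂) < sin(b/2+c₂) * sin(b+c₁)
  have key : sin (b/2 + c₂) * sin (b + c₁) - sin (b/2 + c₁) * sin (b + c₂)
      = sin (c₂ - c₁) * sin (b/2) := by
    have h := sin_prod_lt (u := b/2) (v := c₁) (w := c₂) (by linarith) (by linarith) hlt
      (by linarith) (by rw [show b/2 + c₁ = b/2 + c₁ by ring]; exact sin_pos_of_pos_of_lt_pi (by linarith) (by linarith))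
    calc sin (b/2 + c₂) * sin (b + c₁) - sin (b/2 + c₁) * sin (b + c₂)
        = sin (b/2 + c₂) * sin (b/2 + (b/2 + c₁)) - sin (b/2 + c₁) * sin (b/2 + (b/2 + c₂)) := by
          rw [show b/2 + (b/2 + c₁) = b + c₁ by ring, show b/2 + (b/2 + c₂) = b + c₂ by ring]
      _ = sin (c₂ - c₁) * sin (b/2) := h
  have hi : sin (b/2 + c₁) * sin (b + c₂) < sin (b/2 + c₂) * sin (b + c₁) := by
    have hδ : 0 < sin (c₂ - c₁) := sin_pos_of_pos_of_lt_pi (by linarith) (by linarith)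
    have hbh : 0 < sin (b/2) := sin_pos_of_pos_of_lt_pi (by linarith) (by linarith)
    nlinarith
  -- (ii) cos ((b-c₂)/2) < cos ((b-c₁)/2)
  have hii : cos ((b - c₂)/2) < cos ((b - c₁)/2) := by
    rw [show (b - c₂)/2 = -((c₂ - b)/2) by ring, show (b - c₁)/2 = -((c₁ - b)/2) by ring,
      cos_neg, cos_neg]
    exact Real.strictAntiOn_cos ⟨by linarith, by linarith⟩ ⟨by linarith, by linarith⟩
      (by linarith)
  calc sin b * sin (b/2 + c₁) * (sin (b + c₂) * cos ((b - c₂)/2))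
      = (sin (b/2 + c₁) * sin (b + c₂)) * (sin b * cos ((b - c₂)/2)) := by ring
    _ < (sin (b/2 + c₂) * sin (b + c₁)) * (sin b * cos ((b - c₂)/2)) := by
        apply mul_lt_mul_of_pos_right hi (by positivity)
    _ ≤ (sin (b/2 + c₂) * sin (b + c₁)) * (sin b * cos ((b - c₁)/2)) := by
        apply mul_le_mul_of_nonneg_left _ (by positivity)
        apply mul_le_mul_of_nonneg_left hii.le (by positivity)
    _ = sin b * sin (b/2 + c₂) * (sin (b + c₁) * cos ((b - c₁)/2)) := by ring

lemma gg_one {b : ℝ} (hb : 0 < b) (hb2 : b < 2*π/3) : gg b (π - 2*b) = 1 := by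
  have pi_pos := Real.pi_pos
  have h1 : 0 < sin b := sin_pos_of_pos_of_lt_pi hb (by linarith)
  have h2 : 0 < sin (3*b/2) := sin_pos_of_pos_of_lt_pi (by linarith) (by linarith)
  rw [gg, show b/2 + (π - 2*b) = π - 3*b/2 by ring, show b + (π - 2*b) = π - b by ring,
    show (b - (π - 2*b))/2 = -(π/2 - 3*b/2) by ring, cos_neg, sin_pi_sub, sin_pi_sub,
    cos_pi_div_two_sub]
  rw [div_self (by positivity)]

lemma cos_ge_half {x : ℝ} (hx : |x| ≤ π/3) : 1/2 ≤ cos x := by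
  have pi_pos := Real.pi_pos
  calc (1:ℝ)/2 = cos (π/3) := Real.cos_pi_div_three.symm
    _ ≤ cos |x| := Real.strictAntiOn_cos.antitoneOn ⟨abs_nonneg x, by linarith⟩
        ⟨by linarith, by linarith⟩ hx
    _ = cos x := Real.cos_abs x

lemma gg_cont_b {c : ℝ} {b₀ : ℝ} (h1 : sin (b₀ + c) ≠ 0) (h2 : cos ((b₀ - c)/2) ≠ 0) :
    ContinuousAt (fun b => gg b c) b₀ := by
  apply ContinuousAt.div (by fun_prop) (by fun_prop)
  positivity

lemma hh_cont2 {b₀ c₀ : ℝ} (h1 : sin c₀ ≠ 0) (h2 : sin (b₀ + c₀/2) ≠ 0) :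
    ContinuousAt (fun x : ℝ × ℝ => hh x.1 x.2) (b₀, c₀) := by
  apply ContinuousAt.div (by fun_prop) (by fun_prop)
  positivity

lemma gg_diag_le {b : ℝ} (hb : 0 < b) (hb6 : b ≤ π/3) : gg b b ≤ 3*b/2 := by
  have pi_pos := Real.pi_pos
  have h1 : 0 < sin b := sin_pos_of_pos_of_lt_pi hb (by linarith)
  have hcb : 1/2 ≤ cos b := cos_ge_half (by rw [abs_of_pos hb]; linarith)
  have h3 : 0 ≤ sin (b/2 + b) := sin_nonneg_of_nonneg_of_le_pi (by linarith) (by linarith)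
  rw [gg, show (b - b)/2 = 0 by ring, cos_zero, mul_one, show b + b = 2*b by ring,
    sin_two_mul]
  rw [div_le_iff₀ (by positivity)]
  have hs32 : sin (b/2 + b) ≤ 3*b/2 := by
    calc sin (b/2 + b) ≤ b/2 + b := Real.sin_le (by linarith)
    _ = 3*b/2 := by ring
  have e1 : sin b * sin (b/2 + b) ≤ sin b * (3*b/2) :=
    mul_le_mul_of_nonneg_left hs32 h1.le
  nlinarith [mul_nonneg h1.le (by positivity : (0:ℝ) ≤ 3*b/2)]

lemma gg_half_pi_le {b : ℝ} (hb : 0 < b) (hb6 : b ≤ π/6) : gg b (π/2) ≤ 4*b := by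
  have pi_pos := Real.pi_pos
  have h1 : 0 < sin b := sin_pos_of_pos_of_lt_pi hb (by linarith)
  have hsb : sin b ≤ b := Real.sin_le hb.le
  have hcb : 1/2 ≤ cos b := cos_ge_half (by rw [abs_of_pos hb]; linarith)
  have hcq : 1/2 ≤ cos ((b - π/2)/2) := by
    apply cos_ge_half
    rw [abs_le]
    constructor <;> nlinarith
  have hnum : sin b * sin (b/2 + π/2) ≤ sin b := by
    nlinarith [Real.sin_le_one (b/2 + π/2), h1.le]
  have hbpi2 : sin (b + π/2) = cos b := by
    rw [sin_add, cos_pi_div_two, sin_pi_div_two]; ring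
  rw [gg, hbpi2]
  rw [div_le_iff₀ (by positivity)]
  have e0 : 1/4 ≤ cos b * cos ((b - π/2)/2) := by nlinarith
  nlinarith [sin_nonneg_of_nonneg_of_le_pi (x := b/2 + π/2) (by linarith) (by linarith)]

def Root (p b x : ℝ) : Prop := (b ≤ x ∧ x ≤ π - 2*b) ∧ gg b x = p

lemma gg_contOn {b : ℝ} (hb : 0 < b) : ContinuousOn (fun x => gg b x) (Set.Icc b (π - 2*b)) := by
  apply ContinuousOn.div (Continuous.continuousOn (by fun_prop))
    (Continuous.continuousOn (by fun_prop))
  intro x hx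
  exact (den_g_pos hb hx.1 (by have := hx.2; linarith)).ne'

lemma root_exists {p b : ℝ} (hb : 0 < b) (hb3 : b ≤ π/3) (hp1 : p < 1) (hgb : gg b b ≤ p) :
    ∃ x, Root p b x := by
  have pi_pos := Real.pi_pos
  have hlt : b < π/3 := by
    rcases hb3.lt_or_eq with h | h
    · exact h
    · exfalso
      have h1 := gg_one (b := π/3) (by linarith) (by linarith)
      rw [show π - 2*(π/3) = π/3 by ring] at h1
      rw [h] at hgb
      linarith
  have hub : gg b (π - 2*b) = 1 := gg_one hb (by linarith)
  have hsub := intermediate_value_Icc (by linarith : b ≤ π - 2*b) (gg_contOn hb)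
  have hmem : p ∈ Set.Icc (gg b b) (gg b (π - 2*b)) := by
    rw [hub]; exact ⟨hgb, hp1.le⟩
  obtain ⟨x, hx, hgx⟩ := hsub hmem
  exact ⟨x, ⟨hx.1, hx.2⟩, hgx⟩

lemma root_unique {p b x y : ℝ} (hb : 0 < b) (hx : Root p b x) (hy : Root p b y) : x = y := by
  rcases lt_trichotomy x y with h | h | h
  · exfalso
    have := gg_mono hb hx.1.1 h (by have := hy.1.2; linarith)
    rw [hx.2, hy.2] at this; exact lt_irrefl _ this
  · exact h
  · exfalso
    have := gg_mono hb hy.1.1 h (by have := hx.1.2; linarith)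
    rw [hx.2, hy.2] at this; exact lt_irrefl _ this

open Classical in
noncomputable def Gam (p b : ℝ) : ℝ := if hE : ∃ x, Root p b x then hE.choose else 0

lemma Gam_root {p b : ℝ} (hb : 0 < b) (hb3 : b ≤ π/3) (hp1 : p < 1) (hgb : gg b b ≤ p) :
    Root p b (Gam p b) := by
  have hE := root_exists hb hb3 hp1 hgb
  rw [Gam]
  rw [dif_pos hE]
  exact hE.choose_spec

lemma sqrt_two_div_two_ge : (1:ℝ)/2 ≤ sin (π/4) := by
  rw [Real.sin_pi_div_four]
  nlinarith [Real.sq_sqrt (by norm_num : (0:ℝ) ≤ 2), Real.sqrt_nonneg 2]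

lemma hh_le {b c : ℝ} (hb : 0 < b) (hb8 : b ≤ π/8) (hc : π/2 ≤ c) (hc2 : c ≤ π - 2*b) :
    hh b c ≤ 2*b := by
  have pi_pos := Real.pi_pos
  have hsb : 0 < sin b := sin_pos_of_pos_of_lt_pi hb (by linarith)
  have hsc : 0 < sin c := sin_pos_of_pos_of_lt_pi (by linarith) (by linarith)
  have hs2 : sin (π/4) ≤ sin (b + c/2) := by
    apply Real.strictMonoOn_sin.monotoneOn ⟨by linarith, by linarith⟩
      ⟨by linarith, by linarith⟩ (by linarith)
  have hs2' : 1/2 ≤ sin (b + c/2) := le_trans sqrt_two_div_two_ge hs2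
  have hs3 : sin (b/2 + c) ≤ sin c := by
    have ea : sin (b/2 + c) = sin (π - (b/2 + c)) := (sin_pi_sub _).symm
    have eb : sin c = sin (π - c) := (sin_pi_sub _).symm
    rw [ea, eb]
    apply Real.strictMonoOn_sin.monotoneOn ⟨by linarith, by linarith⟩
      ⟨by linarith, by linarith⟩ (by linarith)
  rw [hh, div_le_iff₀ (by positivity)]
  have hsbb : sin b ≤ b := Real.sin_le hb.le
  nlinarith [mul_le_mul_of_nonneg_left hs3 hsb.le,
    mul_nonneg (mul_nonneg (by linarith : (0:ℝ) ≤ 2*b) hsc.le)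
      (by linarith : (0:ℝ) ≤ sin (b + c/2) - 1/2),
    mul_nonneg (by linarith : (0:ℝ) ≤ b - sin b) hsc.le]

lemma hh_eq_gg_sym {b : ℝ} : hh b ((π - b)/2) = gg b ((π - b)/2) := by
  have e1 : sin ((π - b)/2) = cos (b/2) := by
    rw [show (π - b)/2 = π/2 - b/2 by ring, sin_pi_div_two_sub]
  have e2 : sin (b + (π - b)/2) = cos (b/2) := by
    rw [show b + (π - b)/2 = π/2 + b/2 by ring, sin_add, cos_pi_div_two, sin_pi_div_two]
    ring
  have e3 : cos ((b - (π - b)/2)/2) = sin (b + (π - b)/2/2) := by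
    rw [show (b - (π - b)/2)/2 = -(π/2 - (b + (π - b)/2/2)) by ring, cos_neg,
      cos_pi_div_two_sub]
  rw [hh, gg, e1, e2, e3]

lemma Gam_contOn {p β₀ β₁ : ℝ} (hp1 : p < 1)
    (hdom : ∀ b ∈ Set.Icc β₀ β₁, 0 < b ∧ b ≤ π/3 ∧ gg b b ≤ p) :
    ContinuousOn (Gam p) (Set.Icc β₀ β₁) := by
  have pi_pos := Real.pi_pos
  intro b₀ hb₀
  obtain ⟨hb₀pos, hb₀3, hb₀g⟩ := hdom b₀ hb₀
  obtain ⟨⟨hc₀l, hc₀u⟩, hgc₀⟩ := Gam_root hb₀pos hb₀3 hp1 hb₀g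
  set c₀ := Gam p b₀ with hc₀def
  rw [Metric.continuousWithinAt_iff]
  intro ε hε
  have hU : ∃ δ > 0, ∀ b ∈ Set.Icc β₀ β₁, |b - b₀| < δ → Gam p b < c₀ + ε := by
    by_cases hcase : c₀ + ε ≤ π - 2*b₀
    · -- interior case: use monotonicity and continuity at c₁ = c₀ + ε/2
      have hgt : p < gg b₀ (c₀ + ε/2) := by
        rw [← hgc₀]
        exact gg_mono hb₀pos hc₀l (by linarith) (by linarith)
      have hca : ContinuousAt (fun b => gg b (c₀ + ε/2)) b₀ := by
        apply gg_cont_b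
        · exact (sin_pos_of_pos_of_lt_pi (by linarith) (by linarith)).ne'
        · exact (Real.cos_pos_of_mem_Ioo ⟨by linarith, by linarith⟩).ne'
      have hev : ∀ᶠ b in nhds b₀, p < gg b (c₀ + ε/2) := hca.eventually (eventually_gt_nhds hgt)
      obtain ⟨δ₂, hδ₂pos, hδ₂⟩ := Metric.eventually_nhds_iff.mp hev
      refine ⟨min δ₂ (min (ε/2) (b₀/2)), by positivity, ?_⟩
      intro b hbmem hbd
      obtain ⟨hbpos, hb3, hbg⟩ := hdom b hbmem
      obtain ⟨⟨hcl, hcu⟩, hgc⟩ := Gam_root hbpos hb3 hp1 hbg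
      by_contra hcon
      push_neg at hcon
      have hbd2 : |b - b₀| < δ₂ := lt_of_lt_of_le hbd (min_le_left _ _)
      have hbdε : |b - b₀| < ε/2 := lt_of_lt_of_le hbd (le_trans (min_le_right _ _) (min_le_left _ _))
      have hbl : b < b₀ + ε/2 := by
        have := abs_lt.mp hbdε; linarith [this.1, this.2]
      have hmono : gg b (c₀ + ε/2) < gg b (Gam p b) := by
        apply gg_mono hbpos (by linarith) (by linarith)
        linarith
      have hp2 := hδ₂ (by rw [Real.dist_eq]; exact hbd2)
      rw [hgc] at hmono
      linarith
    · -- boundary case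
      push_neg at hcase
      refine ⟨(c₀ + ε - (π - 2*b₀))/4, by linarith, ?_⟩
      intro b hbmem hbd
      obtain ⟨hbpos, hb3, hbg⟩ := hdom b hbmem
      obtain ⟨⟨hcl, hcu⟩, hgc⟩ := Gam_root hbpos hb3 hp1 hbg
      have := abs_lt.mp hbd
      linarith [this.1, this.2]
  have hL : ∃ δ > 0, ∀ b ∈ Set.Icc β₀ β₁, |b - b₀| < δ → c₀ - ε < Gam p b := by
    by_cases hcase : c₀ - ε < b₀
    · refine ⟨(b₀ - (c₀ - ε))/2, by linarith, ?_⟩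
      intro b hbmem hbd
      obtain ⟨hbpos, hb3, hbg⟩ := hdom b hbmem
      obtain ⟨⟨hcl, hcu⟩, hgc⟩ := Gam_root hbpos hb3 hp1 hbg
      have := abs_lt.mp hbd
      linarith [this.1, this.2]
    · push_neg at hcase
      have hlt : gg b₀ (c₀ - ε/2) < p := by
        rw [← hgc₀]
        exact gg_mono hb₀pos (by linarith) (by linarith) (by linarith)
      have hca : ContinuousAt (fun b => gg b (c₀ - ε/2)) b₀ := by
        apply gg_cont_b
        · exact (sin_pos_of_pos_of_lt_pi (by linarith) (by linarith)).ne'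
        · exact (Real.cos_pos_of_mem_Ioo ⟨by linarith, by linarith⟩).ne'
      have hev : ∀ᶠ b in nhds b₀, gg b (c₀ - ε/2) < p := hca.eventually (eventually_lt_nhds hlt)
      obtain ⟨δ₃, hδ₃pos, hδ₃⟩ := Metric.eventually_nhds_iff.mp hev
      refine ⟨min δ₃ (b₀/2), by positivity, ?_⟩
      intro b hbmem hbd
      obtain ⟨hbpos, hb3, hbg⟩ := hdom b hbmem
      obtain ⟨⟨hcl, hcu⟩, hgc⟩ := Gam_root hbpos hb3 hp1 hbg
      by_contra hcon
      push_neg at hcon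
      have hbd3 : |b - b₀| < δ₃ := lt_of_lt_of_le hbd (min_le_left _ _)
      have hbd4 : |b - b₀| < b₀/2 := lt_of_lt_of_le hbd (min_le_right _ _)
      have hblow : b₀/2 < b := by
        have := abs_lt.mp hbd4; linarith [this.1, this.2]
      have hbhigh : b < b₀ + b₀/2 := by
        have := abs_lt.mp hbd4; linarith [this.2]
      have hmono : gg b (Gam p b) < gg b (c₀ - ε/2) := by
        apply gg_mono hbpos hcl
        · linarith
        · linarith
      have hp3 := hδ₃ (by rw [Real.dist_eq]; exact hbd3)
      rw [hgc] at hmono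
      linarith
  obtain ⟨δu, hδu, hUu⟩ := hU
  obtain ⟨δl, hδl, hLl⟩ := hL
  refine ⟨min δu δl, by positivity, ?_⟩
  intro b hbmem hbd
  rw [Real.dist_eq] at hbd ⊢
  rw [abs_sub_lt_iff]
  constructor
  · have := hUu b hbmem (lt_of_lt_of_le hbd (min_le_left _ _))
    linarith
  · have := hLl b hbmem (lt_of_lt_of_le hbd (min_le_right _ _))
    linarith

theorem analysis_main {p q : ℝ} (hq : 0 < q) (hqp : q < p) (hp1 : p < 1) :
    ∃ b c : ℝ, 0 < b ∧ 2*b + c < π ∧ π < b + 2*c ∧ gg b c = p ∧ hh b c = q := by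
  have pi_pos := Real.pi_pos
  have hp0 : 0 < p := lt_trans hq hqp
  set β₀ := min (π/8) (min (p/8) (q/4)) with hβ₀def
  have hβ₀pos : 0 < β₀ := by positivity
  have hβ₀pi : β₀ ≤ π/8 := min_le_left _ _
  have hβ₀p : β₀ ≤ p/8 := le_trans (min_le_right _ _) (min_le_left _ _)
  have hβ₀q : β₀ ≤ q/4 := le_trans (min_le_right _ _) (min_le_right _ _)
  have hβ₀3 : β₀ ≤ π/3 := by linarith
  have hG1β₀ : gg β₀ β₀ < p := by
    have := gg_diag_le hβ₀pos hβ₀3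
    linarith
  -- continuity of the diagonal function
  have contG1 : ContinuousOn (fun b => gg b b) (Set.Icc β₀ (π/3)) := by
    apply ContinuousOn.div (Continuous.continuousOn (by fun_prop))
      (Continuous.continuousOn (by fun_prop))
    intro x hx
    have h1 : 0 < sin (x+x) := sin_pos_of_pos_of_lt_pi (by nlinarith [hx.1, hβ₀pos])
      (by nlinarith [hx.2])
    have h2 : cos ((x-x)/2) = 1 := by rw [show (x-x)/2 = 0 by ring, cos_zero]
    rw [h2]
    positivity
  have hg13 : gg (π/3) (π/3) = 1 := by
    have h1 := gg_one (b := π/3) (by linarith) (by linarith)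
    rwa [show π - 2*(π/3) = π/3 by ring] at h1
  set T := Set.Icc β₀ (π/3) ∩ (fun b => gg b b) ⁻¹' (Set.Ici p) with hTdef
  have hTclosed : IsClosed T := contG1.preimage_isClosed_of_isClosed isClosed_Icc isClosed_Ici
  have hTne : T.Nonempty := ⟨π/3, ⟨hβ₀3, le_refl _⟩, by simp [hg13, hp1.le]⟩
  have hTbdd : BddBelow T := (bddBelow_Icc (b := β₀) (a := π/3)).mono Set.inter_subset_left
  set β₁ := sInf T with hβ₁def
  have hβ₁T : β₁ ∈ T := hTclosed.csInf_mem hTne hTbdd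
  obtain ⟨⟨hβ₁l, hβ₁r⟩, hβ₁g⟩ := hβ₁T
  simp only [Set.mem_preimage, Set.mem_Ici] at hβ₁g
  have hβ₀₁ : β₀ < β₁ := by
    rcases hβ₁l.lt_or_eq with h | h
    · exact h
    · exfalso; rw [← h] at hβ₁g; linarith
  have hlow : ∀ b, β₀ ≤ b → b < β₁ → gg b b < p := by
    intro b hbl hbr
    by_contra hcon
    push_neg at hcon
    have : b ∈ T := ⟨⟨hbl, by linarith⟩, hcon⟩
    have := csInf_le hTbdd this
    linarith
  have hGβ₁ : gg β₁ β₁ = p := by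
    refine le_antisymm ?_ hβ₁g
    have hcw : ContinuousWithinAt (fun b => gg b b) (Set.Ico β₀ β₁) β₁ := by
      apply (contG1 β₁ ⟨hβ₁l, hβ₁r⟩).mono
      intro x hx
      exact ⟨hx.1, le_trans hx.2.le hβ₁r⟩
    have hne2 : (nhdsWithin β₁ (Set.Ico β₀ β₁)).NeBot := by
      apply mem_closure_iff_nhdsWithin_neBot.mp
      rw [closure_Ico hβ₀₁.ne]
      exact ⟨hβ₀₁.le, le_refl _⟩
    exact le_of_tendsto hcw (eventually_nhdsWithin_of_forall
      (fun x hx => (hlow x hx.1 hx.2).le))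
  have hβ₁lt3 : β₁ < π/3 := by
    rcases hβ₁r.lt_or_eq with h | h
    · exact h
    · exfalso; rw [h, hg13] at hGβ₁; linarith
  have hdom : ∀ b ∈ Set.Icc β₀ β₁, 0 < b ∧ b ≤ π/3 ∧ gg b b ≤ p := by
    intro b hb
    refine ⟨by linarith [hb.1], by linarith [hb.2], ?_⟩
    rcases hb.2.lt_or_eq with h | h
    · exact (hlow b hb.1 h).le
    · rw [h, hGβ₁]
  have hΓcont : ContinuousOn (Gam p) (Set.Icc β₀ β₁) := Gam_contOn hp1 hdom
  obtain ⟨⟨h0l, h0u⟩, h0g⟩ := Gam_root hβ₀pos hβ₀3 hp1 hG1β₀.le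
  have hΓβ₀big : π/2 ≤ Gam p β₀ := by
    by_contra hcon
    push_neg at hcon
    have hmono : gg β₀ (Gam p β₀) < gg β₀ (π/2) :=
      gg_mono hβ₀pos h0l hcon (by linarith)
    have hb4 := gg_half_pi_le hβ₀pos (by linarith)
    rw [h0g] at hmono
    linarith
  have hHβ₀ : hh β₀ (Gam p β₀) < q := by
    have := hh_le hβ₀pos hβ₀pi hΓβ₀big h0u
    linarith
  have hψβ₀ : 0 < Gam p β₀ - (π - β₀)/2 := by linarith
  have hΓβ₁ : Gam p β₁ = β₁ := by
    have hr1 : Root p β₁ (Gam p β₁) := Gam_root (by linarith) (by linarith) hp1 hGβ₁.le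
    have hr2 : Root p β₁ β₁ := ⟨⟨le_refl _, by linarith⟩, hGβ₁⟩
    exact root_unique (by linarith) hr1 hr2
  have hψβ₁ : Gam p β₁ - (π - β₁)/2 < 0 := by
    rw [hΓβ₁]; linarith
  have hψcont : ContinuousOn (fun b => Gam p b - (π - b)/2) (Set.Icc β₀ β₁) :=
    hΓcont.sub (Continuous.continuousOn (by fun_prop))
  set T2 := Set.Icc β₀ β₁ ∩ (fun b => Gam p b - (π - b)/2) ⁻¹' (Set.Iic 0) with hT2def
  have hT2closed : IsClosed T2 := hψcont.preimage_isClosed_of_isClosed isClosed_Icc isClosed_Iic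
  have hT2ne : T2.Nonempty := ⟨β₁, ⟨hβ₀₁.le, le_refl _⟩, by simp; linarith⟩
  have hT2bdd : BddBelow T2 := (bddBelow_Icc (b := β₀) (a := β₁)).mono Set.inter_subset_left
  set β₂ := sInf T2 with hβ₂def
  have hβ₂T : β₂ ∈ T2 := hT2closed.csInf_mem hT2ne hT2bdd
  obtain ⟨⟨hβ₂l, hβ₂r⟩, hβ₂ψ⟩ := hβ₂T
  simp only [Set.mem_preimage, Set.mem_Iic] at hβ₂ψ
  have hβ₀₂ : β₀ < β₂ := by
    rcases hβ₂l.lt_or_eq with h | h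
    · exact h
    · exfalso; rw [← h] at hβ₂ψ; linarith
  have hmid : ∀ b, β₀ ≤ b → b < β₂ → 0 < Gam p b - (π - b)/2 := by
    intro b hbl hbr
    by_contra hcon
    push_neg at hcon
    have : b ∈ T2 := ⟨⟨hbl, by linarith⟩, hcon⟩
    have := csInf_le hT2bdd this
    linarith
  have hψβ₂ : Gam p β₂ - (π - β₂)/2 = 0 := by
    refine le_antisymm hβ₂ψ ?_
    have hcw : ContinuousWithinAt (fun b => Gam p b - (π - b)/2) (Set.Ico β₀ β₂) β₂ := by
      apply (hψcont β₂ ⟨hβ₂l, hβ₂r⟩).mono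
      intro x hx
      exact ⟨hx.1, le_trans hx.2.le hβ₂r⟩
    have hne2 : (nhdsWithin β₂ (Set.Ico β₀ β₂)).NeBot := by
      apply mem_closure_iff_nhdsWithin_neBot.mp
      rw [closure_Ico hβ₀₂.ne]
      exact ⟨hβ₀₂.le, le_refl _⟩
    exact ge_of_tendsto hcw (eventually_nhdsWithin_of_forall
      (fun x hx => (hmid x hx.1 hx.2).le))
  have hΓβ₂ : Gam p β₂ = (π - β₂)/2 := by linarith
  -- the function H
  have hHcont : ContinuousOn (fun b => hh b (Gam p b)) (Set.Icc β₀ β₂) := by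
    intro b hb
    have hbS : b ∈ Set.Icc β₀ β₁ := ⟨hb.1, le_trans hb.2 hβ₂r⟩
    obtain ⟨hbpos, hb3, hbg⟩ := hdom b hbS
    obtain ⟨⟨hcl, hcu⟩, _⟩ := Gam_root hbpos hb3 hp1 hbg
    have h1 : sin (Gam p b) ≠ 0 :=
      (sin_pos_of_pos_of_lt_pi (by linarith) (by linarith)).ne'
    have h2 : sin (b + Gam p b / 2) ≠ 0 :=
      (sin_pos_of_pos_of_lt_pi (by linarith) (by linarith)).ne'
    have hpair : ContinuousWithinAt (fun x => (x, Gam p x)) (Set.Icc β₀ β₂) b := by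
      apply ContinuousWithinAt.prodMk continuousWithinAt_id
      exact ((hΓcont.mono (fun x hx => ⟨hx.1, le_trans hx.2 hβ₂r⟩)) b hb)
    exact ContinuousAt.comp_continuousWithinAt (g := fun x : ℝ × ℝ => hh x.1 x.2)
      (f := fun x => (x, Gam p x)) (hh_cont2 h1 h2) hpair
  have hHβ₂ : hh β₂ (Gam p β₂) = p := by
    rw [hΓβ₂, hh_eq_gg_sym, ← hΓβ₂]
    obtain ⟨hbpos, hb3, hbg⟩ := hdom β₂ ⟨hβ₀₂.le, hβ₂r⟩
    exact (Gam_root hbpos hb3 hp1 hbg).2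
  -- IVT for H
  have hsub := intermediate_value_Icc hβ₀₂.le hHcont
  have hmem : q ∈ Set.Icc (hh β₀ (Gam p β₀)) (hh β₂ (Gam p β₂)) := by
    rw [hHβ₂]; exact ⟨hHβ₀.le, hqp.le⟩
  obtain ⟨β₃, hβ₃mem, hβ₃H0⟩ := hsub hmem
  have hβ₃H : hh β₃ (Gam p β₃) = q := hβ₃H0
  have hβ₃lt : β₃ < β₂ := by
    rcases hβ₃mem.2.lt_or_eq with h | h
    · exact h
    · exfalso; rw [h, hHβ₂] at hβ₃H; linarith
  have hψβ₃ := hmid β₃ hβ₃mem.1 hβ₃lt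
  -- final values
  have hβ₃S : β₃ ∈ Set.Icc β₀ β₁ := ⟨hβ₃mem.1, by linarith [hβ₂r]⟩
  obtain ⟨hb3pos, hb33, hb3g⟩ := hdom β₃ hβ₃S
  obtain ⟨⟨hc3l, hc3u⟩, hc3g⟩ := Gam_root hb3pos hb33 hp1 hb3g
  refine ⟨β₃, Gam p β₃, hb3pos, ?_, by linarith, hc3g, hβ₃H⟩
  rcases hc3u.lt_or_eq with h | h
  · linarith
  · exfalso
    rw [h] at hc3g
    rw [gg_one hb3pos (by linarith)] at hc3g
    linarith


theorem exists_triangle_prescribed_bisectors_with_angle_ordering (l₁ l₂ l₃ : ℝ)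
    (h₃ : 0 < l₃) (h₃₂ : l₃ < l₂) (h₂₁ : l₂ < l₁) :
    ∃ A B C : EuclideanSpace ℝ (Fin 2), ¬ Collinear ℝ ({A, B, C} : Set (EuclideanSpace ℝ (Fin 2))) ∧
      bisectorLength A B C = l₂ ∧ bisectorLength B C A = l₁ ∧ bisectorLength C A B = l₃ ∧
      ∠ A B C < ∠ B A C ∧ ∠ B A C < ∠ B C A := by
  have pi_pos := Real.pi_pos
  have hl₁ : 0 < l₁ := by linarith
  have hq : 0 < l₃ / l₁ := by positivity
  have hqp : l₃ / l₁ < l₂ / l₁ := by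
    gcongr
  have hp1 : l₂ / l₁ < 1 := (div_lt_one hl₁).mpr h₂₁
  obtain ⟨b, c, hb, h2bc, hb2c, hgbc, hhbc⟩ := analysis_main hq hqp hp1
  have hc : 0 < c := by linarith
  have hbc : b + c < π := by linarith
  have hcb : b < c := by linarith
  -- positivity facts
  have hsb : 0 < sin b := sin_pos_of_pos_of_lt_pi hb (by linarith)
  have hsc : 0 < sin c := sin_pos_of_pos_of_lt_pi hc (by linarith)
  have hsa : 0 < sin (b + c) := sin_pos_of_pos_of_lt_pi (by linarith) hbc
  have hs1 : 0 < sin (b/2 + c) := sin_pos_of_pos_of_lt_pi (by linarith) (by linarith)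
  have hs2 : 0 < sin (b + c/2) := sin_pos_of_pos_of_lt_pi (by linarith) (by linarith)
  have hK : 0 < cos ((b - c)/2) := Real.cos_pos_of_mem_Ioo ⟨by linarith, by linarith⟩
  set s := l₁ * sin (b/2 + c) / (sin (b+c) * sin c) with hsdef
  have hs : 0 < s := by positivity
  have keyg : sin b * sin (b/2 + c) * l₁ = l₂ * (sin (b+c) * cos ((b-c)/2)) := by
    have h := hgbc
    rw [gg, div_eq_div_iff (by positivity) hl₁.ne'] at h
    linarith
  have keyh : sin b * sin (b/2 + c) * l₁ = l₃ * (sin c * sin (b + c/2)) := by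
    have h := hhbc
    rw [hh, div_eq_div_iff (by positivity) hl₁.ne'] at h
    linarith
  refine ⟨AA, BB b c s, CC b c s, noncol_s9 b c s hb hc hbc hs, ?_, ?_, ?_, ?_, ?_⟩
  · rw [bis_a b c s hb hc hbc hs, hsdef, div_mul_div_comm, div_eq_iff (by positivity)]
    linear_combination (sin c) * keyg
  · rw [bis_b b c s hb hc hbc hs, hsdef, div_mul_div_comm, div_eq_iff (by positivity)]
    ring
  · rw [bis_c b c s hb hc hbc hs, hsdef, div_mul_div_comm, div_eq_iff (by positivity)]
    linear_combination (sin (b+c)) * keyh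
  · rw [angle_B b c s hb hc hbc hs, angle_A b c s hb hc hbc hs]
    linarith
  · rw [angle_A b c s hb hc hbc hs, angle_C b c s hb hc hbc hs]
    linarith
end
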